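/- arXiv:1712.08311 — 7 statements merged into one kernel-verified Lean document; each statement's English description precedes it below -/
import Mathlib

section
/- Let (W,S) be a Coxeter system with W finite. An element w ∈ W is join-irreducible in the right weak order if and only if w has exactly one descent, i.e., there is exactly one index i ∈ I with ℓ(w s_i) < ℓ(w). -/
/-- The right weak order on a Coxeter group: `u ≤ w` iff `ℓ(w) = ℓ(u) + ℓ(u⁻¹w)`. -/
def CoxeterSystem.weakLE {B W : Type*} [Group W] {M : CoxeterMatrix B}
    (cs : CoxeterSystem M W) (u w : W) : Prop :=
  cs.length w = cs.length u + cs.length (u⁻¹ * w)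

/-- `w` is a least upper bound of `S` in the right weak order. -/
def CoxeterSystem.IsWeakLUB {B W : Type*} [Group W] {M : CoxeterMatrix B}
    (cs : CoxeterSystem M W) (S : Set W) (w : W) : Prop :=
  (∀ x ∈ S, cs.weakLE x w) ∧ ∀ z : W, (∀ x ∈ S, cs.weakLE x z) → cs.weakLE w z

/-- `w` is join-irreducible in the right weak order: `w ≠ 1` and whenever `w` is a least
upper bound of a pair `{u, v}`, one has `u = w` or `v = w`. -/
def CoxeterSystem.IsJoinIrreducible {B W : Type*} [Group W] {M : CoxeterMatrix B}
    (cs : CoxeterSystem M W) (w : W) : Prop :=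
  w ≠ 1 ∧ ∀ u v : W, cs.IsWeakLUB {u, v} w → u = w ∨ v = w

noncomputable section
open List Function
open scoped Classical

namespace CoxGeom

variable {B : Type*} (M : CoxeterMatrix B)

/-- Cosine matrix of a Coxeter matrix. -/
def cmat (k l : B) : ℝ := if M k l = 0 then -1 else -Real.cos (Real.pi / (M k l : ℕ))

lemma cmat_diag (k : B) : cmat M k k = 1 := by
  unfold cmat
  rw [if_neg (by rw [M.diagonal k]; norm_num), M.diagonal k]
  norm_num

lemma cmat_symm (k l : B) : cmat M k l = cmat M l k := by
  unfold cmat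
  rw [M.symmetric k l]

/-- Linear functional `⟨α_k, -⟩`. -/
def gform (k : B) : (B →₀ ℝ) →ₗ[ℝ] ℝ := Finsupp.linearCombination ℝ (cmat M k)

lemma gform_single (k l : B) : gform M k (Finsupp.single l 1) = cmat M k l := by
  unfold gform
  rw [Finsupp.linearCombination_single, one_smul]

/-- The geometric reflection associated to `k`. -/
def grefl (k : B) : Module.End ℝ (B →₀ ℝ) :=
  LinearMap.id - (2:ℝ) • (gform M k).smulRight (Finsupp.single k 1)

lemma grefl_apply (k : B) (v : B →₀ ℝ) :
    grefl M k v = v - (2 * gform M k v) • Finsupp.single k 1 := by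
  unfold grefl
  rw [LinearMap.sub_apply, LinearMap.smul_apply, LinearMap.smulRight_apply, LinearMap.id_apply,
    smul_smul]

lemma grefl_fixed {k : B} {v : B →₀ ℝ} (h : gform M k v = 0) : grefl M k v = v := by
  rw [grefl_apply, h]
  simp

lemma grefl_mul_self (k : B) : grefl M k * grefl M k = 1 := by
  apply LinearMap.ext
  intro v
  rw [Module.End.mul_apply]
  have h1 : gform M k (grefl M k v) = -(gform M k v) := by
    rw [grefl_apply, map_sub, map_smul, gform_single, cmat_diag, smul_eq_mul]
    ring
  rw [grefl_apply, h1, grefl_apply]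
  have h2 : (2 * -gform M k v) = -(2 * gform M k v) := by ring
  rw [h2, neg_smul, sub_neg_eq_add, sub_add_cancel, Module.End.one_apply]

section Dihedral

variable {k l : B} {m : ℕ}

local notation "θ" => Real.pi / (m:ℝ)
local notation "c" => Real.cos (Real.pi / (m:ℝ))
local notation "αk" => Finsupp.single k (1:ℝ)
local notation "αl" => Finsupp.single l (1:ℝ)

variable (hkl : k ≠ l) (hm : M k l = m) (hm2 : 2 ≤ m)

section Facts
include hm2

lemma theta_pos : 0 < θ := by
  apply div_pos Real.pi_pos
  exact_mod_cast Nat.lt_of_lt_of_le (by norm_num) hm2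

lemma theta_lt_pi : θ < Real.pi := by
  apply div_lt_self Real.pi_pos
  exact_mod_cast Nat.lt_of_lt_of_le (by norm_num) hm2

lemma sin_theta_pos : 0 < Real.sin θ :=
  Real.sin_pos_of_pos_of_lt_pi (theta_pos hm2) (theta_lt_pi hm2)

lemma cos_theta_lt_one : c < 1 := by
  have := Real.cos_lt_cos_of_nonneg_of_le_pi (le_refl 0) (le_of_lt (theta_lt_pi hm2))
    (theta_pos hm2)
  rwa [Real.cos_zero] at this

lemma neg_one_lt_cos_theta : -1 < c := by
  have := Real.cos_lt_cos_of_nonneg_of_le_pi (le_of_lt (theta_pos hm2)) (le_refl Real.pi)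
    (theta_lt_pi hm2)
  rwa [Real.cos_pi] at this

include hm

lemma cmat_kl : cmat M k l = -c := by
  unfold cmat
  rw [hm, if_neg (by omega)]

lemma cmat_lk : cmat M l k = -c := by
  rw [← cmat_symm]
  exact cmat_kl M hm hm2

end Facts

section Span

include hkl hm hm2

lemma gform_k_span (x y : ℝ) : gform M k (x • αk + y • αl) = x - c * y := by
  rw [map_add, map_smul, map_smul, gform_single, gform_single, cmat_diag,
    cmat_kl M hm hm2, smul_eq_mul, smul_eq_mul]
  ring

lemma gform_l_span (x y : ℝ) : gform M l (x • αk + y • αl) = -(c * x) + y := by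
  rw [map_add, map_smul, map_smul, gform_single, gform_single, cmat_diag,
    cmat_lk M hm hm2, smul_eq_mul, smul_eq_mul]
  ring

lemma grefl_k_span (x y : ℝ) :
    grefl M k (x • αk + y • αl) = (-x + 2*c*y) • αk + y • αl := by
  rw [grefl_apply, gform_k_span M hkl hm hm2]
  have : (-x + 2*c*y) = x - (2 * (x - c * y)) := by ring
  rw [this, sub_smul, add_sub_right_comm]

lemma grefl_l_span (x y : ℝ) :
    grefl M l (x • αk + y • αl) = x • αk + (2*c*x - y) • αl := by
  rw [grefl_apply, gform_l_span M hkl hm hm2]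
  have : (2*c*x - y) = y - (2 * (-(c * x) + y)) := by ring
  rw [this, sub_smul, add_sub_assoc]

lemma T_span (x y : ℝ) :
    (grefl M k * grefl M l) (x • αk + y • αl)
      = ((4*c^2-1)*x - 2*c*y) • αk + (2*c*x - y) • αl := by
  rw [Module.End.mul_apply, grefl_l_span M hkl hm hm2, grefl_k_span M hkl hm hm2]
  have h : (-x + 2*c*(2*c*x - y)) = ((4*c^2-1)*x - 2*c*y) := by ring
  rw [h]

end Span

private lemma trig1 (φ : ℝ) :
    Real.sin (φ + θ) = 2 * c * Real.sin φ - Real.sin (φ - θ) := by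
  rw [Real.sin_add, Real.sin_sub]
  ring

private lemma trig2 (φ : ℝ) :
    Real.sin (φ + 2*θ) = (4 * c^2 - 1) * Real.sin φ - 2 * c * Real.sin (φ - θ) := by
  have h1 := trig1 (m := m) (φ + θ)
  have h2 := trig1 (m := m) φ
  have h3 : φ + θ + θ = φ + 2*θ := by ring
  have h4 : φ + θ - θ = φ := by ring
  rw [h3, h4] at h1
  rw [h1, h2]
  ring

/-- Integer-indexed sine sequence. -/
private def Sq (m : ℕ) (p : ℤ) : ℝ := Real.sin ((p : ℝ) * (Real.pi / (m:ℝ)))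

private lemma Sq_add_one (p : ℤ) : Sq m (p + 1) = 2 * c * Sq m p - Sq m (p - 1) := by
  unfold Sq
  have h1 : ((p:ℝ) + 1) * θ = (p:ℝ) * θ + θ := by ring
  have h2 : ((p:ℝ) - 1) * θ = (p:ℝ) * θ - θ := by ring
  push_cast
  rw [h1, h2]
  exact trig1 _
private lemma Sq_add_two (p : ℤ) : Sq m (p + 2) = (4 * c^2 - 1) * Sq m p - 2 * c * Sq m (p - 1) := by
  unfold Sq
  have h1 : ((p:ℝ) + 2) * θ = (p:ℝ) * θ + 2*θ := by ring
  have h2 : ((p:ℝ) - 1) * θ = (p:ℝ) * θ - θ := by ring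
  push_cast
  rw [h1, h2]
  exact trig2 _

include hkl hm hm2 in
lemma pow_T_span (n : ℕ) (x y : ℝ) :
    ((grefl M k * grefl M l) ^ n) (x • αk + y • αl)
      = ((Sq m (2*n+1) * x - Sq m (2*n) * y)/Real.sin θ) • αk
        + ((Sq m (2*n) * x - Sq m (2*n-1) * y)/Real.sin θ) • αl := by
  have hs : Real.sin θ ≠ 0 := ne_of_gt (sin_theta_pos hm2)
  induction n generalizing x y with
  | zero =>
    rw [pow_zero, Module.End.one_apply]
    norm_num
    have e1 : Sq m 1 = Real.sin θ := by unfold Sq; norm_num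
    have e2 : Sq m 0 = 0 := by unfold Sq; norm_num
    have e3 : Sq m (-1) = -Real.sin θ := by
      unfold Sq
      have h : ((-1:ℤ):ℝ) * θ = -θ := by push_cast; ring
      rw [h, Real.sin_neg]
    rw [e1, e2, e3]
    congr 1
    · congr 1
      field_simp
      ring
    · congr 1
      field_simp
      ring
  | succ n ih =>
    rw [pow_succ, Module.End.mul_apply, T_span M hkl hm hm2, ih]
    have k1 : (2*(((n:ℕ)+1):ℤ)+1) = 2*(n:ℤ)+3 := by push_cast; ring
    have k2 : (2*(((n:ℕ)+1):ℤ)) = 2*(n:ℤ)+2 := by push_cast; ring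
    have k3 : (2*(((n:ℕ)+1):ℤ)-1) = 2*(n:ℤ)+1 := by push_cast; ring
    have r0 : Sq m (2*(n:ℤ)+1) = 2*c*Sq m (2*n) - Sq m (2*n-1) := by
      have h := Sq_add_one (m := m) (2*(n:ℤ))
      rwa [show (2*(n:ℤ))+1 = 2*n+1 by ring, show (2*(n:ℤ))-1 = 2*n-1 by ring] at h
    have r1 : Sq m (2*(n:ℤ)+2) = 2*c*Sq m (2*n+1) - Sq m (2*n) := by
      have h := Sq_add_one (m := m) (2*(n:ℤ)+1)
      rwa [show (2*(n:ℤ)+1)+1 = 2*n+2 by ring, show (2*(n:ℤ)+1)-1 = 2*n by ring] at h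
    have r2 : Sq m (2*(n:ℤ)+3) = 2*c*Sq m (2*n+2) - Sq m (2*n+1) := by
      have h := Sq_add_one (m := m) (2*(n:ℤ)+2)
      rwa [show (2*(n:ℤ)+2)+1 = 2*n+3 by ring, show (2*(n:ℤ)+2)-1 = 2*n+1 by ring] at h
    push_cast
    rw [k3, k1, k2, r2, r1, r0]
    congr 1
    · congr 1
      field_simp
      ring
    · congr 1
      field_simp
      ring

end Dihedral


section Relator

variable {k l : B}

lemma grefl_pow_relator (hkl : k ≠ l) : (grefl M k * grefl M l) ^ (M k l) = 1 := by
  by_cases hm0 : M k l = 0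
  · rw [hm0, pow_zero]
  · set m := M k l with hmdef
    have hm : M k l = m := rfl
    have hm2 : 2 ≤ m := by
      have := M.off_diagonal k l hkl
      omega
    set θ := Real.pi / (m:ℝ) with hθ
    set c := Real.cos θ with hc
    have hs : Real.sin θ ≠ 0 := ne_of_gt (sin_theta_pos hm2)
    have hden : (1:ℝ) - c^2 ≠ 0 := by
      have h1 := cos_theta_lt_one hm2
      have h2 := neg_one_lt_cos_theta hm2
      rw [← hc] at h1 h2
      nlinarith
    have hmθ : (m:ℝ) * θ = Real.pi := by
      rw [hθ]
      field_simp
    have e1 : Sq m (2*(m:ℤ)+1) = Real.sin θ := by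
      unfold Sq
      rw [show ((2*(m:ℤ)+1 : ℤ):ℝ) * (Real.pi / (m:ℝ)) = θ + 2*Real.pi by
        push_cast
        rw [← hθ]
        linear_combination 2 * hmθ]
      rw [Real.sin_add_two_pi]
    have e2 : Sq m (2*(m:ℤ)) = 0 := by
      unfold Sq
      rw [show ((2*(m:ℤ) : ℤ):ℝ) * (Real.pi / (m:ℝ)) = 2*Real.pi by
        push_cast
        rw [← hθ]
        linear_combination 2 * hmθ]
      exact Real.sin_two_pi
    have e3 : Sq m (2*(m:ℤ)-1) = -Real.sin θ := by
      unfold Sq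
      rw [show ((2*(m:ℤ)-1 : ℤ):ℝ) * (Real.pi / (m:ℝ)) = 2*Real.pi - θ by
        push_cast
        rw [← hθ]
        linear_combination 2 * hmθ]
      rw [Real.sin_sub, Real.sin_two_pi, Real.cos_two_pi]
      ring
    apply LinearMap.ext
    intro v
    rw [Module.End.one_apply]
    set a := (gform M k v + c * gform M l v)/(1-c^2) with ha
    set b := (gform M l v + c * gform M k v)/(1-c^2) with hb
    set u := v - a • Finsupp.single k (1:ℝ) - b • Finsupp.single l (1:ℝ) with hu
    have hgk : gform M k u = 0 := by
      rw [hu, map_sub, map_sub, map_smul, map_smul, gform_single, gform_single, cmat_diag,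
        cmat_kl M hm hm2, smul_eq_mul, smul_eq_mul, ha, hb]
      rw [← hc]
      field_simp
      ring
    have hgl : gform M l u = 0 := by
      rw [hu, map_sub, map_sub, map_smul, map_smul, gform_single, gform_single,
        cmat_lk M hm hm2, cmat_diag, smul_eq_mul, smul_eq_mul, ha, hb]
      rw [← hc]
      field_simp
      ring
    have hfix : ∀ n : ℕ, ((grefl M k * grefl M l) ^ n) u = u := by
      intro n
      induction n with
      | zero => rw [pow_zero, Module.End.one_apply]
      | succ n ih =>
        rw [pow_succ, Module.End.mul_apply, Module.End.mul_apply, grefl_fixed M hgl,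
          grefl_fixed M hgk]
        exact ih
    have hv : v = u + (a • Finsupp.single k (1:ℝ) + b • Finsupp.single l (1:ℝ)) := by
      rw [hu]
      abel
    rw [hv, map_add, hfix, pow_T_span M hkl hm hm2, e1, e2, e3]
    congr 2
    · congr 1; rw [← hθ]; field_simp; ring
    · congr 1; rw [← hθ]; field_simp; ring

end Relator

lemma grefl_liftable : M.IsLiftable (grefl M) := by
  intro k l
  by_cases hkl : k = l
  · subst hkl
    rw [M.diagonal, pow_one]
    exact grefl_mul_self M k
  · exact grefl_pow_relator M hkl

end CoxGeom

namespace CoxeterSystem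

variable {B W : Type*} [Group W] {M : CoxeterMatrix B} (cs : CoxeterSystem M W)

lemma simple_injective : Function.Injective cs.simple := by
  intro i j hij
  by_contra hne
  have h1 : CoxGeom.grefl M i = CoxGeom.grefl M j := by
    rw [← cs.lift_apply_simple (CoxGeom.grefl_liftable M) i,
      ← cs.lift_apply_simple (CoxGeom.grefl_liftable M) j, hij]
  have h2 := congrArg (fun F : Module.End ℝ (B →₀ ℝ) => (F (Finsupp.single i (1:ℝ))) i) h1
  rw [CoxGeom.grefl_apply, CoxGeom.grefl_apply, CoxGeom.gform_single, CoxGeom.gform_single,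
    CoxGeom.cmat_diag] at h2
  rw [Finsupp.sub_apply, Finsupp.sub_apply, Finsupp.smul_apply, Finsupp.smul_apply,
    Finsupp.single_eq_same, Finsupp.single_eq_of_ne hne] at h2
  rw [smul_eq_mul, smul_eq_mul] at h2
  norm_num at h2

end CoxeterSystem

namespace CoxeterSystem

variable {B W : Type*} [Group W] {M : CoxeterMatrix B} (cs : CoxeterSystem M W)

local prefix:100 "σ" => cs.simple
local prefix:100 "π" => cs.wordProd
local prefix:100 "ℓ" => cs.length

private lemma conj_eq_iff' (a b t : W) : a * t * a⁻¹ = b ↔ t = a⁻¹ * b * a := by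
  constructor
  · intro h; rw [← h]; group
  · intro h; rw [h]; group

/-- Sign character of a word at `t`. -/
def sgn (ω : List B) (t : W) : ℤˣ :=
  ((cs.rightInvSeq ω).map (fun x => if x = t then (-1 : ℤˣ) else 1)).prod

lemma sgn_nil (t : W) : cs.sgn [] t = 1 := rfl

lemma sgn_cons (i : B) (ω : List B) (t : W) :
    cs.sgn (i :: ω) t = (if (π ω)⁻¹ * σ i * π ω = t then (-1:ℤˣ) else 1) * cs.sgn ω t := by
  rw [sgn, sgn, show cs.rightInvSeq (i :: ω) = (π ω)⁻¹ * σ i * π ω :: cs.rightInvSeq ω from rfl,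
    map_cons, prod_cons]

lemma sgn_eq_one_of_not_mem (ω : List B) (t : W) (h : t ∉ cs.rightInvSeq ω) :
    cs.sgn ω t = 1 := by
  apply List.prod_eq_one
  intro x hx
  rw [mem_map] at hx
  obtain ⟨y, hy, rfl⟩ := hx
  rw [if_neg (by rintro rfl; exact h hy)]

/-- The sign action of a generator on `W × ℤˣ`. -/
def phiFun (k : B) : W × ℤˣ → W × ℤˣ :=
  fun q => (σ k * q.1 * (σ k)⁻¹, (if q.1 = σ k then (-1:ℤˣ) else 1) * q.2)

lemma phiFun_involutive (k : B) : Involutive (cs.phiFun k) := by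
  rintro ⟨t, ε⟩
  unfold phiFun
  refine Prod.ext ?_ ?_
  · dsimp
    have h2 : σ k * (σ k * t * (σ k)⁻¹) * (σ k)⁻¹ = (σ k * σ k) * t * (σ k * σ k)⁻¹ := by group
    rw [h2, cs.simple_mul_simple_self]; simp
  · dsimp
    by_cases h : t = σ k
    · subst h; simp
    · rw [if_neg ?_, if_neg h, one_mul, one_mul]
      intro hc
      exact h (by rw [(conj_eq_iff' _ _ _).mp hc]; group)

def phi (k : B) : Equiv.Perm (W × ℤˣ) := (cs.phiFun_involutive k).toPerm

lemma phi_apply (k : B) (q : W × ℤˣ) : cs.phi k q = cs.phiFun k q := rfl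

lemma prod_map_phi (ω : List B) (t : W) (ε : ℤˣ) :
    ((ω.map cs.phi).prod) (t, ε) = (π ω * t * (π ω)⁻¹, cs.sgn ω t * ε) := by
  induction ω with
  | nil => simp [sgn_nil]
  | cons i ω ih =>
    rw [map_cons, prod_cons, Equiv.Perm.mul_apply, ih, phi_apply]
    unfold phiFun
    rw [sgn_cons, cs.wordProd_cons]
    refine Prod.ext ?_ ?_
    · dsimp; group
    · dsimp
      have hcond : (π ω * t * (π ω)⁻¹ = σ i) ↔ ((π ω)⁻¹ * σ i * π ω = t) := by
        rw [conj_eq_iff']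
        exact eq_comm
      by_cases h : (π ω)⁻¹ * σ i * π ω = t
      · rw [if_pos (hcond.mpr h), if_pos h, mul_assoc]
      · rw [if_neg (fun hc => h (hcond.mp hc)), if_neg h, mul_assoc]

/-- The word `k l k l ... k l` with `n` pairs. -/
def dword (k l : B) : ℕ → List B
  | 0 => []
  | n+1 => k :: l :: dword k l n

lemma wordProd_dword (k l : B) (n : ℕ) : π (dword k l n) = (σ k * σ l) ^ n := by
  induction n with
  | zero => simp [dword]
  | succ n ih =>
    rw [dword, cs.wordProd_cons, cs.wordProd_cons, ih, pow_succ']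
    rw [mul_assoc]

lemma prod_map_phi_dword (k l : B) (n : ℕ) :
    (((dword k l n)).map cs.phi).prod = (cs.phi k * cs.phi l) ^ n := by
  induction n with
  | zero => simp [dword]
  | succ n ih =>
    rw [dword, map_cons, map_cons, prod_cons, prod_cons, ih, pow_succ', mul_assoc]

lemma simple_mul_pow' (k l : B) (r : ℕ) :
    σ l * (σ k * σ l) ^ r = ((σ k * σ l) ^ r)⁻¹ * σ l := by
  induction r with
  | zero => simp
  | succ r ih =>
    have hstep : σ l * (σ k * σ l) = (σ k * σ l)⁻¹ * σ l := by
      rw [mul_inv_rev, cs.inv_simple, cs.inv_simple, mul_assoc]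
    rw [pow_succ, ← mul_assoc, ih, mul_assoc, hstep, ← mul_assoc, ← mul_inv_rev, ← pow_succ']
    rw [pow_succ]

lemma ris_dword (k l : B) (n : ℕ) :
    cs.rightInvSeq (dword k l n)
      = ((List.range (2*n)).reverse).map (fun r => σ l * (σ k * σ l) ^ r) := by
  induction n with
  | zero => simp [dword]
  | succ n ih =>
    have h1 : cs.rightInvSeq (dword k l (n+1)) =
        (π (l :: dword k l n))⁻¹ * σ k * π (l :: dword k l n)
          :: ((π (dword k l n))⁻¹ * σ l * π (dword k l n)
          :: cs.rightInvSeq (dword k l n)) := rfl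
    have h2 : 2 * (n+1) = (2*n + 1) + 1 := by ring
    rw [h1, h2, List.range_succ, List.range_succ]
    simp only [reverse_append, reverse_singleton, singleton_append, cons_append, nil_append,
      map_cons]
    rw [ih]
    congr 1
    · -- head : (π (l :: D n))⁻¹ * σ k * π (l :: D n) = σ l * p ^ (2n+1)
      rw [cs.wordProd_cons, wordProd_dword]
      have h3 : 2*n+1 = n+1+n := by ring
      rw [h3, pow_add, ← mul_assoc (σ l), simple_mul_pow' cs k l (n+1), pow_succ']
      simp only [mul_inv_rev, cs.inv_simple, mul_assoc]
    congr 1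
    · -- second : (π (D n))⁻¹ * σ l * π (D n) = σ l * p ^ (2n)
      rw [wordProd_dword]
      have h3 : (2*n) = n + n := by ring
      rw [h3, pow_add, ← mul_assoc, simple_mul_pow']

lemma sgn_dword (k l : B) (t : W) : cs.sgn (dword k l (M k l)) t = 1 := by
  set m := M k l with hm
  set g : ℕ → ℤˣ := fun r => if σ l * (σ k * σ l) ^ r = t then (-1:ℤˣ) else 1 with hg
  have hper : ∀ r : ℕ, g (m + r) = g r := by
    intro r
    simp only [hg, pow_add, hm, cs.simple_mul_simple_pow k l, one_mul]
  have : cs.sgn (dword k l m) t = ((List.range (2*m)).map g).prod := by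
    rw [sgn, ris_dword, map_map, map_reverse, prod_reverse]
    rfl
  rw [this, two_mul, List.range_add, map_append, prod_append, map_map]
  have : ((List.range m).map (g ∘ fun x => m + x)) = (List.range m).map g := by
    apply map_congr_left
    intro r _
    exact hper r
  rw [this]
  exact Int.units_mul_self _

lemma phi_liftable : M.IsLiftable cs.phi := by
  intro k l
  apply Equiv.ext
  rintro ⟨t, ε⟩
  rw [← prod_map_phi_dword, prod_map_phi, wordProd_dword, cs.simple_mul_simple_pow k l,
    sgn_dword]
  simp

/-- The sign action of `W` on `W × ℤˣ`. -/
def act : W →* Equiv.Perm (W × ℤˣ) := cs.lift ⟨cs.phi, cs.phi_liftable⟩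

lemma act_simple (k : B) : cs.act (σ k) = cs.phi k := cs.lift_apply_simple cs.phi_liftable k

lemma act_wordProd (ω : List B) : cs.act (π ω) = ((ω.map cs.phi)).prod := by
  rw [wordProd, map_list_prod, map_map]
  congr 1
  apply map_congr_left
  intro i _
  exact cs.act_simple i

lemma act_apply (w t : W) (ε : ℤˣ) :
    cs.act w (t, ε) = (w * t * w⁻¹, (cs.act w (t,1)).2 * ε) := by
  obtain ⟨ω, rfl⟩ := cs.wordProd_surjective w
  rw [act_wordProd, prod_map_phi, prod_map_phi, mul_one]

/-- `eta w t = -1` iff `t` inverts `w` on the right. -/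
def eta (w t : W) : ℤˣ := (cs.act w (t, 1)).2

lemma eta_wordProd (ω : List B) (t : W) : cs.eta (π ω) t = cs.sgn ω t := by
  rw [eta, act_wordProd, prod_map_phi, mul_one]

lemma mem_ris_of_eta {σ' : List B} {t : W} (h : cs.eta (π σ') t = -1) :
    t ∈ cs.rightInvSeq σ' := by
  by_contra hm
  rw [eta_wordProd, cs.sgn_eq_one_of_not_mem _ _ hm] at h
  exact absurd h (by decide)

lemma act_refl_self {t : W} (ht : cs.IsReflection t) (ε : ℤˣ) :
    cs.act t (t, ε) = (t, -ε) := by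
  obtain ⟨u, k, rfl⟩ := ht
  have hstep1 : cs.act u⁻¹ (u * σ k * u⁻¹, ε) = (σ k, (cs.act u⁻¹ (u * σ k * u⁻¹, 1)).2 * ε) := by
    rw [act_apply]
    congr 1
    group
  have hcomp : cs.act u (σ k, (cs.act u⁻¹ (u * σ k * u⁻¹, 1)).2 * ε) = (u * σ k * u⁻¹, ε) := by
    rw [← hstep1, ← Equiv.Perm.mul_apply, ← map_mul, mul_inv_cancel, map_one,
      Equiv.Perm.coe_one, id_eq]
  have hdecomp : cs.act (u * σ k * u⁻¹) (u * σ k * u⁻¹, ε)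
      = cs.act u (cs.act (σ k) (cs.act u⁻¹ (u * σ k * u⁻¹, ε))) := by
    rw [map_mul, map_mul, Equiv.Perm.mul_apply, Equiv.Perm.mul_apply]
  rw [hdecomp, hstep1, act_simple, phi_apply]
  unfold phiFun
  rw [if_pos rfl]
  have : (σ k * σ k * (σ k)⁻¹, (-1 : ℤˣ) * ((cs.act u⁻¹ (u * σ k * u⁻¹, 1)).2 * ε))
      = (σ k, -((cs.act u⁻¹ (u * σ k * u⁻¹, 1)).2 * ε)) := by
    refine Prod.ext ?_ ?_
    · dsimp; group
    · dsimp; rw [neg_one_mul]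
  rw [this]
  have hflip : ∀ (w : W) (x : W × ℤˣ), cs.act w (x.1, -x.2) = ((cs.act w x).1, -(cs.act w x).2) := by
    rintro w ⟨x1, x2⟩
    rw [act_apply cs w x1 (-x2), act_apply cs w x1 x2]
    refine Prod.ext rfl ?_
    dsimp
    rw [mul_neg]
  have := hflip u (σ k, (cs.act u⁻¹ (u * σ k * u⁻¹, 1)).2 * ε)
  dsimp at this
  rw [this, hcomp]

lemma eta_mul_refl (w : W) {t : W} (ht : cs.IsReflection t) :
    cs.eta (w * t) t = - cs.eta w t := by
  unfold eta
  rw [map_mul, Equiv.Perm.mul_apply, act_refl_self cs ht, act_apply cs w t (-1)]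
  dsimp
  rw [mul_neg_one]

lemma mem_ris_of_isRightInversion {w t : W} (hri : cs.IsRightInversion w t)
    {σ' : List B} (hσ : cs.IsReduced σ') (hw : w = π σ') : t ∈ cs.rightInvSeq σ' := by
  apply mem_ris_of_eta
  rw [← hw]
  rcases Int.units_eq_one_or (cs.eta w t) with h | h
  · exfalso
    have h2 : cs.eta (w * t) t = -1 := by rw [eta_mul_refl cs w hri.1, h]
    obtain ⟨τ, hτ, hτw⟩ := cs.exists_reduced_word' (w * t)
    rw [hτw] at h2
    have h3 := cs.isRightInversion_of_mem_rightInvSeq hτ (cs.mem_ris_of_eta h2)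
    rw [← hτw] at h3
    have h4 := h3.2
    rw [mul_assoc, hri.1.mul_self, mul_one] at h4
    exact absurd (h4.trans hri.2) (lt_irrefl _)
  · exact h

lemma mem_lis_of_isLeftInversion {w t : W} (hli : cs.IsLeftInversion w t)
    {σ' : List B} (hσ : cs.IsReduced σ') (hw : w = π σ') : t ∈ cs.leftInvSeq σ' := by
  have hri : cs.IsRightInversion w⁻¹ t := cs.isRightInversion_inv_iff.mpr hli
  have hmem := cs.mem_ris_of_isRightInversion hri (σ' := σ'.reverse)
    ((cs.isReduced_reverse_iff σ').mpr hσ) (by rw [cs.wordProd_reverse, hw])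
  rw [cs.rightInvSeq_reverse, mem_reverse] at hmem
  exact hmem

/-! ### Weak order lemmas -/

lemma weakLE_refl (w : W) : cs.weakLE w w := by
  simp [weakLE]

lemma isLeftInversion_of_weakLE {u z : W} (h : cs.weakLE u z) {t : W}
    (ht : cs.IsLeftInversion u t) : cs.IsLeftInversion z t := by
  refine ⟨ht.1, ?_⟩
  have h1 : t * z = (t * u) * (u⁻¹ * z) := by group
  calc ℓ (t * z) ≤ ℓ (t * u) + ℓ (u⁻¹ * z) := by rw [h1]; exact cs.length_mul_le _ _
    _ < ℓ u + ℓ (u⁻¹ * z) := by have := ht.2; omega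
    _ = ℓ z := h.symm

lemma weakLE_of_inversions_aux (n : ℕ) : ∀ u z : W, ℓ u ≤ n →
    (∀ t : W, cs.IsLeftInversion u t → cs.IsLeftInversion z t) → cs.weakLE u z := by
  induction n with
  | zero =>
    intro u z hu _
    have : u = 1 := cs.length_eq_zero_iff.mp (Nat.le_zero.mp hu)
    subst this
    simp [weakLE]
  | succ n ih =>
    intro u z hu h
    by_cases hu1 : u = 1
    · subst hu1; simp [weakLE]
    · obtain ⟨k, hk⟩ := cs.exists_leftDescent_of_ne_one hu1
      have hk' : cs.IsLeftInversion u (σ k) := ⟨cs.isReflection_simple k, hk⟩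
      have hzk : cs.IsLeftInversion z (σ k) := h _ hk'
      -- descent arithmetic
      have hk2 : ℓ (σ k * u) < ℓ u := hk
      have hul : ℓ (σ k * u) + 1 = ℓ u := (cs.length_simple_mul u k).resolve_left (by omega)
      have hzl : ℓ (σ k * z) + 1 = ℓ z := by
        have := hzk.2
        exact (cs.length_simple_mul z k).resolve_left (by omega)
      have hstep : ∀ t : W, cs.IsLeftInversion (σ k * u) t → cs.IsLeftInversion (σ k * z) t := by
        rintro t ⟨ht, hlt⟩
        have htk : t ≠ σ k := by
          rintro rfl
          rw [← mul_assoc, cs.simple_mul_simple_self, one_mul] at hlt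
          omega
        have hru : cs.IsLeftInversion u (σ k * t * (σ k)⁻¹) := by
          refine ⟨ht.conj _, ?_⟩
          have he : σ k * t * (σ k)⁻¹ * u = σ k * (t * (σ k * u)) := by
            rw [cs.inv_simple]; group
          rw [he]
          calc ℓ (σ k * (t * (σ k * u))) ≤ ℓ (t * (σ k * u)) + 1 := by
                have := cs.length_simple_mul (t * (σ k * u)) k
                omega
            _ ≤ ℓ (σ k * u) := by omega
            _ < ℓ u := by omega
        have hrz := h _ hru
        -- get a reduced word for z starting with k
        obtain ⟨τ, hτ, hτw⟩ := cs.exists_reduced_word' (σ k * z)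
        have hkτ : cs.IsReduced (k :: τ) := by
          unfold IsReduced
          rw [cs.wordProd_cons, ← hτw, ← mul_assoc, cs.simple_mul_simple_self, one_mul,
            length_cons]
          have h6 : ℓ (π τ) = τ.length := hτ
          rw [← hτw] at h6
          omega
        have hzw : z = π (k :: τ) := by
          rw [cs.wordProd_cons, ← hτw, ← mul_assoc, cs.simple_mul_simple_self, one_mul]
        have hmem := cs.mem_lis_of_isLeftInversion hrz hkτ hzw
        rw [show cs.leftInvSeq (k :: τ) = σ k :: List.map (MulAut.conj (σ k)) (cs.leftInvSeq τ)
          from rfl] at hmem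
        rcases List.mem_cons.mp hmem with hmem | hmem
        · exfalso
          apply htk
          have : σ k * t * (σ k)⁻¹ = σ k := hmem
          rw [conj_eq_iff'] at this
          rw [this]
          group
        · rw [mem_map] at hmem
          obtain ⟨x, hx, hxe⟩ := hmem
          have hxt : x = t := by
            have : σ k * x * (σ k)⁻¹ = σ k * t * (σ k)⁻¹ := hxe
            have h5 := congrArg (fun y => (σ k)⁻¹ * y * σ k) this
            group at h5
            simpa using h5
          subst hxt
          have := cs.isLeftInversion_of_mem_leftInvSeq hτ hx
          rwa [← hτw] at this
      have hle : cs.weakLE (σ k * u) (σ k * z) := ih (σ k * u) (σ k * z) (by omega) hstep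
      unfold weakLE at hle ⊢
      have he2 : (σ k * u)⁻¹ * (σ k * z) = u⁻¹ * z := by group
      rw [he2] at hle
      omega

lemma weakLE_of_inversions {u z : W}
    (h : ∀ t : W, cs.IsLeftInversion u t → cs.IsLeftInversion z t) : cs.weakLE u z :=
  cs.weakLE_of_inversions_aux (ℓ u) u z le_rfl h

lemma length_mulRightDescent {w : W} {i : B} (hi : cs.IsRightDescent w i) :
    ℓ (w * σ i) + 1 = ℓ w :=
  (cs.length_mul_simple w i).resolve_left (by have := hi; unfold IsRightDescent at this; omega)

lemma isLeftInversion_mulRightDescent {w : W} {i : B} (hi : cs.IsRightDescent w i)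
    {t : W} (hinv : cs.IsLeftInversion w t) (hne : t ≠ w * σ i * w⁻¹) :
    cs.IsLeftInversion (w * σ i) t := by
  obtain ⟨τ, hτ, hτw⟩ := cs.exists_reduced_word' (w * σ i)
  have hconcat : cs.IsReduced (τ.concat i) := by
    unfold IsReduced
    rw [cs.wordProd_concat, ← hτw, mul_assoc, cs.simple_mul_simple_self, mul_one,
      length_concat]
    have h6 : ℓ (π τ) = τ.length := hτ
    rw [← hτw] at h6
    have := cs.length_mulRightDescent hi
    omega
  have hww : w = π (τ.concat i) := by
    rw [cs.wordProd_concat, ← hτw, mul_assoc, cs.simple_mul_simple_self, mul_one]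
  have hmem := cs.mem_lis_of_isLeftInversion hinv hconcat hww
  rw [cs.leftInvSeq_concat, concat_eq_append, mem_append, mem_singleton] at hmem
  rcases hmem with hmem | hmem
  · have := cs.isLeftInversion_of_mem_leftInvSeq hτ hmem
    rwa [← hτw] at this
  · exfalso
    apply hne
    rw [hmem, ← hτw, cs.simple_mul_simple_cancel_right, mul_inv_rev, cs.inv_simple,
      ← mul_assoc]

lemma weakLE_mulRightDescent {w : W} {i : B} (hi : cs.IsRightDescent w i) :
    cs.weakLE (w * σ i) w := by
  unfold weakLE
  have h1 : (w * σ i)⁻¹ * w = σ i := by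
    rw [mul_inv_rev, cs.inv_simple]
    group
  rw [h1, cs.length_simple]
  have := cs.length_mulRightDescent hi
  omega

lemma exists_descent_ge {u w : W} (h : cs.weakLE u w) (hne : u ≠ w) :
    ∃ i : B, cs.IsRightDescent w i ∧ cs.weakLE u (w * σ i) := by
  have hx : u⁻¹ * w ≠ 1 := by
    intro hc
    exact hne (by rw [← mul_one u, ← hc]; group)
  obtain ⟨ω, hω, hωw⟩ := cs.exists_reduced_word' (u⁻¹ * w)
  have hωne : ω ≠ [] := by
    rintro rfl
    exact hx (by rw [hωw, cs.wordProd_nil])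
  obtain ⟨ω', k, rfl⟩ := ω.eq_nil_or_concat.resolve_left hωne
  refine ⟨k, ?_, ?_⟩
  all_goals
    have hw1 : w * σ k = u * π ω' := by
      rw [cs.wordProd_concat] at hωw
      have : w = u * (π ω' * σ k) := by
        rw [← hωw]
        group
      rw [this]
      rw [mul_assoc, mul_assoc, cs.simple_mul_simple_self, mul_one]
    have hlen : ℓ (u⁻¹ * w) = ω'.length + 1 := by
      have h6 : ℓ (π (ω'.concat k)) = (ω'.concat k).length := hω
      rw [hωw, h6, length_concat]
    have hup : ℓ (π ω') ≤ ω'.length := cs.length_wordProd_le ω'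
    have hwk1 : ℓ (w * σ k) ≤ ℓ u + ℓ (π ω') := by
      rw [hw1]; exact cs.length_mul_le _ _
    have hwk2 : ℓ w ≤ ℓ (w * σ k) + 1 := by
      have := cs.length_mul_simple w k
      omega
    have hw : ℓ w = ℓ u + ℓ (u⁻¹ * w) := h
  · unfold IsRightDescent
    omega
  · unfold weakLE
    have h2 : u⁻¹ * (w * σ k) = π ω' := by rw [hw1]; group
    rw [h2]
    omega



end CoxeterSystem

/-- Let `(W, S)` be a Coxeter system with `W` finite.  An element `w ∈ W` is join-irreducible
in the right weak order if and only if `w` has exactly one (right) descent. -/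
theorem joinIrreducible_iff_existsUnique_descent
    {B W : Type*} [Group W] [Finite W] {M : CoxeterMatrix B}
    (cs : CoxeterSystem M W) (w : W) :
    cs.IsJoinIrreducible w ↔ ∃! i : B, cs.IsRightDescent w i := by
  constructor
  · rintro ⟨hne, hirr⟩
    obtain ⟨i, hi⟩ := cs.exists_rightDescent_of_ne_one hne
    refine ⟨i, hi, fun j hj => ?_⟩
    by_contra hji
    have hsne : cs.simple j ≠ cs.simple i := fun h => hji (cs.simple_injective h)
    have hne1 : w * cs.simple j * w⁻¹ ≠ w * cs.simple i * w⁻¹ := by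
      intro hc
      exact hsne (mul_left_cancel (mul_right_cancel hc))
    have hLUB : cs.IsWeakLUB {w * cs.simple j, w * cs.simple i} w := by
      constructor
      · rintro x hx
        simp only [Set.mem_insert_iff, Set.mem_singleton_iff] at hx
        rcases hx with rfl | rfl
        · exact cs.weakLE_mulRightDescent hj
        · exact cs.weakLE_mulRightDescent hi
      · intro z hz
        have hzj : cs.weakLE (w * cs.simple j) z := hz _ (Set.mem_insert _ _)
        have hzi : cs.weakLE (w * cs.simple i) z := hz _ (Set.mem_insert_of_mem _ rfl)
        apply cs.weakLE_of_inversions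
        intro t htw
        by_cases hc : t = w * cs.simple j * w⁻¹
        · subst hc
          exact cs.isLeftInversion_of_weakLE hzi
            (cs.isLeftInversion_mulRightDescent hi htw hne1)
        · exact cs.isLeftInversion_of_weakLE hzj
            (cs.isLeftInversion_mulRightDescent hj htw hc)
    rcases hirr _ _ hLUB with h | h
    · have h2 : cs.length (w * cs.simple j) < cs.length w := hj
      rw [h] at h2
      omega
    · have h2 : cs.length (w * cs.simple i) < cs.length w := hi
      rw [h] at h2
      omega
  · rintro ⟨i, hi, huniq⟩
    constructor
    · rintro rfl
      exact cs.not_isRightDescent_one i hi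
    · intro u v hLUB
      by_contra hcon
      push_neg at hcon
      obtain ⟨hu, hv⟩ := hcon
      have hule : cs.weakLE u w := hLUB.1 u (Set.mem_insert _ _)
      have hvle : cs.weakLE v w := hLUB.1 v (Set.mem_insert_of_mem _ rfl)
      obtain ⟨k, hk, huk⟩ := cs.exists_descent_ge hule hu
      obtain ⟨k', hk', hvk⟩ := cs.exists_descent_ge hvle hv
      rw [huniq k hk] at huk
      rw [huniq k' hk'] at hvk
      have hz : cs.weakLE w (w * cs.simple i) := by
        apply hLUB.2
        rintro x hx
        simp only [Set.mem_insert_iff, Set.mem_singleton_iff] at hx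
        rcases hx with rfl | rfl
        · exact huk
        · exact hvk
      unfold CoxeterSystem.weakLE at hz
      have h7 : w⁻¹ * (w * cs.simple i) = cs.simple i := by group
      rw [h7, cs.length_simple] at hz
      have h8 : cs.length (w * cs.simple i) < cs.length w := hi
      omega
end
end

section
/- An element w ∈ 𝔖_{n+1} is join-irreducible in the right weak order if and only if w has exactly one descent, i.e., there is exactly one index d ∈ {1,…,n} with w(d) > w(d+1). -/
/-- The inversion set of `w ∈ 𝔖_{n+1}` (permutations of `Fin (n+1)`, i.e. of `{1,…,n+1}`):
pairs `(a, b)` with `b < a` and `w⁻¹(a) < w⁻¹(b)`. -/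
def invSetA (n : ℕ) (w : Equiv.Perm (Fin (n + 1))) : Set (Fin (n + 1) × Fin (n + 1)) :=
  {p | p.2 < p.1 ∧ w.symm p.1 < w.symm p.2}

/-- The right weak order on `𝔖_{n+1}`: `u ≤ w` iff `inv(u) ⊆ inv(w)`. -/
def weakLEA (n : ℕ) (u w : Equiv.Perm (Fin (n + 1))) : Prop :=
  invSetA n u ⊆ invSetA n w

/-- `w` is a least upper bound of `S` in the right weak order on `𝔖_{n+1}`. -/
def IsWeakLUBA (n : ℕ) (S : Set (Equiv.Perm (Fin (n + 1)))) (w : Equiv.Perm (Fin (n + 1))) :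
    Prop :=
  (∀ x ∈ S, weakLEA n x w) ∧ ∀ z, (∀ x ∈ S, weakLEA n x z) → weakLEA n w z

/-- `w` is join-irreducible in the right weak order on `𝔖_{n+1}`. -/
def IsJoinIrreducibleA (n : ℕ) (w : Equiv.Perm (Fin (n + 1))) : Prop :=
  w ≠ 1 ∧ ∀ u v, IsWeakLUBA n {u, v} w → u = w ∨ v = w

/-- `d` is a descent of `w ∈ 𝔖_{n+1}`: `w(d) > w(d+1)`.
(Position `d : Fin n` corresponds to the 1-indexed position `d + 1 ∈ {1,…,n}`.) -/
def IsDescentA (n : ℕ) (w : Equiv.Perm (Fin (n + 1))) (d : Fin n) : Prop :=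
  w d.succ < w d.castSucc

section Helpers

variable {n : ℕ}

/-- A strictly monotone permutation of `Fin m` is the identity. -/
lemma perm_eq_one_of_strictMono {m : ℕ} (e : Equiv.Perm (Fin m))
    (h : StrictMono e) : e = 1 := by
  let iso : Fin m ≃o Fin m := ⟨e, h.le_iff_le⟩
  have hiso : iso = OrderIso.refl (Fin m) := Subsingleton.elim _ _
  apply Equiv.ext
  intro x
  have := congrArg (fun f : Fin m ≃o Fin m => f x) hiso
  simpa [iso] using this

/-- Equal inversion sets imply equal permutations. -/
lemma invSetA_inj {u v : Equiv.Perm (Fin (n + 1))}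
    (h : invSetA n u = invSetA n v) : u = v := by
  have key : ∀ x y : Fin (n + 1), y < x → (u.symm x < u.symm y ↔ v.symm x < v.symm y) := by
    intro x y hxy
    constructor
    · intro hu
      exact ((Set.ext_iff.mp h (x, y)).mp ⟨hxy, hu⟩).2
    · intro hv
      exact ((Set.ext_iff.mp h (x, y)).mpr ⟨hxy, hv⟩).2
  have hmono : StrictMono fun i => v.symm (u i) := by
    intro i j hij
    have hne : u i ≠ u j := fun hh => absurd (u.injective hh) (ne_of_lt hij)
    rcases lt_or_gt_of_ne hne with hlt | hgt
    · -- u i < u j ; key on pair (u j, u i)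
      have hiff := key (u j) (u i) hlt
      have : ¬ v.symm (u j) < v.symm (u i) := by
        intro hc
        have := hiff.mpr hc
        simp only [Equiv.symm_apply_apply] at this
        exact absurd hij (not_lt_of_gt this)
      have hne2 : v.symm (u i) ≠ v.symm (u j) := fun hh => hne (v.symm.injective hh)
      exact lt_of_le_of_ne (not_lt.mp this) hne2
    · have hiff := key (u i) (u j) hgt
      have : u.symm (u i) < u.symm (u j) := by
        simpa using hij
      exact hiff.mp this
  have : u.trans v.symm = 1 := perm_eq_one_of_strictMono _ hmono
  apply Equiv.ext
  intro i
  have := congrArg (fun f : Equiv.Perm (Fin (n + 1)) => v (f i)) this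
  simpa using this

/-- Chain lemma: if `w` is "locally increasing" on `[i, j)`, then `w i < w j`. -/
lemma chain_mono (w : Equiv.Perm (Fin (n + 1))) :
    ∀ (c : ℕ) (i j : Fin (n + 1)), (j : ℕ) = (i : ℕ) + c + 1 →
      (∀ k : Fin n, (i : ℕ) ≤ (k : ℕ) → (k : ℕ) < (j : ℕ) → w k.castSucc < w k.succ) →
      w i < w j := by
  intro c
  induction c with
  | zero =>
    intro i j hj H
    have hk : (i : ℕ) < n := by omega
    have h1 := H ⟨i, hk⟩ (by simp) (by simp; omega)
    have e1 : (⟨i, hk⟩ : Fin n).castSucc = i := by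
      apply Fin.ext; simp
    have e2 : (⟨i, hk⟩ : Fin n).succ = j := by
      apply Fin.ext; simp; omega
    rwa [e1, e2] at h1
  | succ c ih =>
    intro i j hj H
    have hj' : (i : ℕ) + c + 1 < n + 1 := by omega
    set j' : Fin (n + 1) := ⟨(i : ℕ) + c + 1, hj'⟩ with hj'def
    have h1 : w i < w j' := by
      apply ih i j' (by simp [hj'def])
      intro k hk1 hk2
      refine H k hk1 ?_
      simp only [hj'def] at hk2
      omega
    have hk : (j' : ℕ) < n := by simp [hj'def]; omega
    have h2 := H ⟨j', hk⟩ (by simp only [hj'def]; omega) (by simp only [hj'def]; omega)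
    have e1 : (⟨(j' : ℕ), hk⟩ : Fin n).castSucc = j' := by apply Fin.ext; simp
    have e2 : (⟨(j' : ℕ), hk⟩ : Fin n).succ = j := by apply Fin.ext; simp [hj'def]; omega
    rw [e1, e2] at h2
    exact lt_trans h1 h2

lemma chain_mono' (w : Equiv.Perm (Fin (n + 1))) (i j : Fin (n + 1)) (hij : i < j)
    (H : ∀ k : Fin n, (i : ℕ) ≤ (k : ℕ) → (k : ℕ) < (j : ℕ) → w k.castSucc < w k.succ) :
    w i < w j := by
  have : (j : ℕ) = (i : ℕ) + ((j : ℕ) - (i : ℕ) - 1) + 1 := by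
    have := hij
    rw [Fin.lt_def] at this
    omega
  exact chain_mono w _ i j this H

/-- If `w` has no descent, `w = 1`. -/
lemma eq_one_of_no_descent (w : Equiv.Perm (Fin (n + 1)))
    (h : ∀ d : Fin n, ¬ IsDescentA n w d) : w = 1 := by
  apply perm_eq_one_of_strictMono
  intro i j hij
  apply chain_mono' w i j hij
  intro k _ _
  have hne : w k.castSucc ≠ w k.succ := fun hh =>
    absurd (w.injective hh) (ne_of_lt (Fin.castSucc_lt_succ : k.castSucc < k.succ))
  exact lt_of_le_of_ne (not_lt.mp (h k)) hne

/-- Swapping adjacent positions: order behaviour. -/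
lemma swap_adj_lt (d : Fin n) (i j : Fin (n + 1)) (hij : i < j) :
    Equiv.swap d.castSucc d.succ i < Equiv.swap d.castSucc d.succ j ↔
      ¬ (i = d.castSucc ∧ j = d.succ) := by
  have hd1 : (d.castSucc : ℕ) = (d : ℕ) := by simp
  have hd2 : (d.succ : ℕ) = (d : ℕ) + 1 := by simp
  have hlt := hij
  rw [Fin.lt_def] at hlt
  by_cases h1 : i = d.castSucc
  · by_cases h4 : j = d.succ
    · subst h1; subst h4
      rw [Equiv.swap_apply_left, Equiv.swap_apply_right]
      constructor
      · intro hh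
        rw [Fin.lt_def, hd1, hd2] at hh
        omega
      · intro hh
        exact absurd (And.intro rfl rfl) hh
    · subst h1
      have h3 : j ≠ d.castSucc := ne_of_gt hij
      rw [Equiv.swap_apply_left, Equiv.swap_apply_of_ne_of_ne h3 h4]
      simp only [Fin.lt_def, hd2]
      rw [Fin.ext_iff, hd2] at h4
      constructor
      · intro _ hh; exact h4 (congrArg Fin.val hh.2)
      · intro _; omega
  · by_cases h2 : i = d.succ
    · subst h2
      have h3 : j ≠ d.castSucc := by
        intro hh; rw [hh, Fin.lt_def, hd1, hd2] at hij; omega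
      have h4 : j ≠ d.succ := ne_of_gt hij
      rw [Equiv.swap_apply_right, Equiv.swap_apply_of_ne_of_ne h3 h4]
      constructor
      · intro _ hh
        exact h1 hh.1
      · intro _
        rw [Fin.lt_def, hd1]
        omega
    · by_cases h3 : j = d.castSucc
      · subst h3
        rw [Equiv.swap_apply_left, Equiv.swap_apply_of_ne_of_ne h1 h2]
        constructor
        · intro _ hh; exact h1 hh.1
        · intro _
          rw [Fin.lt_def, hd2]
          rw [Fin.lt_def, hd1] at hij
          omega
      · by_cases h4 : j = d.succ
        · subst h4
          rw [Equiv.swap_apply_right, Equiv.swap_apply_of_ne_of_ne h1 h2]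
          constructor
          · intro _ hh; exact h1 hh.1
          · intro _
            rw [Fin.lt_def, hd1]
            rw [Fin.lt_def, hd2] at hij
            rw [Fin.ext_iff, hd1] at h1
            omega
        · rw [Equiv.swap_apply_of_ne_of_ne h1 h2, Equiv.swap_apply_of_ne_of_ne h3 h4]
          constructor
          · intro _ hh; exact h1 hh.1
          · intro _; exact hij

variable {w : Equiv.Perm (Fin (n + 1))} {d : Fin n}

/-- The inversion set of `w * swap` removes exactly the descent inversion. -/
lemma invSetA_mul_swap (hd : IsDescentA n w d) :
    invSetA n (w * Equiv.swap d.castSucc d.succ) =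
      invSetA n w \ {(w d.castSucc, w d.succ)} := by
  set s := Equiv.swap d.castSucc d.succ with hs
  have hsymm : ∀ z, (w * s).symm z = s (w.symm z) := by
    intro z
    rw [← Equiv.Perm.inv_def, mul_inv_rev, Equiv.Perm.mul_apply]
    simp [hs, Equiv.Perm.inv_def]
  ext ⟨x, y⟩
  simp only [invSetA, Set.mem_setOf_eq, Set.mem_diff, Set.mem_singleton_iff, Prod.mk.injEq]
  constructor
  · rintro ⟨hxy, hlt⟩
    rw [hsymm, hsymm] at hlt
    rcases lt_trichotomy (w.symm x) (w.symm y) with h | h | h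
    · have hns : ¬ (w.symm x = d.castSucc ∧ w.symm y = d.succ) :=
        (swap_adj_lt d _ _ h).mp hlt
      refine ⟨⟨hxy, h⟩, ?_⟩
      rintro ⟨hx, hy⟩
      exact hns ⟨by rw [hx]; simp, by rw [hy]; simp⟩
    · exact absurd (w.symm.injective h) (by intro hh; subst hh; exact absurd hxy (lt_irrefl _))
    · -- w.symm y < w.symm x : then swap must flip, i.e. (w.symm y, w.symm x) = (castSucc, succ)
      by_cases hflip : w.symm y = d.castSucc ∧ w.symm x = d.succ
      · -- then y = w d.castSucc, x = w d.succ, but descent says x < y, contradiction with hxy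
        have hy : y = w d.castSucc := by rw [← hflip.1]; simp
        have hx : x = w d.succ := by rw [← hflip.2]; simp
        rw [hx, hy] at hxy
        exact absurd hd (not_lt_of_gt hxy)
      · have := (swap_adj_lt d _ _ h).mpr hflip
        exact absurd hlt (not_lt_of_gt this)
  · rintro ⟨⟨hxy, hlt⟩, hne⟩
    refine ⟨hxy, ?_⟩
    rw [hsymm, hsymm]
    apply (swap_adj_lt d _ _ hlt).mpr
    rintro ⟨hx, hy⟩
    apply hne
    constructor
    · rw [← hx]; simp
    · rw [← hy]; simp

/-- The descent inversion is an inversion of `w`. -/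
lemma descent_mem_invSetA (hd : IsDescentA n w d) :
    (w d.castSucc, w d.succ) ∈ invSetA n w := by
  refine ⟨hd, ?_⟩
  simp [Fin.castSucc_lt_succ]

section UniqueDescent

variable (hd : IsDescentA n w d) (huniq : ∀ e : Fin n, IsDescentA n w e → e = d)

include hd huniq

/-- With a unique descent at `d`, `w` is increasing on each block. -/
lemma blocks_mono : ∀ i j : Fin (n + 1), i < j →
    ((j : ℕ) ≤ (d : ℕ) ∨ (d : ℕ) < (i : ℕ)) → w i < w j := by
  intro i j hij hblock
  apply chain_mono' w i j hij
  intro k hk1 hk2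
  have hkd : k ≠ d := by
    intro hh
    subst hh
    rcases hblock with h | h <;> omega
  have : ¬ IsDescentA n w k := fun hc => hkd (huniq k hc)
  have hne : w k.castSucc ≠ w k.succ := fun hh =>
    absurd (w.injective hh) (ne_of_lt (Fin.castSucc_lt_succ : k.castSucc < k.succ))
  exact lt_of_le_of_ne (not_lt.mp this) hne

/-- Fact B: characterization of inversions for a unique-descent permutation. -/
lemma inv_char (x y : Fin (n + 1)) (hxy : y < x) :
    w.symm x < w.symm y ↔ ((w.symm x : ℕ) ≤ (d : ℕ) ∧ (d : ℕ) < (w.symm y : ℕ)) := by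
  constructor
  · intro h
    by_contra hc
    push_neg at hc
    rcases le_or_gt (w.symm x : ℕ) (d : ℕ) with h1 | h1
    · have h2 := hc h1
      -- both ≤ d : first block
      have := blocks_mono hd huniq (w.symm x) (w.symm y) h (Or.inl h2)
      simp only [Equiv.apply_symm_apply] at this
      exact absurd hxy (not_lt_of_gt this)
    · -- w.symm x > d, and w.symm y > w.symm x > d : second block
      have := blocks_mono hd huniq (w.symm x) (w.symm y) h (Or.inr h1)
      simp only [Equiv.apply_symm_apply] at this
      exact absurd hxy (not_lt_of_gt this)
  · rintro ⟨h1, h2⟩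
    rw [Fin.lt_def]
    omega

/-- Fact C: values in the first block are at most `a`; second block at least `b`. -/
lemma first_block_le (x : Fin (n + 1)) (h : (w.symm x : ℕ) ≤ (d : ℕ)) :
    x ≤ w d.castSucc := by
  rcases lt_or_eq_of_le h with h1 | h1
  · have : w (w.symm x) < w d.castSucc := by
      apply blocks_mono hd huniq _ _ (by rw [Fin.lt_def]; simpa using h1) (Or.inl (by simp))
    simp only [Equiv.apply_symm_apply] at this
    exact le_of_lt this
  · have : w.symm x = d.castSucc := by apply Fin.ext; simpa using h1
    have : x = w d.castSucc := by rw [← this]; simp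
    exact le_of_eq this

lemma second_block_ge (y : Fin (n + 1)) (h : (d : ℕ) < (w.symm y : ℕ)) :
    w d.succ ≤ y := by
  rcases lt_or_eq_of_le (Nat.succ_le_of_lt h) with h1 | h1
  · have : w d.succ < w (w.symm y) := by
      apply blocks_mono hd huniq _ _ (by rw [Fin.lt_def]; simpa using h1)
        (Or.inr (by simp))
    simp only [Equiv.apply_symm_apply] at this
    exact le_of_lt this
  · have : w.symm y = d.succ := by apply Fin.ext; simp; omega
    have : y = w d.succ := by rw [← this]; simp
    exact ge_of_eq this

/-- Key lemma: if `u ≤ w` and `u` contains the descent inversion, then `u = w`. -/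
lemma key_lemma (u : Equiv.Perm (Fin (n + 1))) (hle : weakLEA n u w)
    (hmem : (w d.castSucc, w d.succ) ∈ invSetA n u) : u = w := by
  apply invSetA_inj
  apply Set.Subset.antisymm hle
  rintro ⟨x, y⟩ ⟨hxy, hinvw⟩
  refine ⟨hxy, ?_⟩
  set a := w d.castSucc with ha
  set b := w d.succ with hb
  obtain ⟨hab, hab2⟩ := hmem
  -- from inversion of w: positions
  obtain ⟨hx1, hy1⟩ := (inv_char hd huniq x y hxy).mp hinvw
  have hxa : x ≤ a := first_block_le hd huniq x hx1
  have hby : b ≤ y := second_block_ge hd huniq y hy1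
  -- Step 1: u.symm a < u.symm y
  have step1 : u.symm a < u.symm y := by
    rcases eq_or_lt_of_le hby with h | h
    · rw [← h]; exact hab2
    · -- b < y
      by_contra hc
      push_neg at hc
      have hya : y < a := lt_of_lt_of_le hxy hxa
      have hne : u.symm y ≠ u.symm a := fun hh =>
        absurd (u.symm.injective hh) (ne_of_lt hya)
      have h2 : u.symm y < u.symm b := lt_of_le_of_lt (lt_of_le_of_ne hc hne).le hab2
      have : (y, b) ∈ invSetA n w := hle ⟨h, h2⟩
      obtain ⟨_, hyw⟩ := this
      obtain ⟨hh1, _⟩ := (inv_char hd huniq y b h).mp hyw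
      omega
  -- Step 2: u.symm x < u.symm y
  rcases eq_or_lt_of_le hxa with h | h
  · rw [h]; exact step1
  · -- x < a
    by_contra hc
    push_neg at hc
    have hne : u.symm y ≠ u.symm x := fun hh =>
      absurd (u.symm.injective hh) (ne_of_lt hxy)
    have h2 : u.symm a < u.symm x := lt_of_lt_of_le step1 (lt_of_le_of_ne hc hne).le
    have : (a, x) ∈ invSetA n w := hle ⟨h, h2⟩
    obtain ⟨_, haw⟩ := this
    obtain ⟨_, hh2⟩ := (inv_char hd huniq a x h).mp haw
    -- hh2 : d < w.symm x, but hx1 : w.symm x ≤ d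
    omega

end UniqueDescent

end Helpers

/-- An element `w ∈ 𝔖_{n+1}` is join-irreducible in the right weak order if and only if
`w` has exactly one descent. -/
theorem isJoinIrreducibleA_iff_existsUnique_descent (n : ℕ) (hn : 1 ≤ n)
    (w : Equiv.Perm (Fin (n + 1))) :
    IsJoinIrreducibleA n w ↔ ∃! d : Fin n, IsDescentA n w d := by
  constructor
  · rintro ⟨hne, hirr⟩
    -- existence
    have hex : ∃ d : Fin n, IsDescentA n w d := by
      by_contra hc
      push_neg at hc
      exact hne (eq_one_of_no_descent w hc)
    obtain ⟨d, hd⟩ := hex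
    refine ⟨d, hd, ?_⟩
    intro e he
    by_contra hne2
    -- two distinct descents d ≠ e; build u, v
    set u := w * Equiv.swap e.castSucc e.succ with hu
    set v := w * Equiv.swap d.castSucc d.succ with hv
    have hiu : invSetA n u = invSetA n w \ {(w e.castSucc, w e.succ)} := invSetA_mul_swap he
    have hiv : invSetA n v = invSetA n w \ {(w d.castSucc, w d.succ)} := invSetA_mul_swap hd
    have hpairs : (w e.castSucc, w e.succ) ≠ (w d.castSucc, w d.succ) := by
      intro hh
      have := w.injective (congrArg Prod.fst hh)
      exact hne2 (Fin.castSucc_injective n this)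
    have hlub : IsWeakLUBA n {u, v} w := by
      constructor
      · rintro x hx
        rcases hx with hx | hx <;> subst hx
        · rw [weakLEA, hiu]; exact Set.diff_subset
        · rw [weakLEA, hiv]; exact Set.diff_subset
      · intro z hz
        have h1 : weakLEA n u z := hz u (Or.inl rfl)
        have h2 : weakLEA n v z := hz v (Or.inr rfl)
        intro p hp
        by_cases hep : p = (w e.castSucc, w e.succ)
        · apply h2
          rw [hiv]
          exact ⟨hp, by rw [hep]; exact hpairs⟩
        · apply h1
          rw [hiu]
          exact ⟨hp, hep⟩
    rcases hirr u v hlub with huw | hvw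
    · have : (w e.castSucc, w e.succ) ∈ invSetA n u := by
        rw [huw]; exact descent_mem_invSetA he
      rw [hiu] at this
      exact this.2 rfl
    · have : (w d.castSucc, w d.succ) ∈ invSetA n v := by
        rw [hvw]; exact descent_mem_invSetA hd
      rw [hiv] at this
      exact this.2 rfl
  · rintro ⟨d, hd, huniq'⟩
    have huniq : ∀ e : Fin n, IsDescentA n w e → e = d := huniq'
    constructor
    · intro hw1
      rw [hw1] at hd
      exact absurd (Fin.castSucc_lt_succ : d.castSucc < d.succ) (not_lt_of_gt hd)
    · intro u v hlub
      by_contra hc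
      push_neg at hc
      obtain ⟨hune, hvne⟩ := hc
      have hu : weakLEA n u w := hlub.1 u (Or.inl rfl)
      have hv : weakLEA n v w := hlub.1 v (Or.inr rfl)
      have hab_u : (w d.castSucc, w d.succ) ∉ invSetA n u := fun hmem =>
        hune (key_lemma hd huniq u hu hmem)
      have hab_v : (w d.castSucc, w d.succ) ∉ invSetA n v := fun hmem =>
        hvne (key_lemma hd huniq v hv hmem)
      set z := w * Equiv.swap d.castSucc d.succ with hz
      have hiz : invSetA n z = invSetA n w \ {(w d.castSucc, w d.succ)} := invSetA_mul_swap hd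
      have hzu : weakLEA n u z := by
        intro p hp
        rw [hiz]
        exact ⟨hu hp, fun hh => hab_u (hh ▸ hp)⟩
      have hzv : weakLEA n v z := by
        intro p hp
        rw [hiz]
        exact ⟨hv hp, fun hh => hab_v (hh ▸ hp)⟩
      have hwz : weakLEA n w z := hlub.2 z (by rintro x (hx | hx) <;> subst hx <;> assumption)
      have := hwz (descent_mem_invSetA hd)
      rw [hiz] at this
      exact this.2 rfl
end

section
/- Let w ∈ 𝔖_{n+1}. For each descent d of w set a_d = w(d), b_d = w(d+1), X_d = w({d+1,…,n+1}) and R_d = ({b_d, b_d+1, …, a_d−1} ∩ X_d) ∪ {a_d+1, a_d+2, …, n+1}, and let w_d ∈ 𝔖_{n+1} be the unique permutation which is strictly increasing on {1,…,n+1−#R_d} and strictly increasing on {n+2−#R_d,…,n+1} and maps {n+2−#R_d,…,n+1} onto R_d. Then each w_d is join-irreducible, and the set {w_d : d a descent of w} is the canonical join representation of w in the right weak order on 𝔖_{n+1}. -/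
/-- `U` is the canonical join representation of `w` in the right weak order on `𝔖_{n+1}`. -/
def IsCanonicalJoinRepA (n : ℕ) (w : Equiv.Perm (Fin (n + 1)))
    (U : Set (Equiv.Perm (Fin (n + 1)))) : Prop :=
  U.Finite ∧ IsWeakLUBA n U w ∧ (∀ U' ⊂ U, ¬ IsWeakLUBA n U' w) ∧
    ∀ V, V.Finite → IsWeakLUBA n V w → (∀ V' ⊂ V, ¬ IsWeakLUBA n V' w) →
      ∀ u ∈ U, ∃ v ∈ V, weakLEA n u v

/-- The set `R_d = ([b_d, a_d−1] ∩ X_d) ∪ [a_d+1, n+1]`, where `a_d = w(d)`, `b_d = w(d+1)`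
and `X_d = w({d+1,…,n+1})` (everything written 0-indexed). -/
def RsetA (n : ℕ) (w : Equiv.Perm (Fin (n + 1))) (d : Fin n) : Set (Fin (n + 1)) :=
  ({v | w d.succ ≤ v ∧ v < w d.castSucc} ∩ ⇑w '' {j | (d : ℕ) < (j : ℕ)}) ∪
    {v | w d.castSucc < v}

/-- `u` is the permutation `w_d`: strictly increasing on the first `n+1−#R_d` positions and on
the remaining positions, mapping the latter block onto `R_d`. -/
def IsWdA (n : ℕ) (w : Equiv.Perm (Fin (n + 1))) (d : Fin n)
    (u : Equiv.Perm (Fin (n + 1))) : Prop :=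
  StrictMonoOn ⇑u {p : Fin (n + 1) | (p : ℕ) < n + 1 - (RsetA n w d).ncard} ∧
  StrictMonoOn ⇑u {p : Fin (n + 1) | n + 1 - (RsetA n w d).ncard ≤ (p : ℕ)} ∧
  ⇑u '' {p : Fin (n + 1) | n + 1 - (RsetA n w d).ncard ≤ (p : ℕ)} = RsetA n w d

lemma perm_eq_of_invSetA_eq {n : ℕ} {u v : Equiv.Perm (Fin (n + 1))}
    (h : invSetA n u = invSetA n v) : u = v := by
  have key : StrictMono (fun x => u.symm (v x)) := by
    intro x y hxy
    rcases lt_trichotomy (v x) (v y) with hv | hv | hv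
    · by_contra hc
      push_neg at hc
      have hne : u.symm (v y) ≠ u.symm (v x) := by
        simp only [ne_eq, EmbeddingLike.apply_eq_iff_eq]
        exact hxy.ne'
      have hlt : u.symm (v y) < u.symm (v x) := lt_of_le_of_ne hc hne
      have : (v y, v x) ∈ invSetA n u := ⟨hv, hlt⟩
      rw [h] at this
      obtain ⟨_, h2⟩ := this
      simp at h2
      omega
    · exact absurd (v.injective hv) hxy.ne
    · have : (v x, v y) ∈ invSetA n v := ⟨hv, by simp; exact hxy⟩
      rw [← h] at this
      exact this.2
  have : (fun x => u.symm (v x)) = id :=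
    (key.range_inj strictMono_id).1 (by
      rw [Set.range_id]
      exact Set.range_comp u.symm v ▸ by
        simp [Set.range_comp, Equiv.range_eq_univ, Set.image_univ])
  ext x
  have hx := congrFun this x
  simp only [id_eq] at hx
  exact congrArg Fin.val (calc u x = u (u.symm (v x)) := by rw [hx]
    _ = v x := u.apply_symm_apply _)

section
variable {n : ℕ} {w : Equiv.Perm (Fin (n + 1))} {d : Fin n}

lemma mem_RsetA_iff {x : Fin (n+1)} :
    x ∈ RsetA n w d ↔
      (w d.succ ≤ x ∧ x < w d.castSucc ∧ (d : ℕ) < (w.symm x : ℕ)) ∨ w d.castSucc < x := by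
  unfold RsetA
  constructor
  · rintro (⟨⟨h1, h2⟩, ⟨j, hj, rfl⟩⟩ | h)
    · exact Or.inl ⟨h1, h2, by simpa using hj⟩
    · exact Or.inr h
  · rintro (⟨h1, h2, h3⟩ | h)
    · exact Or.inl ⟨⟨h1, h2⟩, ⟨w.symm x, h3, by simp⟩⟩
    · exact Or.inr h

lemma bd_mem_RsetA (hd : IsDescentA n w d) : w d.succ ∈ RsetA n w d := by
  rw [mem_RsetA_iff]
  exact Or.inl ⟨le_refl _, hd, by simp [Fin.lt_iff_val_lt_val]⟩

lemma ad_not_mem_RsetA : w d.castSucc ∉ RsetA n w d := by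
  rw [mem_RsetA_iff]
  rintro (⟨_, h2, _⟩ | h)
  · exact lt_irrefl _ h2
  · exact lt_irrefl _ h

lemma mem_RsetA_ge_bd {x : Fin (n+1)} (hd : IsDescentA n w d) (hx : x ∈ RsetA n w d) :
    w d.succ ≤ x := by
  rw [mem_RsetA_iff] at hx
  rcases hx with ⟨h1, _, _⟩ | h
  · exact h1
  · exact le_of_lt (lt_trans hd h)

lemma ncard_RsetA_pos (hd : IsDescentA n w d) : 1 ≤ (RsetA n w d).ncard := by
  have : (RsetA n w d).Nonempty := ⟨_, bd_mem_RsetA hd⟩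
  rwa [← Set.ncard_pos (Set.toFinite _)] at this

lemma ncard_RsetA_le (hd : IsDescentA n w d) : (RsetA n w d).ncard ≤ n := by
  have h1 : RsetA n w d ⊂ Set.univ := by
    rw [Set.ssubset_univ_iff]
    intro h
    exact ad_not_mem_RsetA (h ▸ Set.mem_univ (w d.castSucc))
  have := Set.ncard_lt_ncard h1 Set.finite_univ
  rwa [Set.ncard_univ, Nat.card_eq_fintype_card, Fintype.card_fin, Nat.lt_succ_iff] at this


lemma mem_RsetA_iff_symm {u : Equiv.Perm (Fin (n+1))} (hu : IsWdA n w d u) {x : Fin (n+1)} :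
    x ∈ RsetA n w d ↔ n + 1 - (RsetA n w d).ncard ≤ (u.symm x : ℕ) := by
  constructor
  · intro hx
    rw [← hu.2.2] at hx
    obtain ⟨p, hp, hpx⟩ := hx
    have : u.symm x = p := by rw [← hpx]; simp
    rw [this]
    exact hp
  · intro h
    have : x ∈ ⇑u '' {p : Fin (n + 1) | n + 1 - (RsetA n w d).ncard ≤ (p : ℕ)} :=
      ⟨u.symm x, h, by simp⟩
    rwa [hu.2.2] at this

lemma invSetA_IsWdA {u : Equiv.Perm (Fin (n+1))} (hu : IsWdA n w d u) :
    invSetA n u = {p | p.2 < p.1 ∧ p.2 ∈ RsetA n w d ∧ p.1 ∉ RsetA n w d} := by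
  ext ⟨a, b⟩
  simp only [invSetA, Set.mem_setOf_eq]
  constructor
  · rintro ⟨hba, hinv⟩
    refine ⟨hba, ?_⟩
    by_cases ha : a ∈ RsetA n w d <;> by_cases hb : b ∈ RsetA n w d
    · -- both in R : second block, mono gives a < b, contradiction
      exfalso
      have h1 := (mem_RsetA_iff_symm hu).1 ha
      have h2 := (mem_RsetA_iff_symm hu).1 hb
      have := hu.2.1 h1 h2 hinv
      simp only [Equiv.apply_symm_apply] at this
      exact absurd hba (not_lt.2 this.le)
    · -- a ∈ R, b ∉ R : symm a in second block, symm b in first block: symm b < symm a contra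
      exfalso
      have h1 := (mem_RsetA_iff_symm hu).1 ha
      have h2 : (u.symm b : ℕ) < n + 1 - (RsetA n w d).ncard := by
        by_contra hc
        exact hb ((mem_RsetA_iff_symm hu).2 (not_lt.1 hc))
      have : (u.symm a : ℕ) < (u.symm b : ℕ) := hinv
      omega
    · exact ⟨hb, ha⟩
    · -- both not in R : first block, mono gives a < b, contra
      exfalso
      have h1 : (u.symm a : ℕ) < n + 1 - (RsetA n w d).ncard := by
        by_contra hc
        exact ha ((mem_RsetA_iff_symm hu).2 (not_lt.1 hc))
      have h2 : (u.symm b : ℕ) < n + 1 - (RsetA n w d).ncard := by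
        by_contra hc
        exact hb ((mem_RsetA_iff_symm hu).2 (not_lt.1 hc))
      have := hu.1 h1 h2 hinv
      simp only [Equiv.apply_symm_apply] at this
      exact absurd hba (not_lt.2 this.le)
  · rintro ⟨hba, hb, ha⟩
    refine ⟨hba, ?_⟩
    have h1 : (u.symm a : ℕ) < n + 1 - (RsetA n w d).ncard := by
      by_contra hc
      exact ha ((mem_RsetA_iff_symm hu).2 (not_lt.1 hc))
    have h2 := (mem_RsetA_iff_symm hu).1 hb
    exact Fin.lt_iff_val_lt_val.2 (by omega)

lemma fd_le_w (hd : IsDescentA n w d) {u : Equiv.Perm (Fin (n+1))} (hu : IsWdA n w d u) :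
    invSetA n u ⊆ invSetA n w := by
  rw [invSetA_IsWdA hu]
  rintro ⟨a, b⟩ ⟨hba, hb, ha⟩
  refine ⟨hba, Fin.lt_iff_val_lt_val.2 ?_⟩
  rw [mem_RsetA_iff] at hb ha
  push_neg at ha
  obtain ⟨ha1, ha2⟩ := ha
  rcases hb with ⟨hb1, hb2, hb3⟩ | hb'
  · rcases eq_or_lt_of_le ha2 with heq | hlt
    · rw [heq, Equiv.symm_apply_apply]
      simpa using hb3
    · have hba' : w d.succ ≤ a := le_trans hb1 hba.le
      have := ha1 hba' hlt
      omega
  · exfalso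
    have : w d.castSucc < a := lt_trans hb' hba
    exact absurd ha2 (not_le.2 this)

lemma key_lemma_s6 (hd : IsDescentA n w d) {fd u : Equiv.Perm (Fin (n+1))}
    (hfd : IsWdA n w d fd) (hu : invSetA n u ⊆ invSetA n w)
    (hin : (w d.castSucc, w d.succ) ∈ invSetA n u) :
    invSetA n fd ⊆ invSetA n u := by
  rw [invSetA_IsWdA hfd]
  rintro ⟨a, b⟩ ⟨hba, hb, ha⟩
  dsimp only at hba hb ha
  rw [mem_RsetA_iff] at hb ha
  push_neg at ha
  obtain ⟨ha1, ha2⟩ := ha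
  rcases hb with ⟨hb1, hb2, hb3⟩ | hb'
  swap
  · exact absurd ha2 (not_le.2 (lt_trans hb' hba))
  have step1 : (w d.castSucc, b) ∈ invSetA n u := by
    rcases eq_or_lt_of_le hb1 with heq | hlt
    · rw [← heq]; exact hin
    · refine ⟨hb2, ?_⟩
      by_contra hcon
      push_neg at hcon
      have hne : u.symm b ≠ u.symm (w d.castSucc) := by
        simp only [ne_eq, EmbeddingLike.apply_eq_iff_eq]
        exact hb2.ne
      have : u.symm b < u.symm (w d.succ) := lt_of_le_of_lt (lt_of_le_of_ne hcon hne).le hin.2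
      have hbw : (b, w d.succ) ∈ invSetA n w := hu ⟨hlt, this⟩
      have := hbw.2
      rw [Equiv.symm_apply_apply] at this
      have hval : (w.symm b : ℕ) < (d.succ : ℕ) := this
      simp only [Fin.val_succ] at hval
      omega
  rcases eq_or_lt_of_le ha2 with heq | hlt
  · rw [heq]; exact step1
  · refine ⟨hba, ?_⟩
    by_contra hcon
    push_neg at hcon
    have hne : u.symm b ≠ u.symm a := by
      simp only [ne_eq, EmbeddingLike.apply_eq_iff_eq]
      exact hba.ne
    have : u.symm (w d.castSucc) < u.symm a :=
      lt_of_lt_of_le step1.2 (lt_of_le_of_ne hcon hne).le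
    have haw : (w d.castSucc, a) ∈ invSetA n w := hu ⟨hlt, this⟩
    have := haw.2
    rw [Equiv.symm_apply_apply] at this
    have hval : (d.castSucc : ℕ) < (w.symm a : ℕ) := this
    have hposa := ha1 (le_trans hb1 hba.le) hlt
    simp only [Fin.coe_castSucc] at hval
    omega

lemma dist_lemma {d d0 : Fin n} (hd : IsDescentA n w d) (hd0 : IsDescentA n w d0)
    (hne : d ≠ d0) {u : Equiv.Perm (Fin (n+1))} (hu : IsWdA n w d u) :
    (w d0.castSucc, w d0.succ) ∉ invSetA n u := by
  rw [invSetA_IsWdA hu]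
  rintro ⟨hba, hb, ha⟩
  dsimp only at hba hb ha
  rw [mem_RsetA_iff] at hb ha
  push_neg at ha
  obtain ⟨ha1, ha2⟩ := ha
  have hvne : (d : ℕ) ≠ (d0 : ℕ) := fun h => hne (Fin.ext h)
  rcases hb with ⟨hb1, hb2, hb3⟩ | hb'
  · rw [Equiv.symm_apply_apply] at hb3
    simp only [Fin.val_succ] at hb3
    rcases eq_or_lt_of_le ha2 with heq | hlt
    · have := w.injective heq
      have : (d0 : ℕ) = (d : ℕ) := by
        have h2 := congrArg Fin.val this
        simpa using h2
      omega
    · have := ha1 (le_trans hb1 hba.le) hlt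
      rw [Equiv.symm_apply_apply] at this
      simp only [Fin.coe_castSucc] at this
      omega
  · exact absurd ha2 (not_le.2 (lt_trans hb' hba))

lemma swap_inv_subset {u σ : Equiv.Perm (Fin (n+1))} {i j : Fin (n+1)}
    (hij : (j : ℕ) = (i : ℕ) + 1) (hus : invSetA n u ⊆ invSetA n σ)
    (hnot : (σ i, σ j) ∉ invSetA n u) :
    invSetA n u ⊆ invSetA n (σ * Equiv.swap i j) := by
  rintro ⟨a, b⟩ hab
  obtain ⟨hba, hltu⟩ := hab
  dsimp only at hba hltu
  refine ⟨hba, ?_⟩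
  have hσ : σ.symm a < σ.symm b := (hus (show (a,b) ∈ invSetA n u from ⟨hba, hltu⟩)).2
  have hz : ∀ x : Fin (n+1), (σ * Equiv.swap i j).symm x = Equiv.swap i j (σ.symm x) := by
    intro x
    simp [Equiv.Perm.mul_def, Equiv.symm_trans_apply]
  rw [hz, hz]
  set p := σ.symm a with hp
  set q := σ.symm b with hq
  have hpq : p < q := hσ
  have hexc : ¬ (p = i ∧ q = j) := by
    rintro ⟨h1, h2⟩
    apply hnot
    have ha' : σ i = a := by rw [← h1, hp, Equiv.apply_symm_apply]
    have hb' : σ j = b := by rw [← h2, hq, Equiv.apply_symm_apply]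
    rw [ha', hb']
    exact (show (a,b) ∈ invSetA n u from ⟨hba, hltu⟩)
  by_cases hpi : p = i
  · have hqj : q ≠ j := fun h => hexc ⟨hpi, h⟩
    have hqi : q ≠ i := fun h => (hpq.ne (hpi.trans h.symm))
    rw [hpi, Equiv.swap_apply_left, Equiv.swap_apply_of_ne_of_ne hqi hqj]
    have : (i : ℕ) < (q : ℕ) := by rw [← hpi]; exact hpq
    have : (j : ℕ) < (q : ℕ) := by
      have hne : (q : ℕ) ≠ (j : ℕ) := fun h => hqj (Fin.ext h)
      omega
    exact Fin.lt_iff_val_lt_val.2 this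
  · by_cases hpj : p = j
    · have hqj : q ≠ j := fun h => (hpq.ne (hpj.trans h.symm))
      have hqi : q ≠ i := by
        intro h
        have : (q : ℕ) < (p : ℕ) := by rw [h, hpj]; omega
        have := Fin.lt_iff_val_lt_val.1 hpq
        omega
      rw [hpj, Equiv.swap_apply_right, Equiv.swap_apply_of_ne_of_ne hqi hqj]
      have : (j : ℕ) < (q : ℕ) := by rw [← hpj]; exact hpq
      exact Fin.lt_iff_val_lt_val.2 (by omega)
    · by_cases hqi : q = i
      · rw [hqi, Equiv.swap_apply_left, Equiv.swap_apply_of_ne_of_ne hpi hpj]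
        have : (p : ℕ) < (i : ℕ) := by rw [← hqi]; exact hpq
        exact Fin.lt_iff_val_lt_val.2 (by omega)
      · by_cases hqj : q = j
        · rw [hqj, Equiv.swap_apply_right, Equiv.swap_apply_of_ne_of_ne hpi hpj]
          have hpj' : (p : ℕ) ≠ (j : ℕ) := fun h => hpj (Fin.ext h)
          have : (p : ℕ) < (j : ℕ) := by rw [← hqj]; exact hpq
          exact Fin.lt_iff_val_lt_val.2 (by omega)
        · rw [Equiv.swap_apply_of_ne_of_ne hpi hpj, Equiv.swap_apply_of_ne_of_ne hqi hqj]
          exact hpq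

lemma swap_remove_mem {σ : Equiv.Perm (Fin (n+1))} {i j : Fin (n+1)}
    (hij : (j : ℕ) = (i : ℕ) + 1) (hd : σ j < σ i) :
    (σ i, σ j) ∈ invSetA n σ ∧ (σ i, σ j) ∉ invSetA n (σ * Equiv.swap i j) := by
  constructor
  · exact ⟨hd, by
      rw [Equiv.symm_apply_apply, Equiv.symm_apply_apply]
      exact Fin.lt_iff_val_lt_val.2 (by omega)⟩
  · rintro ⟨-, hlt⟩
    have hz : ∀ x : Fin (n+1), (σ * Equiv.swap i j).symm x = Equiv.swap i j (σ.symm x) := by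
      intro x
      simp [Equiv.Perm.mul_def, Equiv.symm_trans_apply]
    rw [hz, hz, Equiv.symm_apply_apply, Equiv.symm_apply_apply, Equiv.swap_apply_left,
      Equiv.swap_apply_right] at hlt
    have := Fin.lt_iff_val_lt_val.1 hlt
    omega

lemma gt_ad_mem_RsetA {x : Fin (n+1)} (hx : w d.castSucc < x) : x ∈ RsetA n w d :=
  mem_RsetA_iff.2 (Or.inr hx)

lemma fd_boundary (hd : IsDescentA n w d) {u : Equiv.Perm (Fin (n+1))} (hu : IsWdA n w d u) :
    ∃ p0 q0 : Fin (n+1), (q0 : ℕ) = (p0 : ℕ) + 1 ∧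
      u p0 = w d.castSucc ∧ u q0 = w d.succ := by
  have hm1 := ncard_RsetA_pos hd
  have hmn := ncard_RsetA_le (w := w) (d := d) hd
  set m := (RsetA n w d).ncard with hm
  set p0 : Fin (n+1) := ⟨n - m, by omega⟩ with hp0
  set q0 : Fin (n+1) := ⟨n - m + 1, by omega⟩ with hq0
  have hq0B : n + 1 - m ≤ (q0 : ℕ) := by simp [hq0]; omega
  have hp0A : (p0 : ℕ) < n + 1 - m := by simp [hp0]; omega
  refine ⟨p0, q0, rfl, ?_, ?_⟩
  · -- u p0 = a_d
    have hpA : (u.symm (w d.castSucc) : ℕ) < n + 1 - m := by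
      by_contra hc
      exact ad_not_mem_RsetA ((mem_RsetA_iff_symm hu).2 (not_lt.1 hc))
    have hple : (u.symm (w d.castSucc) : ℕ) ≤ (p0 : ℕ) := by simp [hp0]; omega
    rcases eq_or_lt_of_le hple with heq | hlt
    · have : u.symm (w d.castSucc) = p0 := Fin.ext heq
      rw [← this, Equiv.apply_symm_apply]
    · exfalso
      have hmono := hu.1 (show u.symm (w d.castSucc) ∈ _ from hpA) hp0A
          (Fin.lt_iff_val_lt_val.2 hlt)
      rw [Equiv.apply_symm_apply] at hmono
      -- u p0 > a_d hence u p0 ∈ R, but p0 in first block so u p0 ∉ R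
      have hmem : u p0 ∈ RsetA n w d := gt_ad_mem_RsetA hmono
      have := (mem_RsetA_iff_symm hu).1 hmem
      rw [Equiv.symm_apply_apply] at this
      omega
  · -- u q0 = b_d
    have hbB : n + 1 - m ≤ (u.symm (w d.succ) : ℕ) :=
      (mem_RsetA_iff_symm hu).1 (bd_mem_RsetA hd)
    have hqle : (q0 : ℕ) ≤ (u.symm (w d.succ) : ℕ) := by simp [hq0]; omega
    rcases eq_or_lt_of_le hqle with heq | hlt
    · have : u.symm (w d.succ) = q0 := Fin.ext heq.symm
      rw [← this, Equiv.apply_symm_apply]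
    · exfalso
      have hmono := hu.2.1 (show q0 ∈ _ from hq0B) (show u.symm (w d.succ) ∈ _ from hbB)
          (Fin.lt_iff_val_lt_val.2 hlt)
      rw [Equiv.apply_symm_apply] at hmono
      -- u q0 < b_d, but u q0 ∈ R so b_d ≤ u q0
      have hmem : u q0 ∈ RsetA n w d := by
        rw [mem_RsetA_iff_symm hu, Equiv.symm_apply_apply]
        exact hq0B
      exact absurd (mem_RsetA_ge_bd hd hmem) (not_le.2 hmono)

end

section
variable {n : ℕ}

lemma exists_mem_inv {V : Set (Equiv.Perm (Fin (n+1)))} {σ : Equiv.Perm (Fin (n+1))}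
    (hlub : IsWeakLUBA n V σ) {i j : Fin (n+1)} (hij : (j : ℕ) = (i : ℕ) + 1)
    (hd : σ j < σ i) : ∃ v ∈ V, (σ i, σ j) ∈ invSetA n v := by
  by_contra hc
  push_neg at hc
  have hall : ∀ x ∈ V, weakLEA n x (σ * Equiv.swap i j) := fun x hx =>
    swap_inv_subset hij (hlub.1 x hx) (hc x hx)
  have h2 := hlub.2 _ hall
  exact (swap_remove_mem hij hd).2 (h2 (swap_remove_mem hij hd).1)

lemma gen_lemma (w : Equiv.Perm (Fin (n+1))) (f : Fin n → Equiv.Perm (Fin (n + 1)))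
    (hf : ∀ d, IsDescentA n w d → IsWdA n w d (f d)) (z : Equiv.Perm (Fin (n+1)))
    (hz : ∀ d, IsDescentA n w d → invSetA n (f d) ⊆ invSetA n z) :
    invSetA n w ⊆ invSetA n z := by
  have H : ∀ k : ℕ, ∀ a b : Fin (n+1), (a : ℕ) - (b : ℕ) ≤ k → (a, b) ∈ invSetA n w →
      (a, b) ∈ invSetA n z := by
    intro k
    induction k with
    | zero =>
      rintro a b hab ⟨hba, -⟩
      dsimp only at hba
      have := Fin.lt_iff_val_lt_val.1 hba
      omega
    | succ k ih =>
      rintro a b hab ⟨hba, hpos⟩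
      dsimp only at hba hpos
      by_cases hc : ∃ c : Fin (n+1), b < c ∧ c < a ∧ (a, c) ∈ invSetA n w ∧
          (c, b) ∈ invSetA n w
      · obtain ⟨c, hbc, hca, h1, h2⟩ := hc
        have hbcv := Fin.lt_iff_val_lt_val.1 hbc
        have hcav := Fin.lt_iff_val_lt_val.1 hca
        have g1 := ih a c (by omega) h1
        have g2 := ih c b (by omega) h2
        exact ⟨hba, lt_trans g1.2 g2.2⟩
      · push_neg at hc
        set T : Finset (Fin (n+1)) :=
          Finset.univ.filter
            (fun k => w.symm a ≤ k ∧ (k : ℕ) < (w.symm b : ℕ) ∧ a ≤ w k) with hT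
        have hiT : w.symm a ∈ T := by
          simp only [hT, Finset.mem_filter, Finset.mem_univ, true_and]
          exact ⟨le_refl _, Fin.lt_iff_val_lt_val.1 hpos, by
            rw [Equiv.apply_symm_apply]⟩
        have hTne : T.Nonempty := ⟨_, hiT⟩
        set d' := T.max' hTne with hd'
        have hd'T : d' ∈ T := T.max'_mem hTne
        simp only [hT, Finset.mem_filter, Finset.mem_univ, true_and] at hd'T
        obtain ⟨hd1, hd2, hd3⟩ := hd'T
        have hd'n : (d' : ℕ) < n := by
          have := (w.symm b).isLt
          omega
        set d : Fin n := ⟨(d' : ℕ), hd'n⟩ with hdd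
        have hcastd : d.castSucc = d' := by
          apply Fin.ext
          simp [hdd]
        have hsuccd : (d.succ : ℕ) = (d' : ℕ) + 1 := by simp [hdd]
        have hcb : w d.succ ≤ b := by
          rcases eq_or_lt_of_le (Nat.succ_le_of_lt hd2) with heq | hlt
          · have : d.succ = w.symm b := Fin.ext (by omega)
            rw [this, Equiv.apply_symm_apply]
          · have hnotin : d.succ ∉ T := by
              intro hmem
              have := T.le_max' _ hmem
              rw [← hd'] at this
              have := Fin.le_iff_val_le_val.1 this
              omega
            simp only [hT, Finset.mem_filter, Finset.mem_univ, true_and] at hnotin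
            push_neg at hnotin
            have hca : w d.succ < a :=
              hnotin (le_trans hd1 (Fin.le_iff_val_le_val.2 (by omega))) (by omega)
            by_contra hbc
            push_neg at hbc
            refine hc (w d.succ) hbc hca ⟨hca, ?_⟩ ⟨hbc, ?_⟩
            · dsimp only
              rw [Equiv.symm_apply_apply]
              exact Fin.lt_iff_val_lt_val.2 (by
                have := Fin.le_iff_val_le_val.1 hd1
                omega)
            · dsimp only
              rw [Equiv.symm_apply_apply]
              exact Fin.lt_iff_val_lt_val.2 (by omega)
        have hdesc : IsDescentA n w d := by
          unfold IsDescentA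
          rw [hcastd]
          exact lt_of_le_of_lt hcb (lt_of_lt_of_le hba hd3)
        apply hz d hdesc
        rw [invSetA_IsWdA (hf d hdesc)]
        show b < a ∧ b ∈ RsetA n w d ∧ a ∉ RsetA n w d
        refine ⟨hba, ?_, ?_⟩
        · rw [mem_RsetA_iff]
          left
          refine ⟨hcb, by rw [hcastd]; exact lt_of_lt_of_le hba hd3, ?_⟩
          simp only [hdd]
          omega
        · intro har
          rw [mem_RsetA_iff] at har
          rcases har with ⟨h1, h2, h3⟩ | h'
          · have hle := Fin.le_iff_val_le_val.1 hd1
            have hdval : (d : ℕ) = (d' : ℕ) := by simp [hdd]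
            rw [hdval] at h3
            omega
          · rw [hcastd] at h'
            exact absurd hd3 (not_le.2 h')
  rintro ⟨a, b⟩ hp
  exact H ((a : ℕ) - (b : ℕ)) a b le_rfl hp

end

/-- Let `w ∈ 𝔖_{n+1}` and, for each descent `d` of `w`, let `w_d` be the unique permutation
which is strictly increasing on `{1,…,n+1−#R_d}` and on `{n+2−#R_d,…,n+1}` and maps the latter
onto `R_d`.  Then each `w_d` is join-irreducible and `{w_d : d a descent of w}` is the
canonical join representation of `w` in the right weak order. -/
theorem canonical_join_rep_A (n : ℕ) (hn : 1 ≤ n) (w : Equiv.Perm (Fin (n + 1)))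
    (f : Fin n → Equiv.Perm (Fin (n + 1)))
    (hf : ∀ d, IsDescentA n w d → IsWdA n w d (f d)) :
    (∀ d, IsDescentA n w d → IsJoinIrreducibleA n (f d)) ∧
    IsCanonicalJoinRepA n w {x | ∃ d, IsDescentA n w d ∧ x = f d} := by
  constructor
  · -- join-irreducibility
    intro d hd
    have hwd := hf d hd
    have hmem : (w d.castSucc, w d.succ) ∈ invSetA n (f d) := by
      rw [invSetA_IsWdA hwd]
      exact ⟨hd, bd_mem_RsetA hd, ad_not_mem_RsetA⟩
    constructor
    · intro h1
      rw [h1] at hmem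
      obtain ⟨h2, h3⟩ := hmem
      simp at h3
      exact absurd h3 (not_lt.2 h2.le)
    · intro u v hlub
      by_cases hu1 : (w d.castSucc, w d.succ) ∈ invSetA n u
      · left
        apply perm_eq_of_invSetA_eq
        apply Set.Subset.antisymm
        · exact hlub.1 u (Set.mem_insert _ _)
        · exact key_lemma_s6 hd hwd
            (Set.Subset.trans (hlub.1 u (Set.mem_insert _ _)) (fd_le_w hd hwd)) hu1
      · by_cases hv1 : (w d.castSucc, w d.succ) ∈ invSetA n v
        · right
          apply perm_eq_of_invSetA_eq
          apply Set.Subset.antisymm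
          · exact hlub.1 v (Set.mem_insert_of_mem _ rfl)
          · exact key_lemma_s6 hd hwd
              (Set.Subset.trans (hlub.1 v (Set.mem_insert_of_mem _ rfl)) (fd_le_w hd hwd)) hv1
        · exfalso
          have hm1 := ncard_RsetA_pos hd
          have hmn := ncard_RsetA_le (w := w) (d := d) hd
          obtain ⟨p0, q0, hpq, hb1, hb2⟩ := fd_boundary hd hwd
          have hdesc' : (f d) q0 < (f d) p0 := by rw [hb1, hb2]; exact hd
          have hnu : ((f d) p0, (f d) q0) ∉ invSetA n u := by rw [hb1, hb2]; exact hu1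
          have hnv : ((f d) p0, (f d) q0) ∉ invSetA n v := by rw [hb1, hb2]; exact hv1
          have hall : ∀ x ∈ ({u, v} : Set (Equiv.Perm (Fin (n+1)))),
              weakLEA n x ((f d) * Equiv.swap p0 q0) := by
            rintro x hx
            rcases Set.mem_insert_iff.1 hx with rfl | hx
            · exact swap_inv_subset hpq (hlub.1 x (Set.mem_insert _ _)) hnu
            · rw [Set.mem_singleton_iff.1 hx]
              exact swap_inv_subset hpq (hlub.1 v (Set.mem_insert_of_mem _ rfl)) hnv
          have h2 := hlub.2 _ hall
          exact (swap_remove_mem hpq hdesc').2 (h2 (swap_remove_mem hpq hdesc').1)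
  · refine ⟨?_, ⟨?_, ?_⟩, ?_, ?_⟩
    · exact Set.Finite.subset (Set.finite_range f) (by rintro x ⟨d, -, rfl⟩; exact ⟨d, rfl⟩)
    · rintro x ⟨d, hd, rfl⟩
      exact fd_le_w hd (hf d hd)
    · intro z hz
      exact gen_lemma w f hf z (fun d hd => hz (f d) ⟨d, hd, rfl⟩)
    · intro U' hU' hlub'
      obtain ⟨x, hxU, hxU'⟩ := Set.exists_of_ssubset hU'
      obtain ⟨d0, hd0, rfl⟩ := hxU
      obtain ⟨v, hvU', hvmem⟩ :=
        exists_mem_inv (i := d0.castSucc) (j := d0.succ) hlub' (by simp) hd0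
      obtain ⟨d, hd, rfl⟩ := hU'.1 hvU'
      have hne : d ≠ d0 := by
        rintro rfl
        exact hxU' hvU'
      exact dist_lemma hd hd0 hne (hf d hd) hvmem
    · intro V hVfin hVlub hVmin u hu
      obtain ⟨d0, hd0, rfl⟩ := hu
      obtain ⟨v, hv, hmem⟩ :=
        exists_mem_inv (i := d0.castSucc) (j := d0.succ) hVlub (by simp) hd0
      exact ⟨v, hv, key_lemma_s6 hd0 (hf d0 hd0) (hVlub.1 v hv) hmem⟩
end

section
/- Let w ∈ 𝔖_{n+1} and let d be a descent of w. Set a_d = w(d), b_d = w(d+1), X_d = w({d+1,…,n+1}), R_d = ({b_d,…,a_d−1} ∩ X_d) ∪ {a_d+1,…,n+1}, l_d = n+1−#R_d, and let w_d ∈ 𝔖_{n+1} be the unique permutation strictly increasing on {1,…,l_d} and on {l_d+1,…,n+1} with w_d({l_d+1,…,n+1}) = R_d. Then: (1) inv(w_d) ⊆ inv(w), i.e., w_d ≤ w in the right weak order; (2) w_d has exactly one descent, namely l_d; and (3) w_d s_{l_d} w_d⁻¹ equals the transposition (a_d b_d), which equals w s_d w⁻¹, where s_i denotes the transposition (i,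 i+1). -/
/-- Let `w ∈ 𝔖_{n+1}`, let `d` be a descent of `w`, and let `w_d` be the permutation attached
to `d` as in the canonical join representation (with `l_d = n+1−#R_d`).  Then:
(1) `inv(w_d) ⊆ inv(w)`, i.e. `w_d ≤ w` in the right weak order;
(2) `w_d` has exactly one descent, namely `l_d`;
(3) `w_d s_{l_d} w_d⁻¹` is the transposition `(a_d b_d)`, which equals `w s_d w⁻¹`.
(A 0-indexed descent position `d'` corresponds to the 1-indexed position `d' + 1`.) -/
theorem wd_properties_A (n : ℕ) (hn : 1 ≤ n) (w : Equiv.Perm (Fin (n + 1)))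
    (d : Fin n) (hd : IsDescentA n w d)
    (u : Equiv.Perm (Fin (n + 1))) (hu : IsWdA n w d u) :
    invSetA n u ⊆ invSetA n w ∧
    (∃! d' : Fin n, IsDescentA n u d') ∧
    (∀ d' : Fin n, IsDescentA n u d' →
      (d' : ℕ) + 1 = n + 1 - (RsetA n w d).ncard ∧
      u * Equiv.swap d'.castSucc d'.succ * u⁻¹
        = Equiv.swap (w d.castSucc) (w d.succ) ∧
      Equiv.swap (w d.castSucc) (w d.succ)
        = w * Equiv.swap d.castSucc d.succ * w⁻¹) := by
  obtain ⟨h1, h2, h3⟩ := hu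
  set R := RsetA n w d with hRdef
  set a := w d.castSucc with ha
  set b := w d.succ with hb
  have hba : b < a := hd
  set l : ℕ := n + 1 - R.ncard with hl
  -- basic membership facts
  have hbR : b ∈ R := by
    left
    refine ⟨⟨le_refl _, hba⟩, ⟨d.succ, ?_, rfl⟩⟩
    simp [Fin.val_succ]
  have haR : a ∉ R := by
    rintro (⟨⟨_, hlt⟩, _⟩ | hlt) <;> exact absurd hlt (lt_irrefl a)
  have hRge : ∀ v ∈ R, b ≤ v := by
    rintro v (⟨⟨hle, _⟩, _⟩ | hgt)
    · exact hle
    · exact le_of_lt (hba.trans hgt)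
  have hgtR : ∀ v : Fin (n+1), a < v → v ∈ R := fun v hv => Or.inr hv
  have hleA : ∀ v : Fin (n+1), v ∉ R → v ≤ a := by
    intro v hv
    by_contra h
    exact hv (hgtR v (lt_of_not_ge h))
  -- cardinality facts
  have hRfin : R.Finite := Set.toFinite R
  have hRlt : R.ncard < n + 1 := by
    have hsub : R ⊂ Set.univ := ⟨Set.subset_univ R, fun h => haR (h (Set.mem_univ a))⟩
    have := Set.ncard_lt_ncard hsub (Set.finite_univ)
    simpa [Set.ncard_univ] using this
  have hRpos : 0 < R.ncard := (Set.ncard_pos hRfin).mpr ⟨b, hbR⟩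
  have hl1 : 1 ≤ l := by omega
  have hln : l ≤ n := by omega
  -- membership characterization
  have hmem : ∀ x : Fin (n+1), x ∈ R ↔ l ≤ ((u.symm x : Fin (n+1)) : ℕ) := by
    intro x
    rw [← h3, Equiv.image_eq_preimage_symm]
    rfl
  -- the two key values
  set p0 : Fin (n+1) := ⟨l - 1, by omega⟩ with hp0
  set p1 : Fin (n+1) := ⟨l, by omega⟩ with hp1
  have hup0 : u p0 = a := by
    have hnot : a ∉ ⇑u '' {p : Fin (n+1) | l ≤ (p : ℕ)} := by rw [h3]; exact haR
    have hlt : ((u.symm a : Fin (n+1)) : ℕ) < l := by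
      by_contra h
      exact hnot ⟨u.symm a, le_of_not_gt h, u.apply_symm_apply a⟩
    have hup0R : u p0 ∉ R := by
      rw [hmem, Equiv.symm_apply_apply]
      simp only [hp0]
      omega
    have hle : u p0 ≤ a := hleA _ hup0R
    have : u (u.symm a) ≤ u p0 := by
      rcases lt_or_eq_of_le (Nat.le_sub_one_of_lt hlt : ((u.symm a : Fin (n+1)) : ℕ) ≤ l - 1) with h | h
      · exact le_of_lt (h1 (by simp only [Set.mem_setOf_eq]; omega)
          (by simp only [Set.mem_setOf_eq, hp0]; omega) (by rw [Fin.lt_def]; exact h))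
      · have : u.symm a = p0 := Fin.ext (by simpa using h)
        rw [this]
    rw [u.apply_symm_apply] at this
    exact le_antisymm hle this
  have hup1 : u p1 = b := by
    have hbmem : b ∈ ⇑u '' {p : Fin (n+1) | l ≤ (p : ℕ)} := by rw [h3]; exact hbR
    have hge : l ≤ ((u.symm b : Fin (n+1)) : ℕ) := (hmem b).mp hbR
    have hup1R : u p1 ∈ R := by
      rw [hmem, Equiv.symm_apply_apply]
    have hble : b ≤ u p1 := hRge _ hup1R
    have : u p1 ≤ u (u.symm b) := by
      rcases lt_or_eq_of_le hge with h | h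
      · exact le_of_lt (h2 (by simp [hp1]) (by simp only [Set.mem_setOf_eq]; omega)
          (by rw [Fin.lt_def]; exact h))
      · have : u.symm b = p1 := Fin.ext (by simpa using h.symm)
        rw [this]
    rw [u.apply_symm_apply] at this
    exact le_antisymm this hble
  -- the descent of u
  set dl : Fin n := ⟨l - 1, by omega⟩ with hdl
  have hdlc : dl.castSucc = p0 := Fin.ext (by simp [hdl, hp0])
  have hdls : dl.succ = p1 := Fin.ext (by simp [hdl, hp1]; omega)
  have hdesc : IsDescentA n u dl := by
    unfold IsDescentA
    rw [hdlc, hdls, hup0, hup1]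
    exact hba
  have huniq : ∀ d' : Fin n, IsDescentA n u d' → d' = dl := by
    intro d' hd'
    unfold IsDescentA at hd'
    by_contra hne
    have hcs : (d'.castSucc : ℕ) = (d' : ℕ) := by simp
    have hss : (d'.succ : ℕ) = (d' : ℕ) + 1 := by simp
    rcases lt_or_ge ((d' : ℕ) + 1) l with h | h
    · have := h1 (by simp only [Set.mem_setOf_eq, hcs]; omega)
        (by simp only [Set.mem_setOf_eq, hss]; omega) (Fin.castSucc_lt_succ (i := d'))
      exact absurd hd' (not_lt_of_gt this)
    · have hdge : l ≤ (d' : ℕ) := by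
        rcases lt_or_ge ((d' : ℕ)) l with h' | h'
        · exact absurd (Fin.ext (by simp [hdl]; omega) : d' = dl) hne
        · exact h'
      have := h2 (by simp only [Set.mem_setOf_eq, hcs]; omega)
        (by simp only [Set.mem_setOf_eq, hss]; omega) (Fin.castSucc_lt_succ (i := d'))
      exact absurd hd' (not_lt_of_gt this)
  refine ⟨?_, ⟨dl, hdesc, huniq⟩, ?_⟩
  · -- inversion subset
    rintro ⟨x, y⟩ ⟨hyx, hinv⟩
    simp only [invSetA, Set.mem_setOf_eq] at hyx hinv ⊢
    refine ⟨hyx, ?_⟩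
    -- show y ∈ R and x ∉ R
    have hyR : y ∈ R := by
      by_contra hyR
      have hy : ((u.symm y : Fin (n+1)) : ℕ) < l := by
        by_contra h; exact hyR ((hmem y).mpr (le_of_not_gt h))
      have hx : ((u.symm x : Fin (n+1)) : ℕ) < l := lt_of_le_of_lt (by
        exact_mod_cast le_of_lt hinv) hy
      have := h1 (Set.mem_setOf_eq ▸ hx) (Set.mem_setOf_eq ▸ hy) hinv
      rw [u.apply_symm_apply, u.apply_symm_apply] at this
      exact absurd hyx (not_lt_of_gt this)
    have hxR : x ∉ R := by
      intro hxR
      have hx : l ≤ ((u.symm x : Fin (n+1)) : ℕ) := (hmem x).mp hxR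
      have hy : l ≤ ((u.symm y : Fin (n+1)) : ℕ) := le_of_lt (lt_of_le_of_lt hx
        (by exact_mod_cast hinv))
      have := h2 (Set.mem_setOf_eq ▸ hx) (Set.mem_setOf_eq ▸ hy) hinv
      rw [u.apply_symm_apply, u.apply_symm_apply] at this
      exact absurd hyx (not_lt_of_gt this)
    -- now conclude
    rcases hyR with ⟨⟨hby, hya⟩, j, hj, hjy⟩ | hay
    · -- b ≤ y < a, y = w j with d < j
      have hwy : (w.symm y : Fin (n+1)) = j := by rw [← hjy, Equiv.symm_apply_apply]
      have hxa : x ≤ a := hleA x hxR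
      rcases lt_or_eq_of_le hxa with hxlt | hxeq
      · -- x < a, b < x, x not in image
        have hxim : x ∉ ⇑w '' {j : Fin (n+1) | (d : ℕ) < (j : ℕ)} := by
          intro hxim
          exact hxR (Or.inl ⟨⟨le_of_lt (lt_of_le_of_lt hby hyx), hxlt⟩, hxim⟩)
        have hxd : ((w.symm x : Fin (n+1)) : ℕ) ≤ (d : ℕ) := by
          by_contra h
          exact hxim ⟨w.symm x, lt_of_not_ge h, w.apply_symm_apply x⟩
        have hj' : (d : ℕ) < (j : ℕ) := hj
        rw [Fin.lt_def, hwy]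
        omega
      · -- x = a
        have : w.symm x = d.castSucc := by rw [hxeq, ha, Equiv.symm_apply_apply]
        rw [this, Fin.lt_def, hwy]
        simp only [Fin.coe_castSucc]
        exact hj
    · -- a < y < x means x ∈ R, contradiction
      exact absurd (hgtR x (hay.trans hyx)) hxR
  · -- part 3
    intro d' hd'
    have hde : d' = dl := huniq d' hd'
    subst hde
    refine ⟨by simp [hdl]; omega, ?_, ?_⟩
    · rw [← Equiv.swap_apply_apply, hdlc, hdls, hup0, hup1, Equiv.swap_comm]
    · rw [← Equiv.swap_apply_apply]
end

section
/- Let w ∈ 𝔖_{n+1} have exactly one descent, at position l, and set a = w(l), b = w(l+1). Define Γ(w) = {(i,j) ∈ ℤ×ℤ : l ≤ j ≤ n, j−l+1 ≤ i ≤ j, and w(j+1) ≤ i}, and Γ₁(w) = {(i,j) ∈ Γ(w) : (i, j+1) ∉ Γ(w)} (note that pairs whose second coordinate exceeds n are never in Γ(w)). Then the map (i,j) ↦ i is a bijection from Γ₁(w) onto the interval {b, b+1, …, a−1}. -/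
/-- The value `w(p)` of `w ∈ 𝔖_{n+1}` at a 1-indexed position `p ∈ {1,…,n+1}`, as an
integer in `{1,…,n+1}` (`w` is extended by the identity outside this range). -/
def permValA (n : ℕ) (w : Equiv.Perm (Fin (n + 1))) (p : ℤ) : ℤ :=
  if h : 1 ≤ p ∧ p ≤ (n : ℤ) + 1 then
    ((w ⟨(p - 1).toNat, by omega⟩ : Fin (n + 1)) : ℤ) + 1
  else p

/-- `Γ(w) = {(i,j) ∈ ℤ×ℤ : l ≤ j ≤ n, j−l+1 ≤ i ≤ j, w(j+1) ≤ i}`, where `l` is the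
(1-indexed) unique descent position of `w`. -/
def GammaA (n : ℕ) (w : Equiv.Perm (Fin (n + 1))) (l : ℤ) : Set (ℤ × ℤ) :=
  {p | l ≤ p.2 ∧ p.2 ≤ (n : ℤ) ∧ p.2 - l + 1 ≤ p.1 ∧ p.1 ≤ p.2 ∧
    permValA n w (p.2 + 1) ≤ p.1}

/-- `Γ₁(w) = {(i,j) ∈ Γ(w) : (i, j+1) ∉ Γ(w)}`. -/
def GammaOneA (n : ℕ) (w : Equiv.Perm (Fin (n + 1))) (l : ℤ) : Set (ℤ × ℤ) :=
  {p ∈ GammaA n w l | (p.1, p.2 + 1) ∉ GammaA n w l}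

section Helpers

variable (n : ℕ) (w : Equiv.Perm (Fin (n + 1)))

lemma permValA_eq (p : ℤ) (x : Fin (n + 1)) (hx : ((x : ℕ) : ℤ) = p - 1) :
    permValA n w p = ((w x : ℕ) : ℤ) + 1 := by
  have hlt := x.isLt
  have h1 : 1 ≤ p := by omega
  have h2 : p ≤ (n : ℤ) + 1 := by omega
  rw [permValA, dif_pos ⟨h1, h2⟩]
  have hx' : (⟨(p - 1).toNat, by omega⟩ : Fin (n + 1)) = x := by
    apply Fin.ext
    simp only []
    omega
  rw [hx']

lemma permValA_bounds {p : ℤ} (h1 : 1 ≤ p) (h2 : p ≤ (n : ℤ) + 1) :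
    1 ≤ permValA n w p ∧ permValA n w p ≤ (n : ℤ) + 1 := by
  rw [permValA, dif_pos ⟨h1, h2⟩]
  have := (w ⟨(p - 1).toNat, by omega⟩).isLt
  omega

lemma permValA_injective : Function.Injective (permValA n w) := by
  intro p q h
  by_cases hp : 1 ≤ p ∧ p ≤ (n : ℤ) + 1 <;> by_cases hq : 1 ≤ q ∧ q ≤ (n : ℤ) + 1
  · rw [permValA, dif_pos hp, permValA, dif_pos hq] at h
    have hw : (w ⟨(p - 1).toNat, by omega⟩ : Fin (n + 1)) = w ⟨(q - 1).toNat, by omega⟩ := by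
      apply Fin.val_injective
      exact_mod_cast add_right_cancel h
    have hval : (p - 1).toNat = (q - 1).toNat := congrArg Fin.val (w.injective hw)
    omega
  · have h1 := permValA_bounds n w hp.1 hp.2
    have h2 : permValA n w q = q := by rw [permValA, dif_neg hq]
    omega
  · have h1 := permValA_bounds n w hq.1 hq.2
    have h2 : permValA n w p = p := by rw [permValA, dif_neg hp]
    omega
  · have h1 : permValA n w p = p := by rw [permValA, dif_neg hp]
    have h2 : permValA n w q = q := by rw [permValA, dif_neg hq]
    omega

end Helpers

/-- Let `w ∈ 𝔖_{n+1}` have exactly one descent, at position `l`, and set `a = w(l)`,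
`b = w(l+1)`.  Then the map `(i,j) ↦ i` is a bijection from `Γ₁(w)` onto `{b,…,a−1}`.
(The 0-indexed descent `d : Fin n` corresponds to the 1-indexed position `l = d+1`;
`a` and `b` are the 1-indexed values `w(l)` and `w(l+1)`.) -/
theorem gammaOne_bijOn_A (n : ℕ) (hn : 1 ≤ n) (w : Equiv.Perm (Fin (n + 1)))
    (d : Fin n) (hd : IsDescentA n w d) (hd' : ∀ d', IsDescentA n w d' → d' = d)
    (l a b : ℤ)
    (hl : l = (d : ℕ) + 1)
    (ha : a = ((w d.castSucc : ℕ) : ℤ) + 1)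
    (hb : b = ((w d.succ : ℕ) : ℤ) + 1) :
    Set.BijOn Prod.fst (GammaOneA n w l) (Set.Icc b (a - 1)) := by
  have hdn : (d : ℕ) < n := d.isLt
  have hl1 : 1 ≤ l := by omega
  have hln : l ≤ (n : ℤ) := by omega
  -- values at l, l+1
  have hvl : permValA n w l = a := by
    rw [permValA_eq n w l d.castSucc (by simp [Fin.coe_castSucc]; omega), ha]
  have hvl1 : permValA n w (l + 1) = b := by
    rw [permValA_eq n w (l + 1) d.succ (by simp [Fin.val_succ]; omega), hb]
  have hba : b < a := by
    have := hd
    rw [IsDescentA, Fin.lt_def] at this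
    omega
  have hb1 : 1 ≤ b := by omega
  have han : a ≤ (n : ℤ) + 1 := by
    have := (w d.castSucc).isLt
    omega
  -- adjacent increase off the descent
  have vadj : ∀ p : ℤ, 1 ≤ p → p ≤ (n : ℤ) → p ≠ l →
      permValA n w p < permValA n w (p + 1) := by
    intro p h1 h2 h3
    have hpn : (p - 1).toNat < n := by omega
    set d' : Fin n := ⟨(p - 1).toNat, hpn⟩ with hd'def
    have hne : d' ≠ d := by
      intro hEq
      apply h3
      have : (p - 1).toNat = (d : ℕ) := by rw [← hEq]
      omega
    have hnotdesc : ¬ IsDescentA n w d' := fun hdes => hne (hd' d' hdes)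
    rw [IsDescentA] at hnotdesc
    have hle : w d'.castSucc ≤ w d'.succ := le_of_not_gt hnotdesc
    have hlt : w d'.castSucc < w d'.succ :=
      hle.lt_of_ne (fun hEq => (show d'.castSucc < d'.succ from Fin.castSucc_lt_succ).ne (w.injective hEq))
    rw [permValA_eq n w p d'.castSucc (by simp [Fin.coe_castSucc, hd'def]; omega),
      permValA_eq n w (p + 1) d'.succ (by simp [Fin.val_succ, hd'def]; omega)]
    have := Fin.lt_def.mp hlt
    omega
  -- monotonicity along runs
  have vmonoN : ∀ (k : ℕ) (p : ℤ), 1 ≤ p → p + k ≤ (n : ℤ) + 1 →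
      (∀ r, p ≤ r → r < p + k → r ≠ l) →
      permValA n w p ≤ permValA n w (p + k) := by
    intro k
    induction k with
    | zero => intro p _ _ _; simp
    | succ m ih =>
      intro p h1 h2 h3
      have hcast : ((m + 1 : ℕ) : ℤ) = (m : ℤ) + 1 := by push_cast; ring
      rw [hcast, ← add_assoc]
      have step : permValA n w (p + m) < permValA n w (p + m + 1) :=
        vadj (p + m) (by omega) (by omega) (h3 (p + m) (by omega) (by omega))
      have hih := ih p h1 (by omega) (fun r hr hr' => h3 r hr (by omega))
      omega
  have vmono : ∀ p q : ℤ, 1 ≤ p → p ≤ q → q ≤ (n : ℤ) + 1 → (q ≤ l ∨ l + 1 ≤ p) →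
      permValA n w p ≤ permValA n w q := by
    intro p q h1 h2 h3 h4
    have hk : q = p + (((q - p).toNat : ℕ) : ℤ) := by omega
    rw [hk]
    exact vmonoN (q - p).toNat p h1 (by omega) (fun r hr hr' => by omega)
  -- pigeonhole facts
  have hal : l ≤ a := by
    have hmaps : ∀ p ∈ Finset.Icc (1 : ℤ) l, permValA n w p ∈ Finset.Icc (1 : ℤ) a := by
      intro p hp
      simp only [Finset.mem_Icc] at hp ⊢
      refine ⟨(permValA_bounds n w hp.1 (by omega)).1, ?_⟩
      have := vmono p l hp.1 hp.2 (by omega) (Or.inl le_rfl)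
      omega
    have hcard := Finset.card_le_card_of_injOn _ hmaps ((permValA_injective n w).injOn)
    rw [Int.card_Icc, Int.card_Icc] at hcard
    omega
  have F1 : ∀ i : ℤ, l ≤ i → i < a → i ≤ (n : ℤ) → permValA n w (i + 1) ≤ i := by
    intro i hi1 hi2 hi3
    by_contra hcon
    push_neg at hcon
    have hmaps : ∀ p ∈ insert l (Finset.Icc (i + 1) ((n : ℤ) + 1)),
        permValA n w p ∈ Finset.Icc (i + 1) ((n : ℤ) + 1) := by
      intro p hp
      simp only [Finset.mem_insert, Finset.mem_Icc] at hp ⊢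
      rcases hp with rfl | ⟨h1, h2⟩
      · rw [hvl]; omega
      · have hlow := vmono (i + 1) p (by omega) h1 h2 (Or.inr (by omega))
        have hup := (permValA_bounds n w (p := p) (by omega) h2).2
        omega
    have hni : l ∉ Finset.Icc (i + 1) ((n : ℤ) + 1) := by
      simp only [Finset.mem_Icc]; omega
    have hcard := Finset.card_le_card_of_injOn _ hmaps ((permValA_injective n w).injOn)
    rw [Finset.card_insert_of_notMem hni, Int.card_Icc] at hcard
    omega
  have F2 : ∀ i : ℤ, a ≤ i → i ≤ (n : ℤ) → i < permValA n w (i + 1) := by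
    intro i hi1 hi2
    by_contra hcon
    push_neg at hcon
    have hmaps : ∀ p ∈ Finset.Icc (1 : ℤ) (i + 1), permValA n w p ∈ Finset.Icc (1 : ℤ) i := by
      intro p hp
      simp only [Finset.mem_Icc] at hp ⊢
      refine ⟨(permValA_bounds n w hp.1 (by omega)).1, ?_⟩
      by_cases hpl : p ≤ l
      · have := vmono p l hp.1 hpl (by omega) (Or.inl le_rfl)
        omega
      · have := vmono p (i + 1) hp.1 hp.2 (by omega) (Or.inr (by omega))
        omega
    have hcard := Finset.card_le_card_of_injOn _ hmaps ((permValA_injective n w).injOn)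
    rw [Int.card_Icc, Int.card_Icc] at hcard
    omega
  -- interval structure of fibers
  have step : ∀ i j j' : ℤ, (i, j) ∈ GammaA n w l → (i, j') ∈ GammaA n w l → j < j' →
      (i, j + 1) ∈ GammaA n w l := by
    intro i j j' hj hj' hlt
    simp only [GammaA, Set.mem_setOf_eq] at hj hj' ⊢
    obtain ⟨a1, a2, a3, a4, a5⟩ := hj
    obtain ⟨b1, b2, b3, b4, b5⟩ := hj'
    refine ⟨by omega, by omega, by omega, by omega, ?_⟩
    have e : j + 1 + 1 = j + 2 := by ring
    rw [e]
    have := vmono (j + 2) (j' + 1) (by omega) (by omega) (by omega) (Or.inr (by omega))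
    omega
  refine ⟨?_, ?_, ?_⟩
  · -- MapsTo
    rintro ⟨i, j⟩ hp
    obtain ⟨hpG, -⟩ := hp
    simp only [GammaA, Set.mem_setOf_eq] at hpG
    obtain ⟨h1, h2, h3, h4, h5⟩ := hpG
    simp only [Set.mem_Icc]
    constructor
    · have := vmono (l + 1) (j + 1) (by omega) (by omega) (by omega) (Or.inr le_rfl)
      omega
    · by_contra hcon
      push_neg at hcon
      have hF2 := F2 i (by omega) (by omega)
      have := vmono (i + 1) (j + 1) (by omega) (by omega) (by omega) (Or.inr (by omega))
      omega
  · -- InjOn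
    intro p hp q hq hfst
    obtain ⟨hpG, hpN⟩ := hp
    obtain ⟨hqG, hqN⟩ := hq
    have hq1 : ((p.1 : ℤ), q.2) ∈ GammaA n w l := by rw [hfst]; exact hqG
    have hp1 : ((p.1 : ℤ), p.2) ∈ GammaA n w l := hpG
    rcases lt_trichotomy p.2 q.2 with h | h | h
    · exact absurd (step p.1 p.2 q.2 hp1 hq1 h) hpN
    · exact Prod.ext hfst h
    · exfalso
      have := step p.1 q.2 p.2 hq1 hp1 h
      rw [hfst] at this
      exact hqN this
  · -- SurjOn
    intro i hi
    simp only [Set.mem_Icc] at hi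
    obtain ⟨hib, hia⟩ := hi
    have hj0 : ∃ j0, (i, j0) ∈ GammaA n w l := by
      by_cases hc : i ≤ l
      · refine ⟨l, ?_⟩
        simp only [GammaA, Set.mem_setOf_eq]
        exact ⟨le_rfl, hln, by omega, hc, by rw [hvl1]; omega⟩
      · refine ⟨i, ?_⟩
        simp only [GammaA, Set.mem_setOf_eq]
        exact ⟨by omega, by omega, by omega, le_rfl, F1 i (by omega) (by omega) (by omega)⟩
    obtain ⟨j0, hj0⟩ := hj0
    have key : ∀ (N : ℕ) (j : ℤ), (i, j) ∈ GammaA n w l → (n : ℤ) - j ≤ N →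
        ∃ j', (i, j') ∈ GammaA n w l ∧ (i, j' + 1) ∉ GammaA n w l := by
      intro N
      induction N with
      | zero =>
        intro j hj hN
        refine ⟨j, hj, fun hmem => ?_⟩
        simp only [GammaA, Set.mem_setOf_eq] at hj hmem
        omega
      | succ m ih =>
        intro j hj hN
        by_cases hc : (i, j + 1) ∈ GammaA n w l
        · have hj1n : j + 1 ≤ (n : ℤ) := hc.2.1
          exact ih (j + 1) hc (by omega)
        · exact ⟨j, hj, hc⟩
    obtain ⟨j', hj'1, hj'2⟩ := key ((n : ℤ) - j0).toNat j0 hj0 (by omega)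
    exact ⟨(i, j'), ⟨hj'1, hj'2⟩, rfl⟩
end

section
/- Let u, w ∈ W(D_n) each have exactly one descent, at l_u and l_w respectively. If u({|l_u|+1,…,n}) = w({|l_w|+1,…,n}), then u = w. (That is, the map sending a join-irreducible element w of type l to the set R(w) = w({|l|+1,…,n}) is injective.) -/
/-- An element of the Coxeter group `W(D_n)`, modelled as a permutation of `ℤ` fixing
everything outside `{±1,…,±n}`, with `w(−i) = −w(i)` and an even number of
`i ∈ {1,…,n}` with `w(i) < 0`. -/
def IsDPerm (n : ℕ) (w : Equiv.Perm ℤ) : Prop :=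
  (∀ i : ℤ, ¬(1 ≤ |i| ∧ |i| ≤ (n : ℤ)) → w i = i) ∧
  (∀ i : ℤ, w (-i) = -(w i)) ∧
  Even ((Finset.Icc (1 : ℤ) (n : ℤ)).filter (fun i => w i < 0)).card

/-- `l` is a descent of `w ∈ W(D_n)`: `l ∈ {−1} ∪ {1,…,n−1}` and `w(l) > w(|l|+1)`. -/
def IsDescentD (n : ℕ) (w : Equiv.Perm ℤ) (l : ℤ) : Prop :=
  (l = -1 ∨ (1 ≤ l ∧ l ≤ (n : ℤ) - 1)) ∧ w (|l| + 1) < w l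

/-- The inversion set of `w ∈ W(D_n)`:
`inv(w) = {(a,b) : a,b ∈ {±1,…,±n}, a > |b|, w⁻¹(a) < w⁻¹(b)}`. -/
def invSetD (n : ℕ) (w : Equiv.Perm ℤ) : Set (ℤ × ℤ) :=
  {p | (1 ≤ |p.1| ∧ |p.1| ≤ (n : ℤ)) ∧ (1 ≤ |p.2| ∧ |p.2| ≤ (n : ℤ)) ∧
    |p.2| < p.1 ∧ w.symm p.1 < w.symm p.2}

/-- The right weak order on `W(D_n)`: `u ≤ w` iff `inv(u) ⊆ inv(w)`. -/
def weakLED (n : ℕ) (u w : Equiv.Perm ℤ) : Prop :=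
  invSetD n u ⊆ invSetD n w

/-- `w` is a least upper bound of `S ⊆ W(D_n)` in the right weak order on `W(D_n)`. -/
def IsWeakLUBD (n : ℕ) (S : Set (Equiv.Perm ℤ)) (w : Equiv.Perm ℤ) : Prop :=
  (∀ x ∈ S, weakLED n x w) ∧ ∀ z, IsDPerm n z → (∀ x ∈ S, weakLED n x z) → weakLED n w z

/-- `w` is join-irreducible in the right weak order on `W(D_n)`. -/
def IsJoinIrreducibleD (n : ℕ) (w : Equiv.Perm ℤ) : Prop :=
  w ≠ 1 ∧ ∀ u v, IsDPerm n u → IsDPerm n v → IsWeakLUBD n {u, v} w → u = w ∨ v = w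

lemma dperm_zero {n : ℕ} {w : Equiv.Perm ℤ} (hw : IsDPerm n w) : w 0 = 0 := by
  have h := hw.2.1 0
  simp only [neg_zero] at h
  linarith

lemma dperm_ne_zero {n : ℕ} {w : Equiv.Perm ℤ} (hw : IsDPerm n w) {i : ℤ} (hi : i ≠ 0) :
    w i ≠ 0 := by
  intro h
  exact hi (w.injective (h.trans (dperm_zero hw).symm))

lemma dperm_abs_mem {n : ℕ} {w : Equiv.Perm ℤ} (hw : IsDPerm n w) {i : ℤ}
    (hi : 1 ≤ |i| ∧ |i| ≤ (n : ℤ)) : 1 ≤ |w i| ∧ |w i| ≤ (n : ℤ) := by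
  by_contra h
  have h1 : w (w i) = w i := hw.1 _ h
  have h2 : w i = i := w.injective h1
  rw [h2] at h
  exact h hi

lemma dperm_abs_surj {n : ℕ} {w : Equiv.Perm ℤ} (hw : IsDPerm n w) {j : ℤ}
    (hj1 : 1 ≤ j) (hj2 : j ≤ (n : ℤ)) : ∃ i, 1 ≤ i ∧ i ≤ (n : ℤ) ∧ |w i| = j := by
  set k := w.symm j with hk
  have hwk : w k = j := w.apply_symm_apply j
  have hkr : 1 ≤ |k| ∧ |k| ≤ (n : ℤ) := by
    by_contra h
    have := hw.1 _ h
    rw [hwk] at this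
    rw [← this] at h
    exact h ⟨by rwa [abs_of_nonneg (by linarith)], by rwa [abs_of_nonneg (by linarith)]⟩
  rcases le_or_gt 0 k with h0 | h0
  · rw [abs_of_nonneg h0] at hkr
    exact ⟨k, hkr.1, hkr.2, by rw [hwk, abs_of_nonneg (by linarith)]⟩
  · refine ⟨-k, ?_, ?_, ?_⟩
    · rw [abs_of_neg h0] at hkr; exact hkr.1
    · rw [abs_of_neg h0] at hkr; exact hkr.2
    · rw [hw.2.1, hwk, abs_neg, abs_of_nonneg (by linarith)]

lemma dperm_abs_injOn {n : ℕ} {w : Equiv.Perm ℤ} (hw : IsDPerm n w) {i j : ℤ}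
    (hi : 1 ≤ i) (hj : 1 ≤ j) (h : |w i| = |w j|) : i = j := by
  rcases abs_eq_abs.1 h with h1 | h1
  · exact w.injective h1
  · have : w i = w (-j) := by rw [hw.2.1]; linarith [h1]
    have := w.injective this
    omega

lemma mono_of_adj {f : ℤ → ℤ} {a b : ℤ} (h : ∀ k, a ≤ k → k < b → f k < f (k + 1)) :
    ∀ i j, a ≤ i → i < j → j ≤ b → f i < f j := by
  intro i j hai hij hjb
  have key : ∀ j, i + 1 ≤ j → (j ≤ b → f i < f j) := by
    refine Int.le_induction ?_ ?_
    · intro hb; exact h i hai (by omega)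
    · intro m hm ih hb
      exact lt_trans (ih (by omega)) (h m (by omega) (by omega))
  exact key j (by omega) hjb

lemma eqOn_of_mono_image_eq (a : ℤ) : ∀ (k : ℕ) (b : ℤ), b - a = (k : ℤ) →
    ∀ f g : ℤ → ℤ,
    (∀ i j, a ≤ i → i < j → j ≤ b → f i < f j) →
    (∀ i j, a ≤ i → i < j → j ≤ b → g i < g j) →
    f '' Set.Icc a b = g '' Set.Icc a b →
    ∀ i, a ≤ i → i ≤ b → f i = g i := by
  intro k
  induction k with
  | zero =>
    intro b hb f g _ _ himg i hi hib
    have hba : b = a := by omega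
    subst hba
    have hia : i = b := by omega
    subst hia
    have : f i ∈ g '' Set.Icc i i := by
      rw [← himg]; exact ⟨i, by simp, rfl⟩
    obtain ⟨j, hj, hji⟩ := this
    simp only [Set.mem_Icc] at hj
    have : j = i := le_antisymm hj.2 hj.1
    rw [← hji, this]
  | succ k ih =>
    intro b hb f g hf hg himg i hi hib
    have hab : a < b := by omega
    -- f b = g b
    have hfb : f b = g b := by
      obtain ⟨j, hj, hjf⟩ : f b ∈ g '' Set.Icc a b := by
        rw [← himg]; exact ⟨b, by simp [Set.mem_Icc]; omega, rfl⟩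
      obtain ⟨j', hj', hjg⟩ : g b ∈ f '' Set.Icc a b := by
        rw [himg]; exact ⟨b, by simp [Set.mem_Icc]; omega, rfl⟩
      simp only [Set.mem_Icc] at hj hj'
      have h1 : g j ≤ g b := by
        rcases eq_or_lt_of_le hj.2 with h | h
        · rw [h]
        · exact le_of_lt (hg j b hj.1 h le_rfl)
      have h2 : f j' ≤ f b := by
        rcases eq_or_lt_of_le hj'.2 with h | h
        · rw [h]
        · exact le_of_lt (hf j' b hj'.1 h le_rfl)
      omega
    have hpred : ∀ h : ℤ → ℤ, (∀ i j, a ≤ i → i < j → j ≤ b → h i < h j) →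
        h '' Set.Icc a (b - 1) = h '' Set.Icc a b \ {h b} := by
      intro h hmono
      ext x
      constructor
      · rintro ⟨i, hi, rfl⟩
        simp only [Set.mem_Icc] at hi
        refine ⟨⟨i, by simp [Set.mem_Icc]; omega, rfl⟩, ?_⟩
        simp only [Set.mem_singleton_iff]
        exact ne_of_lt (hmono i b hi.1 (by omega) le_rfl)
      · rintro ⟨⟨i, hi, rfl⟩, hx⟩
        simp only [Set.mem_Icc] at hi
        simp only [Set.mem_singleton_iff] at hx
        have : i ≠ b := fun h => hx (by rw [h])
        exact ⟨i, by simp [Set.mem_Icc]; omega, rfl⟩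
    have himg' : f '' Set.Icc a (b - 1) = g '' Set.Icc a (b - 1) := by
      rw [hpred f hf, hpred g hg, himg, hfb]
    rcases eq_or_lt_of_le hib with h | h
    · rw [h]; exact hfb
    · exact ih (b - 1) (by omega) f g
        (fun i j h1 h2 h3 => hf i j h1 h2 (by omega))
        (fun i j h1 h2 h3 => hg i j h1 h2 (by omega))
        himg' i hi (by omega)

lemma descent_adj_incr {n : ℕ} {w : Equiv.Perm ℤ} {l : ℤ}
    (hl' : ∀ l', IsDescentD n w l' → l' = l) {i : ℤ}
    (hi1 : 1 ≤ i) (hi2 : i ≤ (n : ℤ) - 1) (hne : i ≠ l) : w i < w (i + 1) := by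
  by_contra h
  push_neg at h
  have hne2 : w (i + 1) ≠ w i := fun he => by have := w.injective he; omega
  have hlt : w (i + 1) < w i := lt_of_le_of_ne h hne2
  have hd : IsDescentD n w i := ⟨Or.inr ⟨hi1, hi2⟩, by rwa [abs_of_pos (by omega)]⟩
  exact hne (hl' i hd)

lemma descent_neg_one {n : ℕ} {w : Equiv.Perm ℤ} {l : ℤ}
    (hl' : ∀ l', IsDescentD n w l' → l' = l) (hne : l ≠ -1) : w (-1) < w 2 := by
  by_contra h
  push_neg at h
  have hne2 : w 2 ≠ w (-1) := fun he => by have := w.injective he; omega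
  have hlt : w 2 < w (-1) := lt_of_le_of_ne h hne2
  have hd : IsDescentD n w (-1) := ⟨Or.inl rfl, by norm_num; exact hlt⟩
  exact hne ((hl' (-1) hd).symm)

lemma parity_contra {n : ℕ} (hn : 1 ≤ n) {u w : Equiv.Perm ℤ}
    (hu : IsDPerm n u) (hw : IsDPerm n w)
    (heq : ∀ i, 2 ≤ i → i ≤ (n : ℤ) → u i = w i) (h1 : u 1 < 0) (h2 : ¬ w 1 < 0) :
    False := by
  have hFu : (Finset.Icc (1 : ℤ) (n : ℤ)).filter (fun i => u i < 0)
      = insert 1 ((Finset.Icc (1 : ℤ) (n : ℤ)).filter (fun i => w i < 0)) := by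
    ext x
    simp only [Finset.mem_filter, Finset.mem_insert, Finset.mem_Icc]
    constructor
    · rintro ⟨⟨hx1, hx2⟩, hx3⟩
      rcases eq_or_lt_of_le hx1 with h | h
      · exact Or.inl h.symm
      · exact Or.inr ⟨⟨hx1, hx2⟩, by rwa [← heq x (by omega) hx2]⟩
    · rintro (rfl | ⟨⟨hx1, hx2⟩, hx3⟩)
      · exact ⟨⟨le_refl 1, by exact_mod_cast hn⟩, h1⟩
      · rcases eq_or_lt_of_le hx1 with h | h
        · exact absurd (h ▸ hx3) h2
        · exact ⟨⟨hx1, hx2⟩, by rwa [heq x (by omega) hx2]⟩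
  have h1mem : (1 : ℤ) ∉ (Finset.Icc (1 : ℤ) (n : ℤ)).filter (fun i => w i < 0) := by
    simp only [Finset.mem_filter]
    exact fun h => h2 h.2
  have hcard := hu.2.2
  rw [hFu, Finset.card_insert_of_notMem h1mem] at hcard
  have := hw.2.2
  rw [Nat.even_add_one] at hcard
  exact hcard this

lemma abs_image_compl {n : ℕ} {p : Equiv.Perm ℤ} (hp : IsDPerm n p) {m : ℤ}
    (hm1 : 1 ≤ m) (hm2 : m ≤ (n : ℤ)) :
    (fun i => |p i|) '' Set.Icc (1 : ℤ) m
      = Set.Icc (1 : ℤ) (n : ℤ) \ (fun i => |p i|) '' Set.Icc (m + 1) (n : ℤ) := by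
  ext x
  constructor
  · rintro ⟨i, hi, rfl⟩
    simp only [Set.mem_Icc] at hi
    have hmem := dperm_abs_mem hp (i := i) ⟨by rw [abs_of_pos (by omega)]; omega,
      by rw [abs_of_pos (by omega)]; omega⟩
    refine ⟨Set.mem_Icc.2 hmem, ?_⟩
    rintro ⟨j, hj, hji⟩
    simp only [Set.mem_Icc] at hj
    have := dperm_abs_injOn hp (by omega : (1:ℤ) ≤ j) (by omega : (1:ℤ) ≤ i) hji
    omega
  · rintro ⟨hx, hnot⟩
    simp only [Set.mem_Icc] at hx
    obtain ⟨i, hi1, hi2, hival⟩ := dperm_abs_surj hp hx.1 hx.2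
    refine ⟨i, Set.mem_Icc.2 ⟨hi1, ?_⟩, hival⟩
    by_contra h
    push_neg at h
    exact hnot ⟨i, Set.mem_Icc.2 ⟨by omega, hi2⟩, hival⟩

lemma descent_abs_bound {n : ℕ} {w : Equiv.Perm ℤ} {l : ℤ} (hn : 2 ≤ n)
    (hl : IsDescentD n w l) : 1 ≤ |l| ∧ |l| ≤ (n : ℤ) - 1 := by
  have hn' : (2 : ℤ) ≤ (n : ℤ) := by exact_mod_cast hn
  rcases hl.1 with h | h
  · subst h; norm_num; omega
  · rw [abs_of_pos (by omega)]; exact h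

lemma mono_hi {n : ℕ} {p : Equiv.Perm ℤ} {l : ℤ}
    (hl' : ∀ l', IsDescentD n p l' → l' = l) :
    ∀ i j, |l| + 1 ≤ i → i < j → j ≤ (n : ℤ) → p i < p j := by
  have hll : l ≤ |l| := le_abs_self l
  have habs : 0 ≤ |l| := abs_nonneg l
  exact mono_of_adj (fun k hk1 hk2 => descent_adj_incr hl' (by omega) (by omega) (by omega))

lemma mono_lo {n : ℕ} {p : Equiv.Perm ℤ} {l : ℤ} (hn : 2 ≤ n) (hl : IsDescentD n p l)
    (hl' : ∀ l', IsDescentD n p l' → l' = l) :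
    ∀ i j, 1 ≤ i → i < j → j ≤ |l| → p i < p j := by
  have hb := descent_abs_bound hn hl
  refine mono_of_adj (fun k hk1 hk2 => descent_adj_incr hl' hk1 (by omega) ?_)
  rcases hl.1 with h | h
  · omega
  · have : |l| = l := abs_of_pos (by omega)
    omega

lemma pos_lo {n : ℕ} {p : Equiv.Perm ℤ} {l : ℤ} (hn : 2 ≤ n) (hp : IsDPerm n p)
    (hl : IsDescentD n p l) (hl' : ∀ l', IsDescentD n p l' → l' = l) :
    ∀ i, 2 ≤ i → i ≤ |l| → 0 < p i := by
  intro i h2 him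
  have hm2 : (2 : ℤ) ≤ |l| := le_trans h2 him
  have hlne : l ≠ -1 := by
    intro h; rw [h] at hm2; norm_num at hm2
  have hneg1 := descent_neg_one hl' hlne
  have hminus : p (-1) = -(p 1) := hp.2.1 1
  rw [hminus] at hneg1
  by_contra h
  push_neg at h
  have hne0 : p i ≠ 0 := dperm_ne_zero hp (by omega)
  have hilt : p i < 0 := lt_of_le_of_ne h hne0
  have h12 : p 1 < p 2 := mono_lo hn hl hl' 1 2 le_rfl (by norm_num) hm2
  have h2i : p 2 ≤ p i := by
    rcases eq_or_lt_of_le h2 with h' | h'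
    · rw [← h']
    · exact le_of_lt (mono_lo hn hl hl' 2 i one_le_two h' him)
  linarith

lemma abs_mono_lo {n : ℕ} {p : Equiv.Perm ℤ} {l : ℤ} (hn : 2 ≤ n) (hp : IsDPerm n p)
    (hl : IsDescentD n p l) (hl' : ∀ l', IsDescentD n p l' → l' = l) :
    ∀ i j, 1 ≤ i → i < j → j ≤ |l| → |p i| < |p j| := by
  intro i j h1 h2 h3
  have hm2 : (2 : ℤ) ≤ |l| := by omega
  have hj : 0 < p j := pos_lo hn hp hl hl' j (by omega) h3
  rw [abs_of_pos hj]
  rcases eq_or_lt_of_le h1 with h | h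
  · rw [← h]
    rcases lt_trichotomy (p 1) 0 with h0 | h0 | h0
    · rw [abs_of_neg h0]
      have hlne : l ≠ -1 := by
        intro hh; rw [hh] at hm2; norm_num at hm2
      have hneg1 := descent_neg_one hl' hlne
      have hminus : p (-1) = -(p 1) := hp.2.1 1
      rw [hminus] at hneg1
      have h2j : p 2 ≤ p j := by
        rcases eq_or_lt_of_le (show (2:ℤ) ≤ j by omega) with h' | h'
        · rw [← h']
        · exact le_of_lt (mono_lo hn hl hl' 2 j one_le_two h' h3)
      linarith
    · exact absurd h0 (dperm_ne_zero hp one_ne_zero)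
    · rw [abs_of_pos h0]
      exact mono_lo hn hl hl' 1 j le_rfl (by omega) h3
  · rw [abs_of_pos (pos_lo hn hp hl hl' i (by omega) (by omega))]
    exact mono_lo hn hl hl' i j h1 h2 h3

/-- Let `u, w ∈ W(D_n)` each have exactly one descent, at `l_u` and `l_w` respectively.
If `u({|l_u|+1,…,n}) = w({|l_w|+1,…,n})` then `u = w`; that is, the map sending a
join-irreducible element `w` of type `l` to `R(w) = w({|l|+1,…,n})` is injective. -/
theorem joinIrreducibleD_R_injective (n : ℕ) (hn : 4 ≤ n)
    (u w : Equiv.Perm ℤ) (hu : IsDPerm n u) (hw : IsDPerm n w) (lu lw : ℤ)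
    (hlu : IsDescentD n u lu) (hlu' : ∀ l', IsDescentD n u l' → l' = lu)
    (hlw : IsDescentD n w lw) (hlw' : ∀ l', IsDescentD n w l' → l' = lw)
    (hR : ⇑u '' Set.Icc (|lu| + 1) (n : ℤ) = ⇑w '' Set.Icc (|lw| + 1) (n : ℤ)) :
    u = w := by
  have hn2 : 2 ≤ n := by omega
  have hnz : (2 : ℤ) ≤ (n : ℤ) := by exact_mod_cast hn2
  obtain ⟨hmu1, hmu2⟩ := descent_abs_bound hn2 hlu
  obtain ⟨hmw1, hmw2⟩ := descent_abs_bound hn2 hlw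
  -- |lw| = |lu|
  have hmw : |lw| = |lu| := by
    have h1 := congrArg Set.ncard hR
    rw [Set.ncard_image_of_injective _ u.injective,
      Set.ncard_image_of_injective _ w.injective,
      ← Finset.coe_Icc, ← Finset.coe_Icc, Set.ncard_coe_finset, Set.ncard_coe_finset,
      Int.card_Icc, Int.card_Icc] at h1
    omega
  rw [hmw] at hR
  -- u = w on [|lu|+1, n]
  have heqhi : ∀ i, |lu| + 1 ≤ i → i ≤ (n : ℤ) → u i = w i := by
    refine eqOn_of_mono_image_eq (|lu| + 1) ((n : ℤ) - (|lu| + 1)).toNat (n : ℤ)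
      (by omega) _ _ (mono_hi hlu') ?_ hR
    intro i j h1 h2 h3
    exact mono_hi hlw' i j (by omega) h2 h3
  -- abs images on [1, |lu|] agree
  have hhi_img : (fun i => |u i|) '' Set.Icc (|lu| + 1) (n : ℤ)
      = (fun i => |w i|) '' Set.Icc (|lu| + 1) (n : ℤ) := by
    apply Set.image_congr
    intro i hi
    rw [heqhi i (Set.mem_Icc.1 hi).1 (Set.mem_Icc.1 hi).2]
  have habs_img : (fun i => |u i|) '' Set.Icc (1 : ℤ) (|lu|)
      = (fun i => |w i|) '' Set.Icc (1 : ℤ) (|lu|) := by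
    rw [abs_image_compl hu hmu1 (by omega), abs_image_compl hw hmu1 (by omega), hhi_img]
  -- |u i| = |w i| on [1, |lu|]
  have habs_eq : ∀ i, 1 ≤ i → i ≤ |lu| → |u i| = |w i| := by
    refine eqOn_of_mono_image_eq 1 ((|lu|) - 1).toNat (|lu|) (by omega) _ _
      (abs_mono_lo hn2 hu hlu hlu') ?_ habs_img
    intro i j h1 h2 h3
    exact abs_mono_lo hn2 hw hlw hlw' i j h1 h2 (by omega)
  -- u = w on [2, n]
  have heq2n : ∀ i, 2 ≤ i → i ≤ (n : ℤ) → u i = w i := by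
    intro i h2 hin
    rcases le_or_gt i (|lu|) with h | h
    · have h1 := habs_eq i (by omega) h
      have hup : 0 < u i := pos_lo hn2 hu hlu hlu' i h2 h
      have hwp : 0 < w i := pos_lo hn2 hw hlw hlw' i h2 (by omega)
      rwa [abs_of_pos hup, abs_of_pos hwp] at h1
    · exact heqhi i (by omega) hin
  -- u 1 = w 1
  have heq1 : u 1 = w 1 := by
    have h1 := habs_eq 1 le_rfl hmu1
    rcases abs_eq_abs.1 h1 with h | h
    · exact h
    · exfalso
      have hwne : w 1 ≠ 0 := dperm_ne_zero hw one_ne_zero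
      rcases lt_trichotomy (w 1) 0 with h0 | h0 | h0
      · exact parity_contra (by omega) hw hu (fun i a b => (heq2n i a b).symm) h0
          (by rw [h]; omega)
      · exact hwne h0
      · exact parity_contra (by omega) hu hw heq2n (by omega) (by omega)
  -- conclude
  have heq1n : ∀ i, 1 ≤ i → i ≤ (n : ℤ) → u i = w i := by
    intro i h1 hin
    rcases eq_or_lt_of_le h1 with h | h
    · rw [← h]; exact heq1
    · exact heq2n i (by omega) hin
  ext i
  rcases le_or_gt 1 (|i|) with h | h
  · rcases le_or_gt (|i|) (n : ℤ) with h2 | h2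
    · rcases le_or_gt 0 i with h3 | h3
      · have habsi : |i| = i := abs_of_nonneg h3
        exact heq1n i (by omega) (by omega)
      · have habsi : |i| = -i := abs_of_neg h3
        have hui := hu.2.1 (-i)
        have hwi := hw.2.1 (-i)
        rw [neg_neg] at hui hwi
        rw [hui, hwi, heq1n (-i) (by omega) (by omega)]
    · rw [hu.1 i (by omega), hw.1 i (by omega)]
  · rw [hu.1 i (by omega), hw.1 i (by omega)]
end

section
/- Let w ∈ W(D_n), let d be a descent of w, define R_d ⊆ {±1,…,±n} as in the canonical join decomposition of type D_n (cases (A)/(B) according to the sign of a_d + b_d and whether w({1,…,|d|}) ⊆ ±[a_d, n], with a_d = w(d), b_d = w(|d|+1), X_d = w({|d|+1,…,n})), and let w_d be the unique join-irreducible element of W(D_n) with R(w_d) = R_d, of type l_d. Then: (1) inv(w_d) ⊆ inv(w), i.e., w_d ≤ w in the right weak order; and (2) w_d s_{l_d} w_d⁻¹ = w s_d w⁻¹, where s_{−1} = (−1 2)(−2 1) and s_i = (i i+1)(−i −(i+1)) for 1 ≤ i ≤ n−1. -/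
/-- `[x,y]`: the set of nonzero integers `k` with `x ≤ k ≤ y`. -/
def nzIcc (x y : ℤ) : Set ℤ := {k | k ≠ 0 ∧ x ≤ k ∧ k ≤ y}

/-- `−Y = {−y : y ∈ Y}`. -/
def negSet (Y : Set ℤ) : Set ℤ := {k | -k ∈ Y}

/-- `±Y = Y ∪ (−Y)`. -/
def pmSet (Y : Set ℤ) : Set ℤ := Y ∪ negSet Y

open Classical in
/-- The set `R_d` attached to a descent `d` of `w ∈ W(D_n)`, where `a_d = w(d)`,
`b_d = w(|d|+1)` and `X_d = w({|d|+1,…,n})`: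
(A) if `a_d + b_d < 0` and `w({1,…,|d|}) ⊆ ±[a_d, n]`, then
`R_d = {−a_d} ∪ ((±[1,a_d−1]) ∩ X_d) ∪ ([a_d+1,−b_d−1] ∖ (−X_d)) ∪ [−b_d+1,n]` if `a_d > 0`,
and `R_d = ([−a_d,−b_d−1] ∖ (−X_d)) ∪ [−b_d+1,n]` if `a_d < 0`;
(B) otherwise, `R_d = ([b_d,a_d−1] ∩ X_d) ∪ [a_d+1,n]` if `a_d + b_d > 0`, and
`R_d = ([b_d,a_d−1] ∩ X_d) ∪ ([a_d+1,−b_d−1] ∖ (−X_d)) ∪ [−b_d+1,n]` if `a_d + b_d < 0`. -/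
noncomputable def RsetD (n : ℕ) (w : Equiv.Perm ℤ) (d : ℤ) : Set ℤ :=
  let a := w d
  let b := w (|d| + 1)
  let X := ⇑w '' Set.Icc (|d| + 1) (n : ℤ)
  if a + b < 0 ∧ ⇑w '' Set.Icc 1 |d| ⊆ pmSet (nzIcc a (n : ℤ)) then
    if 0 < a then
      {-a} ∪ (pmSet (nzIcc 1 (a - 1)) ∩ X) ∪ (nzIcc (a + 1) (-b - 1) \ negSet X) ∪
        nzIcc (-b + 1) (n : ℤ)
    else
      (nzIcc (-a) (-b - 1) \ negSet X) ∪ nzIcc (-b + 1) (n : ℤ)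
  else
    if 0 < a + b then
      (nzIcc b (a - 1) ∩ X) ∪ nzIcc (a + 1) (n : ℤ)
    else
      (nzIcc b (a - 1) ∩ X) ∪ (nzIcc (a + 1) (-b - 1) \ negSet X) ∪
        nzIcc (-b + 1) (n : ℤ)

/-- The simple reflections of `W(D_n)`: `s_{−1} = (−1 2)(−2 1)` and
`s_i = (i i+1)(−i −(i+1))` for `1 ≤ i ≤ n−1`. -/
def simpleD (i : ℤ) : Equiv.Perm ℤ :=
  if i = -1 then Equiv.swap (-1) 2 * Equiv.swap (-2) 1
  else Equiv.swap i (i + 1) * Equiv.swap (-i) (-(i + 1))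

namespace WDaux
open Equiv

lemma fix_symm {w : Equiv.Perm ℤ} {P : ℤ → Prop} (h1 : ∀ i, ¬ P i → w i = i) :
    ∀ i, ¬ P i → w.symm i = i := by
  intro i hi
  have := h1 i hi
  conv_lhs => rw [← this]
  exact w.symm_apply_apply i

lemma abs_bound {n : ℕ} {w : Equiv.Perm ℤ}
    (h1 : ∀ i : ℤ, ¬(1 ≤ |i| ∧ |i| ≤ (n : ℤ)) → w i = i)
    {i : ℤ} (hi : 1 ≤ |i| ∧ |i| ≤ (n : ℤ)) : 1 ≤ |w i| ∧ |w i| ≤ (n : ℤ) := by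
  by_contra h
  have h2 := h1 (w i) h
  have : w i = i := w.injective h2
  rw [this] at h
  exact h hi

lemma symm_neg {w : Equiv.Perm ℤ} (h2 : ∀ i : ℤ, w (-i) = -(w i)) (v : ℤ) :
    w.symm (-v) = -(w.symm v) := by
  apply w.injective
  rw [Equiv.apply_symm_apply, h2, Equiv.apply_symm_apply]

lemma mem_image_symm (w : Equiv.Perm ℤ) (s : Set ℤ) (v : ℤ) :
    v ∈ ⇑w '' s ↔ w.symm v ∈ s := by
  constructor
  · rintro ⟨i, hi, rfl⟩; simpa using hi
  · intro h; exact ⟨_, h, w.apply_symm_apply v⟩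

lemma chain {u : Equiv.Perm ℤ} {s t : ℤ} (hstep : ∀ k, s ≤ k → k < t → u k < u (k + 1)) :
    ∀ i j, s ≤ i → i < j → j ≤ t → u i < u j := by
  intro i j hi hij hjt
  have key : ∀ j', i + 1 ≤ j' → j' ≤ t → u i < u j' := by
    refine Int.le_induction ?_ ?_
    · intro h; exact hstep i hi (by omega)
    · intro k hk ih h
      have h2 := hstep k (by omega) (by omega)
      have h3 := ih (by omega)
      omega
  exact key j (by omega) hjt

end WDaux
namespace WDaux
open Equiv

lemma abs_window {v c : ℤ} (h1 : 1 ≤ |v|) (h2 : |v| ≤ c) : -c ≤ v ∧ v ≤ c ∧ v ≠ 0 := by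
  rcases abs_cases v with ⟨e1, e2⟩ | ⟨e1, e2⟩ <;> omega

lemma master_inv {n : ℕ} (hn : 4 ≤ n) (u w : Equiv.Perm ℤ)
    (hu1 : ∀ i : ℤ, ¬(1 ≤ |i| ∧ |i| ≤ (n : ℤ)) → u i = i)
    (hu2 : ∀ i : ℤ, u (-i) = -(u i))
    (l : ℤ) (hl : IsDescentD n u l) (hl' : ∀ l', IsDescentD n u l' → l' = l)
    (S : Set ℤ) (hS : S = ⇑u '' Set.Icc (|l| + 1) (n : ℤ))
    (HL1 : ∀ A B : ℤ, 1 ≤ |B| → |B| < A → A ≤ n →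
        -A ∈ S → -B ∉ S → w.symm A < w.symm B)
    (HL3 : ∀ A B : ℤ, 1 ≤ |B| → |B| < A → A ≤ n →
        A ∉ S → -A ∉ S → B ∈ S → w.symm A < w.symm B) :
    invSetD n u ⊆ invSetD n w := by
  rintro ⟨A, B⟩ ⟨hA, hB, hAB, hinv⟩
  refine ⟨hA, hB, hAB, ?_⟩
  simp only at hA hB hinv hAB ⊢
  set lam := |l| with hlam
  have hlc : (l = -1 ∧ lam = 1) ∨ (1 ≤ l ∧ l ≤ (n : ℤ) - 1 ∧ lam = l) := by
    rcases hl.1 with h | h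
    · left; exact ⟨h, by rw [hlam, h]; norm_num⟩
    · right; exact ⟨h.1, h.2, by rw [hlam, abs_of_pos (by omega)]⟩
  have hlamb : 1 ≤ lam ∧ lam ≤ (n : ℤ) - 1 := by
    rcases hlc with ⟨h1, h2⟩ | ⟨h1, h2, h3⟩ <;> omega
  have husymm1 : ∀ i : ℤ, ¬(1 ≤ |i| ∧ |i| ≤ (n : ℤ)) → u.symm i = i := fix_symm hu1
  have habs : ∀ v : ℤ, 1 ≤ |v| → |v| ≤ (n : ℤ) →
      -(n : ℤ) ≤ u.symm v ∧ u.symm v ≤ n ∧ u.symm v ≠ 0 := by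
    intro v h1 h2
    have h3 := abs_bound husymm1 (i := v) ⟨h1, h2⟩
    exact abs_window h3.1 h3.2
  have husneg : ∀ v : ℤ, u.symm (-v) = -(u.symm v) := symm_neg hu2
  have happn : ∀ v : ℤ, u (-(u.symm v)) = -v := by
    intro v; rw [← husneg v, u.apply_symm_apply]
  have hstepW : ∀ k : ℤ, lam + 1 ≤ k → k < n → u k < u (k + 1) := by
    intro k hk1 hk2
    by_contra hcon
    push_neg at hcon
    have hne : u (k + 1) ≠ u k := fun e => by have := u.injective e; omega
    have hdk : IsDescentD n u k := by
      refine ⟨Or.inr ⟨by omega, by omega⟩, ?_⟩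
      rw [abs_of_pos (by omega : (0:ℤ) < k)]
      omega
    have := hl' k hdk
    rcases hlc with ⟨h1, h2⟩ | ⟨h1, h2, h3⟩ <;> omega
  have hstepT : ∀ k : ℤ, 1 ≤ k → k < lam → u k < u (k + 1) := by
    intro k hk1 hk2
    by_contra hcon
    push_neg at hcon
    have hne : u (k + 1) ≠ u k := fun e => by have := u.injective e; omega
    have hdk : IsDescentD n u k := by
      refine ⟨Or.inr ⟨by omega, by omega⟩, ?_⟩
      rw [abs_of_pos (by omega : (0:ℤ) < k)]
      omega
    have := hl' k hdk
    rcases hlc with ⟨h1, h2⟩ | ⟨h1, h2, h3⟩ <;> omega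
  have hm1 : l ≠ -1 → -(u 1) < u 2 := by
    intro hne1
    by_contra hcon
    push_neg at hcon
    have he : u (-1) = -(u 1) := hu2 1
    have hne : u 2 ≠ u (-1) := fun e => by have := u.injective e; omega
    have hdk : IsDescentD n u (-1) := by
      refine ⟨Or.inl rfl, ?_⟩
      have habs1 : |(-1 : ℤ)| + 1 = 2 := by norm_num
      rw [habs1]
      omega
    exact hne1 (hl' (-1) hdk).symm
  have hmemS : ∀ v : ℤ, v ∈ S ↔ (lam + 1 ≤ u.symm v ∧ u.symm v ≤ (n : ℤ)) := by
    intro v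
    rw [hS, mem_image_symm, Set.mem_Icc]
  set i := u.symm A with hi
  set j := u.symm B with hj
  have hiA : u i = A := u.apply_symm_apply A
  have hjB : u j = B := u.apply_symm_apply B
  have hib := habs A hA.1 hA.2
  have hjb := habs B hB.1 hB.2
  have hBrange : -A < B ∧ B < A ∧ B ≠ 0 := by
    rcases abs_cases B with ⟨h1, h2⟩ | ⟨h1, h2⟩ <;> omega
  have hApos : 2 ≤ A := by omega
  have hAn : A ≤ (n : ℤ) := by
    rcases abs_cases A with ⟨h1, h2⟩ | ⟨h1, h2⟩ <;> omega
  by_cases hc1 : i ≤ -(lam + 1)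
  · -- HL1 branch
    refine HL1 A B hB.1 hAB hAn ?_ ?_
    · rw [hmemS, husneg]; omega
    · intro hmem
      rw [hmemS, husneg] at hmem
      rcases lt_trichotomy (-j) (-i) with h | h | h
      · have hch := chain hstepW (-j) (-i) (by omega) (by omega) (by omega)
        rw [happn A, happn B] at hch
        omega
      · omega
      · omega
  · by_cases hc2 : i ≤ -1
    · -- HL3 branch, -A in T
      have hjlam : lam + 1 ≤ j := by
        by_contra hcon
        push_neg at hcon
        rcases (by omega : j ≤ -1 ∨ 1 ≤ j) with hjs | hjs
        · have hch := chain hstepT (-j) (-i) (by omega) (by omega) (by omega)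
          rw [happn A, happn B] at hch
          omega
        · by_cases hl2 : lam = 1
          · have hieq : i = -1 := by omega
            have hjeq : j = 1 := by omega
            have h1 : u (-(1 : ℤ)) = -(u 1) := hu2 1
            have h2 : u (-(1 : ℤ)) = A := by rw [← hieq]; exact hiA
            have h3 : u (1 : ℤ) = B := by rw [← hjeq]; exact hjB
            omega
          · have hlne : l ≠ -1 := by
              rcases hlc with ⟨h1, h2⟩ | ⟨h1, h2, h3⟩ <;> omega
            have h12 := hm1 hlne
            have h1lt2 : u 1 < u 2 := by
              have := hstepT 1 (by omega) (by omega)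
              norm_num at this
              exact this
            have hnegA : u (-i) = -A := happn A
            by_cases hi1 : -i = 1
            · have hu1A : u 1 = -A := by rw [← hi1]; exact hnegA
              rcases (by omega : j = 1 ∨ 2 ≤ j) with hjs2 | hjs2
              · have : u (1 : ℤ) = B := by rw [← hjs2]; exact hjB
                omega
              · have : u 2 ≤ u j := by
                  rcases eq_or_lt_of_le hjs2 with he | hlt
                  · rw [← he]
                  · exact le_of_lt (chain hstepT 2 j (by omega) hlt (by omega))
                omega
            · have : u 2 ≤ u (-i) := by
                rcases (by omega : -i = 2 ∨ 2 < -i) with he | hlt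
                · rw [he]
                · exact le_of_lt (chain hstepT 2 (-i) (by omega) hlt (by omega))
              omega
      refine HL3 A B hB.1 hAB hAn ?_ ?_ ?_
      · rw [hmemS]; omega
      · rw [hmemS, husneg]; omega
      · rw [hmemS]; exact ⟨hjlam, by omega⟩
    · by_cases hc3 : i ≤ lam
      · -- HL3 branch, A in T
        have hi1 : 1 ≤ i := by omega
        have hjlam : lam + 1 ≤ j := by
          by_contra hcon
          push_neg at hcon
          have hch := chain hstepT i j hi1 hinv (by omega)
          rw [hiA, hjB] at hch
          omega
        refine HL3 A B hB.1 hAB hAn ?_ ?_ ?_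
        · rw [hmemS]; omega
        · rw [hmemS, husneg]; omega
        · rw [hmemS]; exact ⟨hjlam, by omega⟩
      · -- impossible branch
        exfalso
        have hch := chain hstepW i j (by omega) hinv (by omega)
        rw [hiA, hjB] at hch
        omega

end WDaux
namespace WDaux
open Equiv

lemma conj_mul (u f g : Equiv.Perm ℤ) :
    u * (f * g) * u⁻¹ = (u * f * u⁻¹) * (u * g * u⁻¹) := by group

lemma master_conj {n : ℕ} (hn : 4 ≤ n) (u : Equiv.Perm ℤ)
    (hu1 : ∀ i : ℤ, ¬(1 ≤ |i| ∧ |i| ≤ (n : ℤ)) → u i = i)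
    (hu2 : ∀ i : ℤ, u (-i) = -(u i))
    (l : ℤ) (hl : IsDescentD n u l) (hl' : ∀ l', IsDescentD n u l' → l' = l)
    (S : Set ℤ) (hS : S = ⇑u '' Set.Icc (|l| + 1) (n : ℤ))
    (α β : ℤ) (hα1 : 1 ≤ α) (hαn : α ≤ (n : ℤ)) (hβα : β < α)
    (hβS : β ∈ S) (hβmin : ∀ r ∈ S, β ≤ r)
    (hαnS : α ∉ S) (hαnS' : -α ∉ S)
    (hcover : ∀ C : ℤ, α + 1 ≤ C → C ≤ (n : ℤ) → C ∈ S ∨ -C ∈ S)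
    (hdisj : 0 < α + β ∨ ∃ γ : ℤ, 1 ≤ γ ∧ γ < α ∧ γ ∉ S ∧ -γ ∉ S) :
    u * simpleD l * u⁻¹ = Equiv.swap α β * Equiv.swap (-α) (-β) := by
  set lam := |l| with hlam
  have hlc : (l = -1 ∧ lam = 1) ∨ (1 ≤ l ∧ l ≤ (n : ℤ) - 1 ∧ lam = l) := by
    rcases hl.1 with h | h
    · left; exact ⟨h, by rw [hlam, h]; norm_num⟩
    · right; exact ⟨h.1, h.2, by rw [hlam, abs_of_pos (by omega)]⟩
  have hlamb : 1 ≤ lam ∧ lam ≤ (n : ℤ) - 1 := by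
    rcases hlc with ⟨h1, h2⟩ | ⟨h1, h2, h3⟩ <;> omega
  have husymm1 : ∀ i : ℤ, ¬(1 ≤ |i| ∧ |i| ≤ (n : ℤ)) → u.symm i = i := fix_symm hu1
  have habs : ∀ v : ℤ, 1 ≤ |v| → |v| ≤ (n : ℤ) →
      -(n : ℤ) ≤ u.symm v ∧ u.symm v ≤ n ∧ u.symm v ≠ 0 := by
    intro v h1 h2
    have h3 := abs_bound husymm1 (i := v) ⟨h1, h2⟩
    exact abs_window h3.1 h3.2
  have husneg : ∀ v : ℤ, u.symm (-v) = -(u.symm v) := symm_neg hu2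
  have happn : ∀ v : ℤ, u (-(u.symm v)) = -v := by
    intro v; rw [← husneg v, u.apply_symm_apply]
  have hstepW : ∀ k : ℤ, lam + 1 ≤ k → k < n → u k < u (k + 1) := by
    intro k hk1 hk2
    by_contra hcon
    push_neg at hcon
    have hne : u (k + 1) ≠ u k := fun e => by have := u.injective e; omega
    have hdk : IsDescentD n u k := by
      refine ⟨Or.inr ⟨by omega, by omega⟩, ?_⟩
      rw [abs_of_pos (by omega : (0:ℤ) < k)]
      omega
    have := hl' k hdk
    rcases hlc with ⟨h1, h2⟩ | ⟨h1, h2, h3⟩ <;> omega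
  have hstepT : ∀ k : ℤ, 1 ≤ k → k < lam → u k < u (k + 1) := by
    intro k hk1 hk2
    by_contra hcon
    push_neg at hcon
    have hne : u (k + 1) ≠ u k := fun e => by have := u.injective e; omega
    have hdk : IsDescentD n u k := by
      refine ⟨Or.inr ⟨by omega, by omega⟩, ?_⟩
      rw [abs_of_pos (by omega : (0:ℤ) < k)]
      omega
    have := hl' k hdk
    rcases hlc with ⟨h1, h2⟩ | ⟨h1, h2, h3⟩ <;> omega
  have hm1 : l ≠ -1 → -(u 1) < u 2 := by
    intro hne1
    by_contra hcon
    push_neg at hcon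
    have he : u (-1) = -(u 1) := hu2 1
    have hne : u 2 ≠ u (-1) := fun e => by have := u.injective e; omega
    have hdk : IsDescentD n u (-1) := by
      refine ⟨Or.inl rfl, ?_⟩
      have habs1 : |(-1 : ℤ)| + 1 = 2 := by norm_num
      rw [habs1]
      omega
    exact hne1 (hl' (-1) hdk).symm
  have hmemS : ∀ v : ℤ, v ∈ S ↔ (lam + 1 ≤ u.symm v ∧ u.symm v ≤ (n : ℤ)) := by
    intro v
    rw [hS, mem_image_symm, Set.mem_Icc]
  have hdesc : u (lam + 1) < u l := hl.2
  -- q = β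
  have hq : u (lam + 1) = β := by
    have h1 : u (lam + 1) ∈ S := by
      rw [hmemS, u.symm_apply_apply]
      omega
    have h2 : β ≤ u (lam + 1) := hβmin _ h1
    have h3 : u (lam + 1) ≤ β := by
      rw [hmemS] at hβS
      rcases eq_or_lt_of_le hβS.1 with he | hlt
      · rw [he, u.apply_symm_apply]
      · have := chain hstepW (lam + 1) (u.symm β) le_rfl hlt hβS.2
        rw [u.apply_symm_apply] at this
        omega
    omega
  -- position of α
  have hαabs : 1 ≤ |α| ∧ |α| ≤ (n : ℤ) := by
    rw [abs_of_pos (by omega : (0:ℤ) < α)]; exact ⟨hα1, hαn⟩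
  have hαb := habs α hαabs.1 hαabs.2
  have hαpos : (-lam ≤ u.symm α ∧ u.symm α ≤ -1) ∨ (1 ≤ u.symm α ∧ u.symm α ≤ lam) := by
    rw [hmemS] at hαnS
    have h2 := hαnS'
    rw [hmemS, husneg] at h2
    omega
  -- the contradiction machine: in the lam = 1 situation, β < -α is impossible
  have hmach : lam = 1 → (u 1 = α ∨ u 1 = -α) → ¬ (β < -α) := by
    intro hlam1 hu1α hβneg
    rcases hdisj with h | ⟨γ, hγ1, hγ2, hγ3, hγ4⟩
    · omega
    · have hγabs : 1 ≤ |γ| ∧ |γ| ≤ (n : ℤ) := by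
        rw [abs_of_pos (by omega : (0:ℤ) < γ)]; constructor <;> omega
      have hγb := habs γ hγabs.1 hγabs.2
      rw [hmemS] at hγ3
      have h4 := hγ4
      rw [hmemS, husneg] at h4
      have hsγ : u.symm γ = 1 ∨ u.symm γ = -1 := by omega
      have hγval : γ = u 1 ∨ γ = u (-1) := by
        rcases hsγ with h | h
        · left; rw [← h, u.apply_symm_apply]
        · right; rw [← h, u.apply_symm_apply]
      have hm : u (-1) = -(u 1) := hu2 1
      rcases hγval with h | h <;> rcases hu1α with h' | h' <;> omega
  -- compute u at ±1 or ±lam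
  rcases hl.1 with hlneg | hlpos
  · -- l = -1, lam = 1
    have hlam1 : lam = 1 := by rcases hlc with ⟨h1, h2⟩ | ⟨h1, h2, h3⟩ <;> omega
    have hsα : u.symm α = 1 ∨ u.symm α = -1 := by omega
    have hm : u (-1) = -(u 1) := hu2 1
    have hdesc2 : u 2 < -(u 1) := by
      have := hdesc
      rw [hlneg] at this
      have h2 : u (lam + 1) = u 2 := by rw [hlam1]; norm_num
      omega
    have hu1 : u 1 = -α := by
      rcases hsα with h | h
      · exfalso
        have : u 1 = α := by rw [← h, u.apply_symm_apply]
        have hβ2 : u (lam + 1) = u 2 := by rw [hlam1]; norm_num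
        exact hmach hlam1 (Or.inl this) (by omega)
      · have : u (-1) = α := by rw [← h, u.apply_symm_apply]
        omega
    have hu2v : u 2 = β := by rw [← hq, hlam1]; norm_num
    have hum2 : u (-2) = -β := by rw [← hu2v]; exact hu2 2
    have hum1 : u (-1) = α := by omega
    rw [hlneg]
    have hsd : simpleD (-1 : ℤ) = Equiv.swap (-1) 2 * Equiv.swap (-2) 1 := by
      rw [simpleD, if_pos rfl]
    rw [hsd, conj_mul, ← Equiv.swap_apply_apply, ← Equiv.swap_apply_apply,
      hum1, hu2v, hum2, hu1]
    rw [Equiv.swap_comm (-β) (-α)]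
  · -- l ≥ 1, lam = l
    have hlaml : lam = l := by rcases hlc with ⟨h1, h2⟩ | ⟨h1, h2, h3⟩ <;> omega
    have hp : u lam = α := by
      by_cases hlam1 : lam = 1
      · have hsα : u.symm α = 1 ∨ u.symm α = -1 := by omega
        have hm : u (-1) = -(u 1) := hu2 1
        have hdesc2 : u 2 < u 1 := by
          have := hdesc
          rw [← hlaml] at this
          have h2 : u (lam + 1) = u 2 := by rw [hlam1]; norm_num
          have h3 : u lam = u 1 := by rw [hlam1]
          omega
        rcases hsα with h | h
        · have : u 1 = α := by rw [← h, u.apply_symm_apply]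
          rw [hlam1]; exact this
        · exfalso
          have h1 : u (-1) = α := by rw [← h, u.apply_symm_apply]
          have h2 : u 1 = -α := by omega
          have hβ2 : u (lam + 1) = u 2 := by rw [hlam1]; norm_num
          exact hmach hlam1 (Or.inr h2) (by omega)
      · -- lam ≥ 2
        have hlam2 : 2 ≤ lam := by omega
        have hlne : l ≠ -1 := by omega
        have h12 := hm1 hlne
        have h1lt2 : u 1 < u 2 := by
          have := hstepT 1 (by omega) (by omega)
          norm_num at this
          exact this
        have hu2ge : 1 ≤ u 2 := by omega
        have h2lam : u 2 ≤ u lam := by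
          rcases eq_or_lt_of_le hlam2 with he | hlt
          · rw [← he]
          · exact le_of_lt (chain hstepT 2 lam (by omega) hlt (by omega))
        have hulamabs : 1 ≤ |u lam| ∧ |u lam| ≤ (n : ℤ) := by
          refine abs_bound hu1 ⟨?_, ?_⟩ <;> rw [abs_of_pos (by omega : (0:ℤ) < lam)] <;> omega
        have hulamw := abs_window hulamabs.1 hulamabs.2
        have hle : u lam ≤ α := by
          by_contra hcon
          push_neg at hcon
          rcases hcover (u lam) (by omega) (by omega) with h | h
          · rw [hmemS, u.symm_apply_apply] at h
            omega
          · rw [hmemS] at h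
            have : u.symm (-(u lam)) = -lam := by
              rw [husneg, u.symm_apply_apply]
            omega
        rcases eq_or_lt_of_le hle with he | hlt
        · exact he
        · exfalso
          rcases hαpos with ⟨h1, h2⟩ | ⟨h1, h2⟩
          · -- u.symm α ∈ [-lam,-1] : u (-(u.symm α)) = -α with -(u.symm α) ∈ [1,lam]
            have hval : u (-(u.symm α)) = -α := happn α
            by_cases hone : -(u.symm α) = 1
            · have hu1v : u 1 = -α := by rw [← hone]; exact hval
              have : α < u 2 := by omega
              omega
            · have : u 2 ≤ u (-(u.symm α)) := by
                rcases (by omega : -(u.symm α) = 2 ∨ 2 < -(u.symm α)) with he2 | hlt2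
                · rw [he2]
                · exact le_of_lt (chain hstepT 2 (-(u.symm α)) (by omega) hlt2 (by omega))
              omega
          · -- u.symm α ∈ [1,lam] : α = u (u.symm α) ≤ u lam
            have hval : u (u.symm α) = α := u.apply_symm_apply α
            have : u (u.symm α) ≤ u lam := by
              rcases eq_or_lt_of_le h2 with he2 | hlt2
              · rw [he2]
              · exact le_of_lt (chain hstepT (u.symm α) lam h1 hlt2 le_rfl)
            omega
    have hlpos1 : 1 ≤ l := hlpos.1
    have hsd : simpleD l = Equiv.swap l (l + 1) * Equiv.swap (-l) (-(l + 1)) := by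
      rw [simpleD, if_neg (by omega)]
    have hul : u l = α := by rw [← hlaml]; exact hp
    have hul1 : u (l + 1) = β := by rw [← hlaml]; exact hq
    have huml : u (-l) = -α := by rw [hu2 l, hul]
    have huml1 : u (-(l + 1)) = -β := by rw [hu2 (l + 1), hul1]
    rw [hsd, conj_mul, ← Equiv.swap_apply_apply, ← Equiv.swap_apply_apply,
      hul, hul1, huml, huml1]

end WDaux
namespace WDaux
open Equiv

lemma swap_disj_comm (a b : ℤ) (h0a : a ≠ 0) (h0b : b ≠ 0) (hab : a + b ≠ 0) :
    Equiv.swap (-b) (-a) * Equiv.swap b a = Equiv.swap a b * Equiv.swap (-a) (-b) := by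
  rw [Equiv.swap_comm (-b) (-a), Equiv.swap_comm b a]
  have hdisj : (Equiv.swap a b).Disjoint (Equiv.swap (-a) (-b)) := by
    intro x
    by_cases h1 : x = a
    · right; subst h1; exact Equiv.swap_apply_of_ne_of_ne (by omega) (by omega)
    · by_cases h2 : x = b
      · right; subst h2; exact Equiv.swap_apply_of_ne_of_ne (by omega) (by omega)
      · left; exact Equiv.swap_apply_of_ne_of_ne h1 h2
  exact hdisj.commute.eq.symm

lemma conj_simple (w : Equiv.Perm ℤ) (d : ℤ) (hd1 : d = -1 ∨ 1 ≤ d)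
    (hw2 : ∀ i : ℤ, w (-i) = -(w i)) :
    w * simpleD d * w⁻¹ =
      Equiv.swap (w d) (w (|d| + 1)) * Equiv.swap (-(w d)) (-(w (|d| + 1))) := by
  rcases hd1 with h | h
  · subst h
    have habs : |(-1 : ℤ)| + 1 = 2 := by norm_num
    rw [habs]
    have hsd : simpleD (-1 : ℤ) = Equiv.swap (-1) 2 * Equiv.swap (-2) 1 := by
      rw [simpleD, if_pos rfl]
    rw [hsd, conj_mul, ← Equiv.swap_apply_apply, ← Equiv.swap_apply_apply]
    have h1 : w (-1 : ℤ) = -(w 1) := hw2 1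
    have h2 : w (-2 : ℤ) = -(w 2) := hw2 2
    rw [h2, show w (1 : ℤ) = -(w (-1)) by omega]
    rw [Equiv.swap_comm (-(w 2)) (-(w (-1)))]
  · have habs : |d| = d := abs_of_pos (by omega)
    rw [habs]
    have hsd : simpleD d = Equiv.swap d (d + 1) * Equiv.swap (-d) (-(d + 1)) := by
      rw [simpleD, if_neg (by omega)]
    rw [hsd, conj_mul, ← Equiv.swap_apply_apply, ← Equiv.swap_apply_apply,
      hw2 d, hw2 (d + 1)]

end WDaux


open WDaux

/-- Let `w ∈ W(D_n)`, let `d` be a descent of `w`, let `R_d` be the set attached to `d` as in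
the type `D_n` canonical join decomposition, and let `w_d` (denoted `u`) be the unique
join-irreducible element of `W(D_n)` with `R(w_d) = R_d`, of type `l_d` (denoted `l`).  Then:
(1) `inv(w_d) ⊆ inv(w)`, i.e. `w_d ≤ w` in the right weak order; and
(2) `w_d s_{l_d} w_d⁻¹ = w s_d w⁻¹`. -/
theorem wd_properties_D (n : ℕ) (hn : 4 ≤ n) (w : Equiv.Perm ℤ) (hw : IsDPerm n w)
    (d : ℤ) (hd : IsDescentD n w d)
    (u : Equiv.Perm ℤ) (hu : IsDPerm n u) (hji : IsJoinIrreducibleD n u)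
    (l : ℤ) (hl : IsDescentD n u l) (hl' : ∀ l', IsDescentD n u l' → l' = l)
    (hR : ⇑u '' Set.Icc (|l| + 1) (n : ℤ) = RsetD n w d) :
    invSetD n u ⊆ invSetD n w ∧
    u * simpleD l * u⁻¹ = w * simpleD d * w⁻¹ := by
  obtain ⟨hw1, hw2, -⟩ := hw
  obtain ⟨hu1, hu2, -⟩ := hu
  have hdc : (d = -1 ∧ |d| = 1) ∨ (1 ≤ d ∧ d ≤ (n : ℤ) - 1 ∧ |d| = d) := by
    rcases hd.1 with h | h
    · left; exact ⟨h, by rw [h]; norm_num⟩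
    · right; exact ⟨h.1, h.2, abs_of_pos (by omega)⟩
  have hmb : 1 ≤ |d| ∧ |d| ≤ (n : ℤ) - 1 := by
    rcases hdc with ⟨h1, h2⟩ | ⟨h1, h2, h3⟩ <;> omega
  have hba : w (|d| + 1) < w d := hd.2
  have hwsneg : ∀ v : ℤ, w.symm (-v) = -(w.symm v) := symm_neg hw2
  have hwsymm1 : ∀ i : ℤ, ¬(1 ≤ |i| ∧ |i| ≤ (n : ℤ)) → w.symm i = i := fix_symm hw1
  have hπw : ∀ v : ℤ, 1 ≤ |v| → |v| ≤ (n : ℤ) →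
      -(n : ℤ) ≤ w.symm v ∧ w.symm v ≤ n ∧ w.symm v ≠ 0 := by
    intro v h1 h2
    have h3 := abs_bound hwsymm1 (i := v) ⟨h1, h2⟩
    exact abs_window h3.1 h3.2
  have hπa : w.symm (w d) = d := w.symm_apply_apply d
  have hπb : w.symm (w (|d| + 1)) = |d| + 1 := w.symm_apply_apply _
  have hπmb : w.symm (-(w (|d| + 1))) = -(|d| + 1) := by rw [hwsneg, hπb]
  have hπma : w.symm (-(w d)) = -d := by rw [hwsneg, hπa]
  have haw : -(n:ℤ) ≤ w d ∧ w d ≤ n ∧ w d ≠ 0 := by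
    have h1 := abs_bound hw1 (i := d) (by constructor <;> omega)
    exact abs_window h1.1 h1.2
  have hbw : -(n:ℤ) ≤ w (|d| + 1) ∧ w (|d| + 1) ≤ n ∧ w (|d| + 1) ≠ 0 := by
    have h1 := abs_bound hw1 (i := |d| + 1) (by rw [abs_of_pos (by omega)]; omega)
    exact abs_window h1.1 h1.2
  have habne : w d + w (|d| + 1) ≠ 0 := by
    intro h
    have h1 : w d = w (-(|d| + 1)) := by rw [hw2]; omega
    have h2 : d = -(|d| + 1) := w.injective h1
    omega
  have hXmem : ∀ v : ℤ, v ∈ ⇑w '' Set.Icc (|d| + 1) (n : ℤ) ↔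
      (|d| + 1 ≤ w.symm v ∧ w.symm v ≤ (n : ℤ)) := by
    intro v
    rw [mem_image_symm, Set.mem_Icc]
  -- value at position in [1,m] is in F
  have hFval : ∀ v : ℤ, 1 ≤ w.symm v → w.symm v ≤ |d| → v ∈ ⇑w '' Set.Icc 1 |d| := by
    intro v h1 h2
    exact ⟨w.symm v, Set.mem_Icc.mpr ⟨h1, h2⟩, w.apply_symm_apply v⟩
  have hpmmem : ∀ v x : ℤ, v ∈ pmSet (nzIcc x (n : ℤ)) ↔
      ((v ≠ 0 ∧ x ≤ v ∧ v ≤ n) ∨ (-v ≠ 0 ∧ x ≤ -v ∧ -v ≤ n)) := by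
    intro v x
    simp only [pmSet, negSet, nzIcc, Set.mem_union, Set.mem_setOf_eq]
  by_cases hc1 : w d + w (|d| + 1) < 0 ∧ ⇑w '' Set.Icc 1 |d| ⊆ pmSet (nzIcc (w d) (n : ℤ))
  · by_cases hc2 : 0 < w d
    · -- Case A+
      have hRs : ⇑u '' Set.Icc (|l| + 1) (n : ℤ) =
          {-(w d)} ∪ (pmSet (nzIcc 1 (w d - 1)) ∩ ⇑w '' Set.Icc (|d| + 1) (n : ℤ)) ∪
            (nzIcc (w d + 1) (-(w (|d| + 1)) - 1) \ negSet (⇑w '' Set.Icc (|d| + 1) (n : ℤ))) ∪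
            nzIcc (-(w (|d| + 1)) + 1) (n : ℤ) := by
        rw [hR]
        show RsetD n w d = _
        simp only [RsetD]
        rw [if_pos hc1, if_pos hc2]
      have hsmall : ∀ v : ℤ, 1 ≤ |v| → |v| ≤ w d - 1 →
          (|d| + 1 ≤ w.symm v ∧ w.symm v ≤ (n : ℤ)) ∨
            (|d| + 1 ≤ -(w.symm v) ∧ -(w.symm v) ≤ (n : ℤ)) := by
        intro v h1 h2
        have hv := hπw v h1 (by omega)
        by_cases hp : 1 ≤ w.symm v ∧ w.symm v ≤ |d|
        · exfalso
          have hvF := hFval v hp.1 hp.2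
          have := hc1.2 hvF
          rw [hpmmem] at this
          rcases abs_cases v with ⟨e1, e2⟩ | ⟨e1, e2⟩ <;> omega
        · by_cases hp2 : 1 ≤ -(w.symm v) ∧ -(w.symm v) ≤ |d|
          · exfalso
            have hvF := hFval (-v) (by rw [hwsneg]; omega) (by rw [hwsneg]; omega)
            have := hc1.2 hvF
            rw [hpmmem] at this
            rcases abs_cases v with ⟨e1, e2⟩ | ⟨e1, e2⟩ <;> omega
          · omega
      have hmem : ∀ v : ℤ, v ∈ ⇑u '' Set.Icc (|l| + 1) (n : ℤ) ↔
          (v = -(w d) ∨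
            (((v ≠ 0 ∧ 1 ≤ v ∧ v ≤ w d - 1) ∨ (-v ≠ 0 ∧ 1 ≤ -v ∧ -v ≤ w d - 1)) ∧
              (|d| + 1 ≤ w.symm v ∧ w.symm v ≤ (n : ℤ))) ∨
            (v ≠ 0 ∧ w d + 1 ≤ v ∧ v ≤ -(w (|d| + 1)) - 1 ∧
              ¬(|d| + 1 ≤ -(w.symm v) ∧ -(w.symm v) ≤ (n : ℤ))) ∨
            (v ≠ 0 ∧ -(w (|d| + 1)) + 1 ≤ v ∧ v ≤ (n : ℤ))) := by
        intro v
        rw [hRs]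
        simp only [Set.mem_union, Set.mem_inter_iff, Set.mem_diff, Set.mem_singleton_iff,
          Set.union_assoc, pmSet, negSet, nzIcc, Set.mem_setOf_eq, hXmem, hwsneg]
        omega
      constructor
      · refine master_inv hn u w hu1 hu2 l hl hl' _ rfl ?_ ?_
        · intro A B hB1 hAB hAn hmA hmB
          rw [hmem] at hmA hmB
          simp only [hwsneg] at hmA hmB
          have hBr : -A < B ∧ B < A ∧ B ≠ 0 := by
            rcases abs_cases B with ⟨e1, e2⟩ | ⟨e1, e2⟩ <;> omega
          have hπB := hπw B hB1 (by omega)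
          rcases hmA with h1 | h2 | h3 | h4
          · have hπA : w.symm A = d := by rw [show A = w d by omega, hπa]
            have hsB := hsmall B hB1 (by omega)
            have hnX : ¬(|d| + 1 ≤ -(w.symm B) ∧ -(w.symm B) ≤ (n : ℤ)) := by
              intro hcon
              exact hmB (Or.inr (Or.inl ⟨by omega, by omega⟩))
            omega
          · by_contra hcon
            push_neg at hcon
            exact hmB (Or.inr (Or.inl ⟨by omega, by omega⟩))
          · omega
          · omega
        · intro A B hB1 hAB hAn hmA hmA' hmB
          rw [hmem] at hmA hmA' hmB
          simp only [hwsneg] at hmA hmA' hmB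
          have hBr : -A < B ∧ B < A ∧ B ≠ 0 := by
            rcases abs_cases B with ⟨e1, e2⟩ | ⟨e1, e2⟩ <;> omega
          have hπB := hπw B hB1 (by omega)
          have hπA := hπw A (by rcases abs_cases A with ⟨e1, e2⟩ | ⟨e1, e2⟩ <;> omega)
            (by rcases abs_cases A with ⟨e1, e2⟩ | ⟨e1, e2⟩ <;> omega)
          have hA4 : ¬(A ≠ 0 ∧ -(w (|d| + 1)) + 1 ≤ A ∧ A ≤ (n : ℤ)) := fun h =>
            hmA (Or.inr (Or.inr (Or.inr h)))
          have hAb : A ≤ -(w (|d| + 1)) := by omega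
          have hAna : A ≠ w d := by
            intro he
            exact hmA' (Or.inl (by omega))
          rcases hmB with h1 | h2 | h3 | h4
          · have hπBv : w.symm B = -d := by rw [show B = -(w d) from h1, hπma]
            by_cases hAeq : A = -(w (|d| + 1))
            · have : w.symm A = -(|d| + 1) := by rw [hAeq, hπmb]
              omega
            · have hXA : |d| + 1 ≤ -(w.symm A) ∧ -(w.symm A) ≤ (n : ℤ) := by
                by_contra hcon
                exact hmA (Or.inr (Or.inr (Or.inl ⟨by omega, by omega, by omega, hcon⟩)))
              omega
          · obtain ⟨hpm, hXB⟩ := h2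
            have hnotX : ¬(|d| + 1 ≤ w.symm A ∧ w.symm A ≤ (n : ℤ)) := by
              intro hXA
              by_cases hA1 : A ≤ w d - 1
              · exact hmA (Or.inr (Or.inl ⟨Or.inl ⟨by omega, by omega, by omega⟩, hXA⟩))
              · by_cases hAeq : A = -(w (|d| + 1))
                · have : w.symm A = -(|d| + 1) := by rw [hAeq, hπmb]
                  omega
                · refine hmA (Or.inr (Or.inr (Or.inl ⟨by omega, by omega, by omega, ?_⟩)))
                  omega
            omega
          · obtain ⟨hB0, hBlo, hBhi, hBnX⟩ := h3
            by_cases hAeq : A = -(w (|d| + 1))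
            · have : w.symm A = -(|d| + 1) := by rw [hAeq, hπmb]
              omega
            · have hXA : |d| + 1 ≤ -(w.symm A) ∧ -(w.symm A) ≤ (n : ℤ) := by
                by_contra hcon
                exact hmA (Or.inr (Or.inr (Or.inl ⟨by omega, by omega, by omega, hcon⟩)))
              omega
          · omega
      · have hconj := master_conj hn u hu1 hu2 l hl hl' _ rfl (-(w (|d| + 1))) (-(w d))
          (by omega) (by omega) (by omega)
          (by rw [hmem]; exact Or.inl rfl)
          (by
            intro r hr
            rw [hmem] at hr
            omega)
          (by
            rw [hmem]
            simp only [hwsneg]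
            intro h
            omega)
          (by
            rw [hmem]
            simp only [hwsneg]
            intro h
            omega)
          (by
            intro C hC1 hC2
            left
            rw [hmem]
            exact Or.inr (Or.inr (Or.inr ⟨by omega, by omega, hC2⟩)))
          (Or.inl (by omega))
        rw [hconj, conj_simple w d (Or.imp id And.left hd.1) hw2]
        simp only [neg_neg]
        exact swap_disj_comm (w d) (w (|d| + 1)) haw.2.2 hbw.2.2 habne
    · -- Case A-
      have haneg : w d ≤ -1 := by omega
      have hRs : ⇑u '' Set.Icc (|l| + 1) (n : ℤ) =
          (nzIcc (-(w d)) (-(w (|d| + 1)) - 1) \ negSet (⇑w '' Set.Icc (|d| + 1) (n : ℤ))) ∪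
            nzIcc (-(w (|d| + 1)) + 1) (n : ℤ) := by
        rw [hR]
        show RsetD n w d = _
        simp only [RsetD]
        rw [if_pos hc1, if_neg hc2]
      have hmem : ∀ v : ℤ, v ∈ ⇑u '' Set.Icc (|l| + 1) (n : ℤ) ↔
          ((v ≠ 0 ∧ -(w d) ≤ v ∧ v ≤ -(w (|d| + 1)) - 1 ∧
              ¬(|d| + 1 ≤ -(w.symm v) ∧ -(w.symm v) ≤ (n : ℤ))) ∨
            (v ≠ 0 ∧ -(w (|d| + 1)) + 1 ≤ v ∧ v ≤ (n : ℤ))) := by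
        intro v
        rw [hRs]
        simp only [Set.mem_union, Set.mem_diff, negSet, nzIcc, Set.mem_setOf_eq, hXmem, hwsneg]
        omega
      constructor
      · refine master_inv hn u w hu1 hu2 l hl hl' _ rfl ?_ ?_
        · intro A B hB1 hAB hAn hmA hmB
          rw [hmem] at hmA
          have hBr : -A < B ∧ B < A ∧ B ≠ 0 := by
            rcases abs_cases B with ⟨e1, e2⟩ | ⟨e1, e2⟩ <;> omega
          omega
        · intro A B hB1 hAB hAn hmA hmA' hmB
          rw [hmem] at hmA hmB
          have hBr : -A < B ∧ B < A ∧ B ≠ 0 := by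
            rcases abs_cases B with ⟨e1, e2⟩ | ⟨e1, e2⟩ <;> omega
          have hπB := hπw B hB1 (by omega)
          have hπA := hπw A (by rcases abs_cases A with ⟨e1, e2⟩ | ⟨e1, e2⟩ <;> omega)
            (by rcases abs_cases A with ⟨e1, e2⟩ | ⟨e1, e2⟩ <;> omega)
          by_cases hAeq : A = -(w (|d| + 1))
          · have hv : w.symm A = -(|d| + 1) := by rw [hAeq, hπmb]
            omega
          · omega
      · have hconj := master_conj hn u hu1 hu2 l hl hl' _ rfl (-(w (|d| + 1))) (-(w d))
          (by omega) (by omega) (by omega)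
          (by
            rw [hmem]
            left
            refine ⟨by omega, by omega, by omega, ?_⟩
            rw [hπma]
            omega)
          (by
            intro r hr
            rw [hmem] at hr
            omega)
          (by
            rw [hmem]
            intro h
            omega)
          (by
            rw [hmem]
            intro h
            omega)
          (by
            intro C hC1 hC2
            left
            rw [hmem]
            exact Or.inr ⟨by omega, by omega, hC2⟩)
          (Or.inl (by omega))
        rw [hconj, conj_simple w d (Or.imp id And.left hd.1) hw2]
        simp only [neg_neg]
        exact swap_disj_comm (w d) (w (|d| + 1)) haw.2.2 hbw.2.2 habne
  · by_cases hc3 : 0 < w d + w (|d| + 1)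
    · -- Case B+
      have hapos : 1 ≤ w d := by omega
      have hRs : ⇑u '' Set.Icc (|l| + 1) (n : ℤ) =
          (nzIcc (w (|d| + 1)) (w d - 1) ∩ ⇑w '' Set.Icc (|d| + 1) (n : ℤ)) ∪
            nzIcc (w d + 1) (n : ℤ) := by
        rw [hR]
        show RsetD n w d = _
        simp only [RsetD]
        rw [if_neg hc1, if_pos hc3]
      have hmem : ∀ v : ℤ, v ∈ ⇑u '' Set.Icc (|l| + 1) (n : ℤ) ↔
          (((v ≠ 0 ∧ w (|d| + 1) ≤ v ∧ v ≤ w d - 1) ∧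
              (|d| + 1 ≤ w.symm v ∧ w.symm v ≤ (n : ℤ))) ∨
            (v ≠ 0 ∧ w d + 1 ≤ v ∧ v ≤ (n : ℤ))) := by
        intro v
        rw [hRs]
        simp only [Set.mem_union, Set.mem_inter_iff, nzIcc, Set.mem_setOf_eq, hXmem]
      constructor
      · refine master_inv hn u w hu1 hu2 l hl hl' _ rfl ?_ ?_
        · intro A B hB1 hAB hAn hmA hmB
          rw [hmem] at hmA hmB
          simp only [hwsneg] at hmA hmB
          have hBr : -A < B ∧ B < A ∧ B ≠ 0 := by
            rcases abs_cases B with ⟨e1, e2⟩ | ⟨e1, e2⟩ <;> omega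
          have hπB := hπw B hB1 (by omega)
          by_contra hcon
          push_neg at hcon
          exact hmB (Or.inl ⟨⟨by omega, by omega, by omega⟩, by omega⟩)
        · intro A B hB1 hAB hAn hmA hmA' hmB
          rw [hmem] at hmA hmB
          have hBr : -A < B ∧ B < A ∧ B ≠ 0 := by
            rcases abs_cases B with ⟨e1, e2⟩ | ⟨e1, e2⟩ <;> omega
          have hπB := hπw B hB1 (by omega)
          have hπA := hπw A (by rcases abs_cases A with ⟨e1, e2⟩ | ⟨e1, e2⟩ <;> omega)
            (by rcases abs_cases A with ⟨e1, e2⟩ | ⟨e1, e2⟩ <;> omega)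
          rcases hmB with h1 | h2
          · by_cases hAa : A = w d
            · have hv : w.symm A = d := by rw [hAa, hπa]
              omega
            · by_cases hX : |d| + 1 ≤ w.symm A ∧ w.symm A ≤ (n : ℤ)
              · exact absurd (Or.inl ⟨⟨by omega, by omega, by omega⟩, hX⟩) hmA
              · omega
          · omega
      · have hconj := master_conj hn u hu1 hu2 l hl hl' _ rfl (w d) (w (|d| + 1))
          (by omega) (by omega) (by omega)
          (by
            rw [hmem]
            exact Or.inl ⟨⟨by omega, by omega, by omega⟩, by rw [hπb]; omega⟩)
          (by
            intro r hr
            rw [hmem] at hr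
            omega)
          (by
            rw [hmem]
            intro h
            omega)
          (by
            rw [hmem]
            simp only [hwsneg]
            intro h
            omega)
          (by
            intro C hC1 hC2
            left
            rw [hmem]
            exact Or.inr ⟨by omega, hC1, hC2⟩)
          (Or.inl (by omega))
        rw [hconj, conj_simple w d (Or.imp id And.left hd.1) hw2]
    · -- Case B-
      have hab : w d + w (|d| + 1) < 0 := by omega
      have hFnot : ¬(⇑w '' Set.Icc 1 |d| ⊆ pmSet (nzIcc (w d) (n : ℤ))) := fun h =>
        hc1 ⟨hab, h⟩
      have hapos : 1 ≤ w d := by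
        by_contra hcon
        push_neg at hcon
        apply hFnot
        rintro x ⟨i, hi, rfl⟩
        rw [Set.mem_Icc] at hi
        have hwi := abs_bound hw1 (i := i)
          ⟨by rw [abs_of_pos (by omega)]; omega, by rw [abs_of_pos (by omega)]; omega⟩
        have hwi2 := abs_window hwi.1 hwi.2
        rw [hpmmem]
        rcases abs_cases (w i) with ⟨e1, e2⟩ | ⟨e1, e2⟩ <;> omega
      obtain ⟨x, hxF, hxpm⟩ := Set.not_subset.mp hFnot
      obtain ⟨iF, hiF, hx⟩ := hxF
      rw [Set.mem_Icc] at hiF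
      have hπx : w.symm x = iF := by rw [← hx, w.symm_apply_apply]
      have hxw : -(n : ℤ) ≤ x ∧ x ≤ n ∧ x ≠ 0 := by
        have h1 := abs_bound hw1 (i := iF)
          ⟨by rw [abs_of_pos (by omega)]; omega, by rw [abs_of_pos (by omega)]; omega⟩
        rw [hx] at h1
        exact abs_window h1.1 h1.2
      rw [hpmmem] at hxpm
      have hxsmall : -(w d) + 1 ≤ x ∧ x ≤ w d - 1 := by omega
      have hRs : ⇑u '' Set.Icc (|l| + 1) (n : ℤ) =
          (nzIcc (w (|d| + 1)) (w d - 1) ∩ ⇑w '' Set.Icc (|d| + 1) (n : ℤ)) ∪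
            (nzIcc (w d + 1) (-(w (|d| + 1)) - 1) \ negSet (⇑w '' Set.Icc (|d| + 1) (n : ℤ))) ∪
            nzIcc (-(w (|d| + 1)) + 1) (n : ℤ) := by
        rw [hR]
        show RsetD n w d = _
        simp only [RsetD]
        rw [if_neg hc1, if_neg hc3]
      have hmem : ∀ v : ℤ, v ∈ ⇑u '' Set.Icc (|l| + 1) (n : ℤ) ↔
          (((v ≠ 0 ∧ w (|d| + 1) ≤ v ∧ v ≤ w d - 1) ∧
              (|d| + 1 ≤ w.symm v ∧ w.symm v ≤ (n : ℤ))) ∨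
            (v ≠ 0 ∧ w d + 1 ≤ v ∧ v ≤ -(w (|d| + 1)) - 1 ∧
              ¬(|d| + 1 ≤ -(w.symm v) ∧ -(w.symm v) ≤ (n : ℤ))) ∨
            (v ≠ 0 ∧ -(w (|d| + 1)) + 1 ≤ v ∧ v ≤ (n : ℤ))) := by
        intro v
        rw [hRs]
        simp only [Set.mem_union, Set.mem_inter_iff, Set.mem_diff, Set.union_assoc,
          negSet, nzIcc, Set.mem_setOf_eq, hXmem, hwsneg]
        omega
      have hxnS : x ∉ ⇑u '' Set.Icc (|l| + 1) (n : ℤ) := by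
        rw [hmem, hπx]
        intro h
        omega
      have hxnS' : -x ∉ ⇑u '' Set.Icc (|l| + 1) (n : ℤ) := by
        rw [hmem, hwsneg, hπx]
        intro h
        omega
      constructor
      · refine master_inv hn u w hu1 hu2 l hl hl' _ rfl ?_ ?_
        · intro A B hB1 hAB hAn hmA hmB
          rw [hmem] at hmA hmB
          simp only [hwsneg] at hmA hmB
          have hBr : -A < B ∧ B < A ∧ B ≠ 0 := by
            rcases abs_cases B with ⟨e1, e2⟩ | ⟨e1, e2⟩ <;> omega
          have hπB := hπw B hB1 (by omega)
          by_contra hcon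
          push_neg at hcon
          by_cases hcase : -B ≤ w d - 1
          · exact hmB (Or.inl ⟨⟨by omega, by omega, by omega⟩, by omega⟩)
          · by_cases hBa : -B = w d
            · have hv : w.symm (-B) = d := by rw [hBa, hπa]
              rw [hwsneg] at hv
              omega
            · exact hmB (Or.inr (Or.inl ⟨by omega, by omega, by omega, by omega⟩))
        · intro A B hB1 hAB hAn hmA hmA' hmB
          rw [hmem] at hmA hmB
          have hBr : -A < B ∧ B < A ∧ B ≠ 0 := by
            rcases abs_cases B with ⟨e1, e2⟩ | ⟨e1, e2⟩ <;> omega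
          have hπB := hπw B hB1 (by omega)
          have hπA := hπw A (by rcases abs_cases A with ⟨e1, e2⟩ | ⟨e1, e2⟩ <;> omega)
            (by rcases abs_cases A with ⟨e1, e2⟩ | ⟨e1, e2⟩ <;> omega)
          rcases hmB with h1 | h2 | h3
          · by_cases hAa : A = w d
            · have hv : w.symm A = d := by rw [hAa, hπa]
              omega
            · by_cases hX : |d| + 1 ≤ w.symm A ∧ w.symm A ≤ (n : ℤ)
              · by_cases hA1 : A ≤ w d - 1
                · exact absurd (Or.inl ⟨⟨by omega, by omega, hA1⟩, hX⟩) hmA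
                · by_cases hAeq : A = -(w (|d| + 1))
                  · have hv : w.symm A = -(|d| + 1) := by rw [hAeq, hπmb]
                    omega
                  · exact absurd
                      (Or.inr (Or.inl ⟨by omega, by omega, by omega, by omega⟩)) hmA
              · omega
          · by_cases hAeq : A = -(w (|d| + 1))
            · have hv : w.symm A = -(|d| + 1) := by rw [hAeq, hπmb]
              omega
            · omega
          · omega
      · have hconj := master_conj hn u hu1 hu2 l hl hl' _ rfl (w d) (w (|d| + 1))
          (by omega) (by omega) (by omega)
          (by
            rw [hmem]
            exact Or.inl ⟨⟨by omega, by omega, by omega⟩, by rw [hπb]; omega⟩)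
          (by
            intro r hr
            rw [hmem] at hr
            omega)
          (by
            rw [hmem]
            intro h
            omega)
          (by
            rw [hmem, hπma]
            intro h
            omega)
          (by
            intro C hC1 hC2
            by_cases h1 : -(w (|d| + 1)) + 1 ≤ C
            · left
              rw [hmem]
              exact Or.inr (Or.inr ⟨by omega, h1, hC2⟩)
            · by_cases h2 : C = -(w (|d| + 1))
              · right
                rw [hmem]
                left
                refine ⟨⟨by omega, by omega, by omega⟩, ?_⟩
                rw [show -C = w (|d| + 1) by omega, hπb]
                omega
              · by_cases h3 : |d| + 1 ≤ -(w.symm C) ∧ -(w.symm C) ≤ (n : ℤ)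
                · right
                  rw [hmem]
                  left
                  refine ⟨⟨by omega, by omega, by omega⟩, ?_⟩
                  rw [hwsneg]
                  omega
                · left
                  rw [hmem]
                  exact Or.inr (Or.inl ⟨by omega, hC1, by omega, by omega⟩))
          (Or.inr ⟨|x|,
            by rcases abs_cases x with ⟨e1, e2⟩ | ⟨e1, e2⟩ <;> omega,
            by rcases abs_cases x with ⟨e1, e2⟩ | ⟨e1, e2⟩ <;> omega,
            by
              rcases abs_cases x with ⟨e1, e2⟩ | ⟨e1, e2⟩
              · rw [e1]; exact hxnS
              · rw [e1]; exact hxnS',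
            by
              rcases abs_cases x with ⟨e1, e2⟩ | ⟨e1, e2⟩
              · rw [e1]; exact hxnS'
              · rw [e1]; simp only [neg_neg]; exact hxnS⟩)
        rw [hconj, conj_simple w d (Or.imp id And.left hd.1) hw2]
end
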